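/- arXiv:1204.5886 — 5 statements merged into one kernel-verified Lean document; each statement's English description precedes it below -/
import Mathlib

section
/- Let μ be a finite Borel measure on ℝⁿ, A ⊂ ℝⁿ a bounded set, 0 < R < ∞, and for each x ∈ A let r_x satisfy R ≤ r_x ≤ 2R. For any θ in the unit sphere S^{n-1}, there exists a finite set F ⊂ A such that the closed balls {B(x, r_x)}_{x ∈ F} are pairwise disjoint and ∑_{x ∈ F} μ(B(x, r_x) \ H(x,θ)) ≥ c·μ(A), where c = c(n) > 0 depends only on n. -/
open Set MeasureTheory Metric
open scoped ENNReal RealInnerProductSpace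

namespace Stmt2Aux

variable {n : ℕ}

lemma dist_coord_le (x y : EuclideanSpace ℝ (Fin n)) (i : Fin n) :
    dist (x i) (y i) ≤ dist x y := by
  rw [EuclideanSpace.dist_eq]
  have h1 : dist (x i) (y i) = Real.sqrt (dist (x i) (y i) ^ 2) :=
    (Real.sqrt_sq dist_nonneg).symm
  rw [h1]
  exact Real.sqrt_le_sqrt (Finset.single_le_sum (f := fun j => dist (x j) (y j) ^ 2)
    (fun j _ => sq_nonneg _) (Finset.mem_univ i))

lemma dist_le_of_coord (hn : 0 < n) {l : ℝ} (hl : 0 ≤ l) (x y : EuclideanSpace ℝ (Fin n))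
    (h : ∀ i, dist (x i) (y i) ≤ l) : dist x y ≤ n * l := by
  rw [EuclideanSpace.dist_eq]
  have hsum : ∑ i, dist (x i) (y i) ^ 2 ≤ (n : ℝ) * l ^ 2 := by
    calc ∑ i, dist (x i) (y i) ^ 2 ≤ ∑ _i : Fin n, l ^ 2 :=
          Finset.sum_le_sum (fun i _ => pow_le_pow_left₀ dist_nonneg (h i) 2)
      _ = (n : ℝ) * l ^ 2 := by simp [mul_comm]
  refine (Real.sqrt_le_sqrt hsum).trans ?_
  have h2 : (n : ℝ) * l ^ 2 ≤ ((n : ℝ) * l) ^ 2 := by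
    have h1 : (1 : ℝ) ≤ n := by exact_mod_cast hn
    nlinarith
  refine (Real.sqrt_le_sqrt h2).trans ?_
  rw [Real.sqrt_sq (by positivity)]

lemma cube_select (μ : Measure (EuclideanSpace ℝ (Fin n))) [IsFiniteMeasure μ]
    {R : ℝ} (r : EuclideanSpace ℝ (Fin n) → ℝ) (θ : EuclideanSpace ℝ (Fin n))
    {E : Set (EuclideanSpace ℝ (Fin n))} (hE : E.Nonempty) (hEb : Bornology.IsBounded E)
    (hdiam : ∀ y ∈ E, ∀ z ∈ E, dist y z ≤ R)
    (hrE : ∀ x ∈ E, R ≤ r x)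
    {η : ℝ≥0∞} (hη : 0 < η) :
    ∃ x ∈ E, μ E ≤ μ (closedBall x (r x) \ {y | 0 < ⟪y - x, θ⟫}) + η := by
  set g : EuclideanSpace ℝ (Fin n) → ℝ := fun y => ⟪y, θ⟫ with hg
  have hgc : Continuous g := continuous_id.inner continuous_const
  obtain ⟨ρ, hρ⟩ := hEb.subset_closedBall 0
  have hbdd : BddAbove (g '' E) := by
    refine ⟨ρ * ‖θ‖, ?_⟩
    rintro _ ⟨y, hy, rfl⟩
    calc g y ≤ ‖y‖ * ‖θ‖ := real_inner_le_norm _ _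
      _ ≤ ρ * ‖θ‖ := by
          have hy' := hρ hy
          rw [mem_closedBall, dist_zero_right] at hy'
          exact mul_le_mul_of_nonneg_right hy' (norm_nonneg _)
  set s := sSup (g '' E) with hs
  have hle : ∀ y ∈ E, g y ≤ s := fun y hy => le_csSup hbdd ⟨y, hy, rfl⟩
  have hsub : ∀ x ∈ E, ∀ y ∈ E, g y ≤ g x →
      y ∈ closedBall x (r x) \ {y | 0 < ⟪y - x, θ⟫} := by
    intro x hx y hy hyx
    refine ⟨mem_closedBall.2 ((hdiam y hy x hx).trans (hrE x hx)), ?_⟩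
    simp only [mem_setOf_eq, not_lt]
    rw [inner_sub_left]
    simpa using sub_nonpos.2 hyx
  by_cases hattain : ∃ x ∈ E, g x = s
  · obtain ⟨x, hx, hxs⟩ := hattain
    refine ⟨x, hx, le_add_right (measure_mono fun y hy => hsub x hx y hy ?_)⟩
    rw [hxs]; exact hle y hy
  · push_neg at hattain
    have hlt : ∀ y ∈ E, g y < s := fun y hy => (hle y hy).lt_of_ne (hattain y hy)
    set S : ℕ → Set (EuclideanSpace ℝ (Fin n)) :=
      fun j => g ⁻¹' (Ioo (s - 1 / (j + 1)) s) with hS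
    have hmeas : ∀ j, NullMeasurableSet (S j) μ :=
      fun j => (measurableSet_Ioo.preimage hgc.measurable).nullMeasurableSet
    have hanti : Antitone S := by
      intro j k hjk
      refine preimage_mono (Ioo_subset_Ioo_left ?_)
      have h1 : (1 : ℝ) / (k + 1) ≤ 1 / (j + 1) := by
        apply one_div_le_one_div_of_le
        · positivity
        · exact_mod_cast Nat.succ_le_succ hjk
      linarith
    have hiInter : (⋂ j, S j) = ∅ := by
      ext y
      simp only [mem_iInter, mem_empty_iff_false, iff_false]
      intro hy
      obtain ⟨j, hj⟩ := exists_nat_one_div_lt (sub_pos.2 (hy 0).2)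
      have h1 := (hy j).1
      linarith [h1]
    have hten : Filter.Tendsto (μ ∘ S) Filter.atTop (nhds 0) := by
      have h := tendsto_measure_iInter_atTop hmeas hanti ⟨0, measure_ne_top μ _⟩
      rwa [hiInter, measure_empty] at h
    obtain ⟨j, hj⟩ := (hten.eventually_lt_const hη).exists
    have hjs : s - 1 / ((j : ℝ) + 1) < s := by
      have : (0 : ℝ) < 1 / ((j : ℝ) + 1) := by positivity
      linarith
    obtain ⟨_, ⟨x, hx, rfl⟩, hxgt⟩ := exists_lt_of_lt_csSup (hE.image g) hjs
    refine ⟨x, hx, ?_⟩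
    have hcover : E ⊆ (closedBall x (r x) \ {y | 0 < ⟪y - x, θ⟫}) ∪ S j := by
      intro y hy
      by_cases h : g y ≤ g x
      · exact Or.inl (hsub x hx y hy h)
      · push_neg at h
        exact Or.inr ⟨lt_trans hxgt h, hlt y hy⟩
    calc μ E ≤ μ (closedBall x (r x) \ {y | 0 < ⟪y - x, θ⟫}) + μ (S j) :=
          le_trans (measure_mono hcover) (measure_union_le _ _)
      _ ≤ _ + η := add_le_add_right hj.le _

end Stmt2Aux

/-- Covering lemma for half-spaces: there is a constant `c = c(n) > 0` such that
for any finite Borel measure `μ` on `ℝⁿ`, any bounded set `A`, radii `R ≤ r x ≤ 2R`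
and any unit vector `θ`, there is a finite `F ⊆ A` with `{B(x, r x)}` pairwise
disjoint and `∑_{x ∈ F} μ(B(x, r x) \ H(x,θ)) ≥ c μ(A)`. -/
theorem stmt_2 (n : ℕ) :
    ∃ c : ℝ≥0∞, 0 < c ∧
      ∀ (μ : Measure (EuclideanSpace ℝ (Fin n))) (_ : IsFiniteMeasure μ)
        (A : Set (EuclideanSpace ℝ (Fin n))) (_ : Bornology.IsBounded A)
        (R : ℝ) (_ : 0 < R)
        (r : EuclideanSpace ℝ (Fin n) → ℝ)
        (_ : ∀ x ∈ A, R ≤ r x ∧ r x ≤ 2 * R)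
        (θ : EuclideanSpace ℝ (Fin n)) (_ : ‖θ‖ = 1),
        ∃ F : Finset (EuclideanSpace ℝ (Fin n)), ↑F ⊆ A ∧
          (F : Set (EuclideanSpace ℝ (Fin n))).PairwiseDisjoint
            (fun x => closedBall x (r x)) ∧
          c * μ A ≤ ∑ x ∈ F, μ (closedBall x (r x) \ {y | 0 < ⟪y - x, θ⟫}) := by
  classical
  refine ⟨((2 * (4 * n + 2) ^ n : ℕ) : ℝ≥0∞)⁻¹,
    ENNReal.inv_pos.2 (ENNReal.natCast_ne_top _), ?_⟩
  intro μ hμfin A hA R hR r hr θ hθ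
  rcases Nat.eq_zero_or_pos n with hn | hn
  · exfalso
    subst hn
    haveI : Subsingleton (EuclideanSpace ℝ (Fin 0)) :=
      ⟨fun a b => PiLp.ext fun i => i.elim0⟩
    rw [Subsingleton.elim θ 0, norm_zero] at hθ
    norm_num at hθ
  set D : EuclideanSpace ℝ (Fin n) → Set (EuclideanSpace ℝ (Fin n)) :=
    fun x => closedBall x (r x) \ {y | 0 < ⟪y - x, θ⟫} with hD
  rcases eq_or_ne (μ A) 0 with hA0 | hA0
  · exact ⟨∅, by simp, by simp, by simp [hA0]⟩
  have hμA : μ A ≠ ∞ := measure_ne_top μ A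
  have hn' : (0 : ℝ) < n := by exact_mod_cast hn
  set l : ℝ := R / n with hldef
  have hl : 0 < l := div_pos hR hn'
  set φ : EuclideanSpace ℝ (Fin n) → (Fin n → ℤ) := fun x i => ⌊x i / l⌋ with hφ
  have hcoord : ∀ (x : EuclideanSpace ℝ (Fin n)) (i : Fin n),
      (φ x i : ℝ) * l ≤ x i ∧ x i < (φ x i + 1) * l := by
    intro x i
    constructor
    · rw [← le_div_iff₀ hl]
      exact Int.floor_le _
    · rw [← div_lt_iff₀ hl]
      exact Int.lt_floor_add_one (x i / l)
  -- same cube ⇒ close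
  have hsame : ∀ x y, φ x = φ y → dist x y ≤ R := by
    intro x y hxy
    have hcl : ∀ i, dist (x i) (y i) ≤ l := by
      intro i
      have h1 := hcoord x i
      have h2 := hcoord y i
      have he : φ x i = φ y i := congrFun hxy i
      rw [he] at h1
      rw [Real.dist_eq, abs_le]
      constructor <;> nlinarith [h1.1, h1.2, h2.1, h2.2]
    have := Stmt2Aux.dist_le_of_coord hn hl.le x y hcl
    calc dist x y ≤ n * l := this
      _ = R := by rw [hldef]; field_simp [hn'.ne']
  -- different cube, congruent mod 4n+2 ⇒ far
  have hsep : ∀ x y, φ x ≠ φ y → (∀ i, ((4 * n + 2 : ℕ) : ℤ) ∣ (φ x i - φ y i)) →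
      4 * R < dist x y := by
    intro x y hne hdvd
    obtain ⟨i, hi⟩ := Function.ne_iff.1 hne
    have habs : ((4 * n + 2 : ℕ) : ℤ) ≤ |φ x i - φ y i| :=
      Int.le_of_dvd (abs_pos.2 (sub_ne_zero.2 hi)) ((dvd_abs _ _).2 (hdvd i))
    have hbig : ((4 * n + 2 : ℝ) - 1) * l ≤ dist (x i) (y i) := by
      have h1 := hcoord x i
      have h2 := hcoord y i
      rw [Real.dist_eq]
      rcases abs_cases (φ x i - φ y i) with ⟨heq, -⟩ | ⟨heq, -⟩
      · -- φ x i - φ y i ≥ 4n+2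
        have hc : ((4 * n + 2 : ℝ)) ≤ (φ x i : ℝ) - φ y i := by
          have := habs; rw [heq] at this; exact_mod_cast this
        have hstep : ((4 * n + 2 : ℝ) - 1) * l ≤ ((φ x i : ℝ) - φ y i - 1) * l :=
          mul_le_mul_of_nonneg_right (by linarith) hl.le
        rw [le_abs]
        left
        nlinarith [h1.1, h2.2]
      · have hc : ((4 * n + 2 : ℝ)) ≤ (φ y i : ℝ) - φ x i := by
          have := habs; rw [heq] at this
          have : ((4 * n + 2 : ℕ) : ℤ) ≤ φ y i - φ x i := by omega
          exact_mod_cast this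
        have hstep : ((4 * n + 2 : ℝ) - 1) * l ≤ ((φ y i : ℝ) - φ x i - 1) * l :=
          mul_le_mul_of_nonneg_right (by linarith) hl.le
        rw [le_abs]
        right
        nlinarith [h2.1, h1.2]
    have hnum : 4 * R < ((4 * n + 2 : ℝ) - 1) * l := by
      rw [hldef, ← mul_div_assoc, lt_div_iff₀ hn']
      nlinarith [hR]
    calc 4 * R < ((4 * n + 2 : ℝ) - 1) * l := hnum
      _ ≤ dist (x i) (y i) := hbig
      _ ≤ dist x y := Stmt2Aux.dist_coord_le x y i
  -- finiteness of the set of cubes meeting A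
  obtain ⟨ρ, hρ⟩ := hA.subset_closedBall 0
  have himfin : (φ '' A).Finite := by
    apply Set.Finite.subset (Set.Finite.pi (fun _ : Fin n => Set.finite_Icc (⌊-(ρ / l)⌋) ⌊ρ / l⌋))
    rintro _ ⟨x, hx, rfl⟩
    intro i _
    have hxi : |x i| ≤ ρ := by
      have h1 := Stmt2Aux.dist_coord_le x 0 i
      have h2 := hρ hx
      rw [mem_closedBall, dist_zero_right] at h2
      have h0 : (0 : EuclideanSpace ℝ (Fin n)) i = 0 := rfl
      rw [h0, Real.dist_eq, sub_zero] at h1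
      calc |x i| ≤ dist x 0 := h1
        _ = ‖x‖ := by rw [dist_zero_right]
        _ ≤ ρ := h2
    rw [abs_le] at hxi
    simp only [mem_Icc]
    constructor
    · exact Int.floor_mono (by rw [← neg_div]; exact div_le_div_of_nonneg_right hxi.1 hl.le)
    · exact Int.floor_mono (div_le_div_of_nonneg_right hxi.2 hl.le)
  set T : Finset (Fin n → ℤ) := himfin.toFinset with hT
  have hTmem : ∀ {Q}, Q ∈ T ↔ Q ∈ φ '' A := fun {Q} => himfin.mem_toFinset
  have hTne : T.Nonempty := by
    have hAne : A.Nonempty := by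
      rcases A.eq_empty_or_nonempty with h | h
      · exact absurd (by simp [h]) hA0
      · exact h
    obtain ⟨a, ha⟩ := hAne
    exact ⟨φ a, hTmem.2 ⟨a, ha, rfl⟩⟩
  set η : ℝ≥0∞ := μ A / (2 * T.card) with hη
  have hηpos : 0 < η := ENNReal.div_pos hA0 (by finiteness)
  have hsel : ∀ Q ∈ T, ∃ x, x ∈ A ∩ φ ⁻¹' {Q} ∧ μ (A ∩ φ ⁻¹' {Q}) ≤ μ (D x) + η := by
    intro Q hQ
    obtain ⟨a, ha, rfl⟩ := hTmem.1 hQ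
    have hEne : (A ∩ φ ⁻¹' {φ a}).Nonempty := ⟨a, ha, rfl⟩
    obtain ⟨x, hx, hmx⟩ := Stmt2Aux.cube_select μ r θ hEne (hA.subset inter_subset_left)
      (fun y hy z hz => hsame y z
        ((mem_singleton_iff.mp hy.2).trans (mem_singleton_iff.mp hz.2).symm))
      (fun x hx => (hr x hx.1).1) hηpos
    exact ⟨x, hx, hmx⟩
  choose! xsel hxmem hxineq using hsel
  have hxA : ∀ Q ∈ T, xsel Q ∈ A := fun Q hQ => (hxmem Q hQ).1
  have hxφ : ∀ Q ∈ T, φ (xsel Q) = Q := fun Q hQ => mem_singleton_iff.mp (hxmem Q hQ).2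
  have hcov : μ A ≤ ∑ Q ∈ T, μ (A ∩ φ ⁻¹' {Q}) := by
    refine le_trans (measure_mono ?_) (measure_biUnion_finset_le T _)
    intro a ha
    exact mem_biUnion (hTmem.2 ⟨a, ha, rfl⟩) ⟨ha, rfl⟩
  set G : ℝ≥0∞ := ∑ Q ∈ T, μ (D (xsel Q)) with hG
  have hcardη : (T.card : ℝ≥0∞) * η ≤ μ A / 2 := by
    have hc0 : (T.card : ℝ≥0∞) ≠ 0 := (Nat.cast_pos.2 hTne.card_pos).ne'
    have hcinf : (T.card : ℝ≥0∞) ≠ ∞ := ENNReal.natCast_ne_top _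
    have heq : (T.card : ℝ≥0∞) * η = μ A / 2 := by
      rw [hη, div_eq_mul_inv, ENNReal.mul_inv (Or.inl (by norm_num)) (Or.inr hc0),
        div_eq_mul_inv]
      calc (T.card : ℝ≥0∞) * (μ A * (2⁻¹ * (T.card : ℝ≥0∞)⁻¹))
          = ((T.card : ℝ≥0∞) * (T.card : ℝ≥0∞)⁻¹) * (μ A * 2⁻¹) := by ring
        _ = μ A * 2⁻¹ := by rw [ENNReal.mul_inv_cancel hc0 hcinf, one_mul]
    exact heq.le
  have h1 : μ A ≤ G + μ A / 2 := by
    calc μ A ≤ ∑ Q ∈ T, μ (A ∩ φ ⁻¹' {Q}) := hcov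
      _ ≤ ∑ Q ∈ T, (μ (D (xsel Q)) + η) := Finset.sum_le_sum (fun Q hQ => hxineq Q hQ)
      _ = G + T.card * η := by rw [Finset.sum_add_distrib, Finset.sum_const, nsmul_eq_mul]
      _ ≤ G + μ A / 2 := add_le_add_right hcardη G
  have h2 : μ A / 2 ≤ G := by
    have h3 : μ A / 2 + μ A / 2 ≤ G + μ A / 2 := by
      rw [ENNReal.add_halves]; exact h1
    exact (ENNReal.add_le_add_iff_right ((ENNReal.div_lt_top hμA (by norm_num)).ne)).1 h3
  -- coloring
  haveI : NeZero (4 * n + 2) := ⟨by omega⟩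
  set col : (Fin n → ℤ) → (Fin n → ZMod (4 * n + 2)) :=
    fun Q i => (Q i : ZMod (4 * n + 2)) with hcol
  obtain ⟨cc, -, hccmax⟩ := Finset.exists_max_image Finset.univ
    (fun c => ∑ Q ∈ T.filter (fun Q => col Q = c), μ (D (xsel Q))) Finset.univ_nonempty
  set T' := T.filter (fun Q => col Q = cc) with hT'
  have hfiber : G = ∑ c : Fin n → ZMod (4 * n + 2),
      ∑ Q ∈ T.filter (fun Q => col Q = c), μ (D (xsel Q)) := by
    rw [hG]
    exact (Finset.sum_fiberwise T col (fun Q => μ (D (xsel Q)))).symm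
  have hcardfun : Fintype.card (Fin n → ZMod (4 * n + 2)) = (4 * n + 2) ^ n := by
    simp [ZMod.card]
  have hGle : G ≤ (((4 * n + 2) ^ n : ℕ) : ℝ≥0∞) * ∑ Q ∈ T', μ (D (xsel Q)) := by
    rw [hfiber]
    calc ∑ c : Fin n → ZMod (4 * n + 2), ∑ Q ∈ T.filter (fun Q => col Q = c), μ (D (xsel Q))
        ≤ Finset.univ.card • ∑ Q ∈ T', μ (D (xsel Q)) :=
          Finset.sum_le_card_nsmul _ _ _ (fun c _ => hccmax c (Finset.mem_univ c))
      _ = (((4 * n + 2) ^ n : ℕ) : ℝ≥0∞) * ∑ Q ∈ T', μ (D (xsel Q)) := by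
          rw [nsmul_eq_mul, Finset.card_univ, hcardfun]
  refine ⟨T'.image xsel, ?_, ?_, ?_⟩
  · intro x hx
    simp only [Finset.coe_image, mem_image, Finset.mem_coe] at hx
    obtain ⟨Q, hQ, rfl⟩ := hx
    exact hxA Q (Finset.mem_filter.1 hQ).1
  · intro x hx y hy hxy
    simp only [Finset.coe_image, mem_image, Finset.mem_coe] at hx hy
    obtain ⟨Q, hQ, rfl⟩ := hx
    obtain ⟨Q', hQ', rfl⟩ := hy
    obtain ⟨hQT, hQc⟩ := Finset.mem_filter.1 hQ
    obtain ⟨hQT', hQc'⟩ := Finset.mem_filter.1 hQ'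
    have hQne : φ (xsel Q) ≠ φ (xsel Q') := by
      rw [hxφ Q hQT, hxφ Q' hQT']
      intro h
      exact hxy (by rw [h])
    have hdvd : ∀ i, ((4 * n + 2 : ℕ) : ℤ) ∣ (φ (xsel Q) i - φ (xsel Q') i) := by
      intro i
      rw [hxφ Q hQT, hxφ Q' hQT']
      have hcc : (Q i : ZMod (4 * n + 2)) = (Q' i : ZMod (4 * n + 2)) :=
        congrFun (hQc.trans hQc'.symm) i
      exact ((ZMod.intCast_eq_intCast_iff _ _ _).1 hcc).symm.dvd
    have hfar := hsep _ _ hQne hdvd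
    have a1 := hr _ (hxA Q hQT)
    have a2 := hr _ (hxA Q' hQT')
    simp only [Function.onFun]
    exact closedBall_disjoint_closedBall (by linarith [a1.2, a2.2])
  · have hsum : ∑ x ∈ T'.image xsel, μ (closedBall x (r x) \ {y | 0 < ⟪y - x, θ⟫})
        = ∑ Q ∈ T', μ (D (xsel Q)) := by
      refine Finset.sum_image ?_
      intro Q hQ Q' hQ' h
      have e1 := hxφ Q (Finset.mem_filter.1 hQ).1
      rw [← e1, h, hxφ Q' (Finset.mem_filter.1 hQ').1]
    rw [hsum]
    have hchain : μ A / 2 ≤ (((4 * n + 2) ^ n : ℕ) : ℝ≥0∞) * ∑ Q ∈ T', μ (D (xsel Q)) :=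
      h2.trans hGle
    have hAle : μ A ≤ 2 * ((((4 * n + 2) ^ n : ℕ) : ℝ≥0∞) * ∑ Q ∈ T', μ (D (xsel Q))) := by
      rw [two_mul]
      calc μ A = μ A / 2 + μ A / 2 := (ENNReal.add_halves _).symm
        _ ≤ _ := add_le_add hchain hchain
    calc ((2 * (4 * n + 2) ^ n : ℕ) : ℝ≥0∞)⁻¹ * μ A
        ≤ ((2 * (4 * n + 2) ^ n : ℕ) : ℝ≥0∞)⁻¹ *
            (((2 * (4 * n + 2) ^ n : ℕ) : ℝ≥0∞) * ∑ Q ∈ T', μ (D (xsel Q))) := by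
          refine mul_le_mul_right (hAle.trans_eq ?_) _
          push_cast
          ring
      _ = ∑ Q ∈ T', μ (D (xsel Q)) := by
          rw [← mul_assoc, ENNReal.inv_mul_cancel
            (Nat.cast_ne_zero.2 (by positivity)) (ENNReal.natCast_ne_top _), one_mul]
end

section
/- Let μ be a finite Borel measure on ℝⁿ, A ⊂ ℝⁿ bounded, 0 < R < ∞, R ≤ r_x ≤ 2R for all x ∈ A, and let θ_x ∈ S^{n-1} be an arbitrary direction assigned to each x ∈ A, and 0 < α ≤ 1. Then there exists a finite set F ⊂ A such that the balls {B(x, r_x)}_{x ∈ F} are pairwise disjoint and ∑_{x ∈ F} μ(B(x, r_x) \ H(x, θ_x, α)) ≥ c·μ(A), where c = c(n, α) > 0 depends only on n and α. -/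
open Set MeasureTheory Metric
open scoped ENNReal RealInnerProductSpace

set_option maxHeartbeats 2000000 in
/-- Covering lemma for cones `H(x,θ_x,α)`: there is a constant `c = c(n,α) > 0` such
that for any finite Borel measure `μ` on `ℝⁿ`, bounded `A`, radii `R ≤ r x ≤ 2R` and
directions `θ_x ∈ S^{n-1}` assigned to each `x ∈ A`, there is a finite `F ⊆ A` with
`{B(x, r x)}` pairwise disjoint and `∑_{x ∈ F} μ(B(x, r x) \ H(x, θ_x, α)) ≥ c μ(A)`. -/
theorem stmt_3 (n : ℕ) (α : ℝ) (hα : 0 < α) (hα1 : α ≤ 1) :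
    ∃ c : ℝ≥0∞, 0 < c ∧
      ∀ (μ : Measure (EuclideanSpace ℝ (Fin n))) (_ : IsFiniteMeasure μ)
        (A : Set (EuclideanSpace ℝ (Fin n))) (_ : Bornology.IsBounded A)
        (R : ℝ) (_ : 0 < R)
        (r : EuclideanSpace ℝ (Fin n) → ℝ)
        (_ : ∀ x ∈ A, R ≤ r x ∧ r x ≤ 2 * R)
        (θ : EuclideanSpace ℝ (Fin n) → EuclideanSpace ℝ (Fin n))
        (_ : ∀ x ∈ A, ‖θ x‖ = 1),
        ∃ F : Finset (EuclideanSpace ℝ (Fin n)), ↑F ⊆ A ∧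
          (F : Set (EuclideanSpace ℝ (Fin n))).PairwiseDisjoint
            (fun x => closedBall x (r x)) ∧
          c * μ A ≤ ∑ x ∈ F,
            μ (closedBall x (r x) \ {y | α * ‖y - x‖ < ⟪y - x, θ x⟫}) := by
  classical
  set E := EuclideanSpace ℝ (Fin n) with hE
  -- a finite (α/2)-net on the unit sphere
  obtain ⟨D, hDfin, hD⟩ :
      ∃ t : Set E, t.Finite ∧ Metric.sphere (0 : E) 1 ⊆ ⋃ y ∈ t, ball y (α / 2) :=
    totallyBounded_iff.mp
      (isCompact_sphere (0 : E) 1).totallyBounded (α / 2) (by linarith)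
  set Dfin : Finset E := hDfin.toFinset with hDfinDef
  set p : ℕ := ⌈4 * Real.sqrt n⌉₊ + 2 with hp
  haveI : NeZero p := ⟨by omega⟩
  set N : ℕ := Dfin.card with hN
  set K : ℕ := p ^ n with hK
  have hKpos : 0 < K := Nat.pow_pos (by omega)
  refine ⟨(((2 * (N + 1) * K : ℕ) : ℝ≥0∞))⁻¹, ?_, ?_⟩
  · rw [ENNReal.inv_pos]
    exact ENNReal.natCast_ne_top _
  intro μ hμfin A hA R hR r hr θ hθ
  by_cases hA0 : μ A = 0
  · exact ⟨∅, by simp, by simp, by simp [hA0]⟩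
  -- A is nonempty, hence n ≥ 1
  have hAne : A.Nonempty := by
    rw [Set.nonempty_iff_ne_empty]
    rintro rfl
    exact hA0 measure_empty
  obtain ⟨x0, hx0⟩ := hAne
  have hn : n ≠ 0 := by
    rintro rfl
    have h1 := hθ x0 hx0
    rw [EuclideanSpace.norm_eq] at h1
    simp at h1
  have hsn : 0 < Real.sqrt n := Real.sqrt_pos.2 (by positivity)
  set s : ℝ := R / Real.sqrt n with hsdef
  have hs : 0 < s := div_pos hR hsn
  -- the coordinate bound
  have coord : ∀ (v : E) (i : Fin n), |v i| ≤ ‖v‖ := by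
    intro v i
    rw [EuclideanSpace.norm_eq]
    have h := Finset.single_le_sum (f := fun j => ‖v j‖ ^ 2)
      (fun j _ => sq_nonneg _) (Finset.mem_univ i)
    calc |v i| = Real.sqrt (‖v i‖ ^ 2) := by
          rw [Real.sqrt_sq (norm_nonneg _)]; exact (Real.norm_eq_abs _).symm
      _ ≤ _ := Real.sqrt_le_sqrt h
  set f : E → (Fin n → ℤ) := fun x i => ⌊x i / s⌋ with hf
  set color : (Fin n → ℤ) → (Fin n → ZMod p) := fun m i => ((m i : ℤ) : ZMod p) with hcolor
  -- classes
  set Acl : E × (Fin n → ZMod p) → Set E :=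
    fun q => {x | x ∈ A ∧ θ x ∈ ball q.1 (α / 2) ∧ color (f x) = q.2} with hAcl
  set P : Finset (E × (Fin n → ZMod p)) := Dfin ×ˢ Finset.univ with hP
  have cover : A ⊆ ⋃ q ∈ P, Acl q := by
    intro x hx
    have hsph : θ x ∈ Metric.sphere (0 : E) 1 := by
      rw [mem_sphere_zero_iff_norm]; exact hθ x hx
    obtain ⟨θ1, hθ1D, hball⟩ := Set.mem_iUnion₂.1 (hD hsph)
    refine Set.mem_iUnion₂.2 ⟨(θ1, color (f x)), ?_, hx, hball, rfl⟩
    exact Finset.mem_product.2 ⟨hDfin.mem_toFinset.2 hθ1D, Finset.mem_univ _⟩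
  have hPne : P.Nonempty := by
    obtain ⟨q, hq, _⟩ := Set.mem_iUnion₂.1 (cover hx0)
    exact ⟨q, hq⟩
  obtain ⟨q0, hq0P, hq0max⟩ := P.exists_max_image (fun q => μ (Acl q)) hPne
  set G : Set E := Acl q0 with hG
  have hGA : G ⊆ A := fun x hx => hx.1
  have hPcard : P.card ≤ (N + 1) * K := by
    have : P.card = N * K := by
      rw [hP, Finset.card_product, Finset.card_univ]
      simp [hK, Fintype.card_fun, ZMod.card, hN]
    rw [this]
    exact Nat.mul_le_mul_right _ (Nat.le_succ _)
  have hMA : μ A ≤ ((N + 1) * K : ℕ) * μ G := by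
    calc μ A ≤ μ (⋃ q ∈ P, Acl q) := measure_mono cover
      _ ≤ ∑ q ∈ P, μ (Acl q) := measure_biUnion_finset_le P _
      _ ≤ P.card • μ G := Finset.sum_le_card_nsmul P _ _ hq0max
      _ = (P.card : ℝ≥0∞) * μ G := by rw [nsmul_eq_mul]
      _ ≤ ((N + 1) * K : ℕ) * μ G :=
          mul_le_mul_left (by exact_mod_cast hPcard) _
  have hG0 : μ G ≠ 0 := by
    intro h
    rw [h, mul_zero] at hMA
    exact hA0 (le_antisymm hMA zero_le)
  -- finitely many grid cells meet A
  obtain ⟨M, hM⟩ := hA.exists_norm_le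
  have hTfin : (f '' A).Finite := by
    apply Set.Finite.subset
      (Set.Finite.pi (t := fun _ : Fin n => Set.Icc (⌊-(M / s)⌋) (⌊M / s⌋))
        (fun _ => Set.finite_Icc _ _))
    rintro _ ⟨x, hx, rfl⟩
    rw [Set.mem_pi]
    intro i _
    have h1 : -M ≤ x i := by
      have := coord x i
      have := hM x hx
      cases abs_le.1 (le_trans (coord x i) (hM x hx)) with
      | intro h1 h2 => linarith
    have h2 : x i ≤ M := by
      cases abs_le.1 (le_trans (coord x i) (hM x hx)) with
      | intro h1 h2 => linarith
    constructor
    · exact Int.floor_le_floor (by rw [← neg_div]; exact (div_le_div_iff_of_pos_right hs).2 h1)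
    · exact Int.floor_le_floor ((div_le_div_iff_of_pos_right hs).2 h2)
  set T : Finset (Fin n → ℤ) := hTfin.toFinset with hT
  set C : (Fin n → ℤ) → Set E := fun m => G ∩ f ⁻¹' {m} with hC
  have hGcover : G ⊆ ⋃ m ∈ T, C m := by
    intro x hx
    refine Set.mem_iUnion₂.2 ⟨f x, ?_, hx, rfl⟩
    exact hTfin.mem_toFinset.2 ⟨x, hGA hx, rfl⟩
  set T' : Finset (Fin n → ℤ) := T.filter (fun m => (C m).Nonempty) with hT'
  have hsumT : μ G ≤ ∑ m ∈ T', μ (C m) := by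
    calc μ G ≤ μ (⋃ m ∈ T, C m) := measure_mono hGcover
      _ ≤ ∑ m ∈ T, μ (C m) := measure_biUnion_finset_le T _
      _ = ∑ m ∈ T', μ (C m) := by
          refine (Finset.sum_subset (Finset.filter_subset _ _) ?_).symm
          intro m hmT hm
          rw [Finset.mem_filter] at hm
          push_neg at hm
          rw [hm hmT, measure_empty]
  have hT'ne : T'.Nonempty := by
    rw [Finset.nonempty_iff_ne_empty]
    rintro h
    rw [h, Finset.sum_empty] at hsumT
    exact hG0 (le_antisymm hsumT zero_le)
  -- diameter of a grid cell is at most R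
  have celldiam : ∀ x y : E, f x = f y → ‖y - x‖ ≤ R := by
    intro x y hxy
    rw [EuclideanSpace.norm_eq]
    have hcoord : ∀ i, ‖(y - x) i‖ ^ 2 ≤ s ^ 2 := by
      intro i
      have h1 : (⌊x i / s⌋ : ℤ) = ⌊y i / s⌋ := congrFun hxy i
      have hx1 := Int.floor_le (x i / s)
      have hx2 := Int.lt_floor_add_one (x i / s)
      have hy1 := Int.floor_le (y i / s)
      have hy2 := Int.lt_floor_add_one (y i / s)
      rw [h1] at hx1 hx2
      have habs : |y i / s - x i / s| < 1 := by
        push_cast at hx1 hx2 hy1 hy2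
        rw [abs_lt]
        constructor <;> linarith
      have hdiv : y i / s - x i / s = (y i - x i) / s := by ring
      rw [hdiv, abs_div, abs_of_pos hs] at habs
      have habs2 : |y i - x i| ≤ s := ((div_lt_one hs).1 habs).le
      have : ‖(y - x) i‖ = |y i - x i| := by
        rw [PiLp.sub_apply, Real.norm_eq_abs]
      rw [this]
      nlinarith [abs_nonneg (y i - x i)]
    calc Real.sqrt (∑ i, ‖(y - x) i‖ ^ 2)
        ≤ Real.sqrt (∑ _i : Fin n, s ^ 2) :=
          Real.sqrt_le_sqrt (Finset.sum_le_sum fun i _ => hcoord i)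
      _ = Real.sqrt (n * s ^ 2) := by
          rw [Finset.sum_const, Finset.card_univ, Fintype.card_fin, nsmul_eq_mul]
      _ = Real.sqrt n * s := by
          rw [Real.sqrt_mul (by positivity), Real.sqrt_sq hs.le]
      _ = R := by rw [hsdef]; field_simp
  -- the key geometric fact within one cell of one class
  have geom : ∀ m : Fin n → ℤ, ∀ x ∈ C m, ∀ y ∈ C m, ⟪y, q0.1⟫ ≤ ⟪x, q0.1⟫ →
      y ∈ closedBall x (r x) \ {z | α * ‖z - x‖ < ⟪z - x, θ x⟫} := by
    intro m x hx y hy hLyx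
    have hxG : x ∈ G := hx.1
    have hyG : y ∈ G := hy.1
    have hxA := hGA hxG
    have hfd : f x = f y := by
      have h1 : f x = m := hx.2
      have h2 : f y = m := hy.2
      rw [h1, h2]
    constructor
    · rw [mem_closedBall, dist_eq_norm]
      exact le_trans (celldiam x y hfd) (hr x hxA).1
    · intro hy'
      simp only [Set.mem_setOf_eq] at hy'
      have hyx : y ≠ x := by
        rintro rfl
        simp at hy'
      have hnorm : 0 < ‖y - x‖ := by rwa [norm_sub_pos_iff]
      have hθx : ‖θ x - q0.1‖ ≤ α / 2 := by
        have h3 := hxG.2.1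
        rw [mem_ball, dist_eq_norm] at h3
        exact h3.le
      have hCS : ⟪y - x, θ x - q0.1⟫ ≤ ‖y - x‖ * (α / 2) := by
        calc ⟪y - x, θ x - q0.1⟫ ≤ ‖y - x‖ * ‖θ x - q0.1‖ := real_inner_le_norm _ _
          _ ≤ ‖y - x‖ * (α / 2) := mul_le_mul_of_nonneg_left hθx (norm_nonneg _)
      have hkey : ⟪y, q0.1⟫ - ⟪x, q0.1⟫ = ⟪y - x, θ x⟫ - ⟪y - x, θ x - q0.1⟫ := by
        rw [← inner_sub_left, inner_sub_right]
        ring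
      nlinarith [hy', hCS, hkey, hLyx, hnorm, hα]
  -- the error term
  set δ : ℝ≥0∞ := μ A / (((2 * (N + 1) * K : ℕ) : ℝ≥0∞) * (T'.card : ℝ≥0∞)) with hδ
  have hδ0 : 0 < δ := by
    apply ENNReal.div_pos hA0
    exact ENNReal.mul_ne_top (ENNReal.natCast_ne_top _) (ENNReal.natCast_ne_top _)
  -- in each cell, an almost-topmost point works
  have key : ∀ m ∈ T', ∃ x, x ∈ C m ∧
      μ (C m) ≤ μ (closedBall x (r x) \ {z | α * ‖z - x‖ < ⟪z - x, θ x⟫}) + δ := by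
    intro m hm
    have hCne : (C m).Nonempty := (Finset.mem_filter.1 hm).2
    set L : E → ℝ := fun y => ⟪y, q0.1⟫ with hL
    have hLcont : Continuous L := Continuous.inner continuous_id continuous_const
    have hbdd' : BddAbove (L '' C m) := by
      refine ⟨M * ‖(q0.1 : E)‖, ?_⟩
      rintro _ ⟨y, hy, rfl⟩
      calc L y ≤ ‖y‖ * ‖(q0.1 : E)‖ := real_inner_le_norm _ _
        _ ≤ M * ‖(q0.1 : E)‖ :=
            mul_le_mul_of_nonneg_right (hM y (hGA hy.1)) (norm_nonneg _)
    set t : ℝ := sSup (L '' C m) with ht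
    have hle : ∀ y ∈ C m, L y ≤ t := fun y hy => le_csSup hbdd' ⟨y, hy, rfl⟩
    by_cases hmax : ∃ x ∈ C m, ∀ y ∈ C m, L y ≤ L x
    · obtain ⟨x, hxC, hx2⟩ := hmax
      exact ⟨x, hxC,
        le_trans (measure_mono fun y hy => geom m x hxC y hy (hx2 y hy)) le_self_add⟩
    · push_neg at hmax
      set U : ℕ → Set E := fun k => {y | t - 1 / (k + 1) < L y} with hU
      have hUmeas : ∀ k, MeasurableSet (U k) := fun k =>
        measurableSet_lt measurable_const hLcont.measurable
      have hanti : Antitone U := by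
        intro k l hkl y hy
        simp only [hU, Set.mem_setOf_eq] at hy ⊢
        have hkl' : (k : ℝ) ≤ l := Nat.cast_le.2 hkl
        have h5 : (1 : ℝ) / (l + 1) ≤ 1 / (k + 1) :=
          one_div_le_one_div_of_le (by positivity) (by linarith)
        linarith
      have hiInter : ⋂ k, U k = {y | t ≤ L y} := by
        ext y
        simp only [Set.mem_iInter, hU, Set.mem_setOf_eq]
        constructor
        · intro h
          by_contra hlt
          push_neg at hlt
          obtain ⟨k, hk⟩ := exists_nat_one_div_lt (sub_pos.2 hlt)
          have := h k
          linarith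
        · intro h k
          have : (0 : ℝ) < 1 / (k + 1) := by positivity
          linarith
      have hν : ∀ k, μ.restrict (C m) (U k) = μ (U k ∩ C m) := fun k =>
        Measure.restrict_apply (hUmeas k)
      have htop : {y | t ≤ L y} ∩ C m = ∅ := by
        rw [Set.eq_empty_iff_forall_notMem]
        rintro y ⟨hty, hyC⟩
        simp only [Set.mem_setOf_eq] at hty
        obtain ⟨y', hy', hlt⟩ := hmax y hyC
        exact absurd (hle y' hy') (by linarith)
      have htend : Filter.Tendsto (fun k => μ.restrict (C m) (U k))
          Filter.atTop (nhds 0) := by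
        have h2 := tendsto_measure_iInter_atTop (μ := μ.restrict (C m))
          (fun k => (hUmeas k).nullMeasurableSet) hanti ⟨0, measure_ne_top _ _⟩
        rw [hiInter] at h2
        have h0 : μ.restrict (C m) {y | t ≤ L y} = 0 := by
          rw [Measure.restrict_apply
            (measurableSet_le measurable_const hLcont.measurable), htop, measure_empty]
        rw [h0] at h2
        exact h2
      obtain ⟨k, hk⟩ := ((tendsto_order.1 htend).2 δ hδ0).exists
      have h1k : t - 1 / (k + 1) < t := by
        have : (0 : ℝ) < 1 / (k + 1) := by positivity
        linarith
      obtain ⟨_, ⟨x, hxC, rfl⟩, hxt⟩ := exists_lt_of_lt_csSup (hCne.image L) h1k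
      refine ⟨x, hxC, ?_⟩
      have hcover2 : C m ⊆
          (closedBall x (r x) \ {z | α * ‖z - x‖ < ⟪z - x, θ x⟫}) ∪ (U k ∩ C m) := by
        intro y hy
        by_cases hLy : L y ≤ L x
        · exact Or.inl (geom m x hxC y hy hLy)
        · push_neg at hLy
          exact Or.inr ⟨by simp only [hU, Set.mem_setOf_eq]; linarith, hy⟩
      calc μ (C m) ≤ μ ((closedBall x (r x) \ {z | α * ‖z - x‖ < ⟪z - x, θ x⟫})
            ∪ (U k ∩ C m)) := measure_mono hcover2
        _ ≤ μ (closedBall x (r x) \ {z | α * ‖z - x‖ < ⟪z - x, θ x⟫})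
            + μ (U k ∩ C m) := measure_union_le _ _
        _ ≤ μ (closedBall x (r x) \ {z | α * ‖z - x‖ < ⟪z - x, θ x⟫}) + δ :=
            add_le_add (le_refl _) (by rw [← hν k]; exact hk.le)
  choose! g hg1 hg2 using key
  set F : Finset E := T'.image g with hF
  have hginj : ∀ m ∈ T', ∀ m' ∈ T', g m = g m' → m = m' := by
    intro m hm m' hm' hgg
    have h1 : f (g m) = m := (hg1 m hm).2
    have h2 : f (g m') = m' := (hg1 m' hm').2
    rw [← h1, hgg, h2]
  have hFA : ↑F ⊆ A := by
    intro x hx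
    obtain ⟨m, hm, rfl⟩ := Finset.mem_image.1 (Finset.mem_coe.1 hx)
    exact hGA (hg1 m hm).1
  -- separation of chosen points
  have hps : 4 * Real.sqrt n + 2 ≤ (p : ℝ) := by
    rw [hp]
    push_cast
    linarith [Nat.le_ceil (4 * Real.sqrt n)]
  have hsR : s * Real.sqrt n = R := by rw [hsdef]; field_simp
  have hsep : ∀ m ∈ T', ∀ m' ∈ T', m ≠ m' → 4 * R < dist (g m) (g m') := by
    intro m hm m' hm' hmm'
    obtain ⟨i, hi⟩ : ∃ i, m i ≠ m' i := by
      by_contra hcon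
      push_neg at hcon
      exact hmm' (funext hcon)
    have hcol : ((m i : ℤ) : ZMod p) = ((m' i : ℤ) : ZMod p) := by
      have c1 : color (f (g m)) = q0.2 := ((hg1 m hm).1).2.2
      have c2 : color (f (g m')) = q0.2 := ((hg1 m' hm').1).2.2
      have h1 : f (g m) = m := (hg1 m hm).2
      have h2 : f (g m') = m' := (hg1 m' hm').2
      rw [h1] at c1
      rw [h2] at c2
      exact congrFun (c1.trans c2.symm) i
    have hdvd : (p : ℤ) ∣ m' i - m i :=
      ((ZMod.intCast_eq_intCast_iff _ _ _).1 hcol).dvd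
    have h0 : (p : ℤ) ≤ |m' i - m i| :=
      Int.le_of_dvd (abs_pos.2 (sub_ne_zero.2 (Ne.symm hi))) ((dvd_abs _ _).2 hdvd)
    have habs : (p : ℝ) ≤ |(m' i : ℝ) - (m i : ℝ)| := by exact_mod_cast h0
    set X : ℝ := g m i / s with hX
    set Y : ℝ := g m' i / s with hY
    have hgmi : (⌊g m i / s⌋ : ℤ) = m i := congrFun (hg1 m hm).2 i
    have hgm'i : (⌊g m' i / s⌋ : ℤ) = m' i := congrFun (hg1 m' hm').2 i
    have a1 : (m i : ℝ) ≤ X := by rw [hX, ← hgmi]; exact_mod_cast Int.floor_le _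
    have a2 : X < (m i : ℝ) + 1 := by
      rw [hX, ← hgmi]; exact_mod_cast Int.lt_floor_add_one (g m i / s)
    have b1 : (m' i : ℝ) ≤ Y := by rw [hY, ← hgm'i]; exact_mod_cast Int.floor_le _
    have b2 : Y < (m' i : ℝ) + 1 := by
      rw [hY, ← hgm'i]; exact_mod_cast Int.lt_floor_add_one (g m' i / s)
    have hfull : (p : ℝ) - 1 ≤ |X - Y| := by
      have t1 : |(m' i : ℝ) - (m i : ℝ)| ≤ |X - Y| + |(Y - m' i) - (X - m i)| := by
        have he : (m' i : ℝ) - m i = (Y - X) - ((Y - m' i) - (X - m i)) := by ring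
        rw [he]
        calc |(Y - X) - ((Y - m' i) - (X - m i))|
            ≤ |Y - X| + |(Y - m' i) - (X - m i)| := abs_sub _ _
          _ = |X - Y| + |(Y - m' i) - (X - m i)| := by rw [abs_sub_comm]
      have t2 : |(Y - m' i) - (X - m i)| < 1 := by
        rw [abs_lt]
        constructor <;> linarith
      linarith
    have hcoordsep : (p - 1 : ℝ) * s ≤ |g m i - g m' i| := by
      have e1 : g m i - g m' i = (X - Y) * s := by rw [hX, hY]; field_simp
      rw [e1, abs_mul, abs_of_pos hs]
      exact mul_le_mul_of_nonneg_right hfull hs.le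
    have hcd : |g m i - g m' i| ≤ dist (g m) (g m') := by
      rw [dist_eq_norm]
      have := coord (g m - g m') i
      rwa [PiLp.sub_apply] at this
    have hexp : (4 * Real.sqrt n + 1) * s = 4 * R + s := by rw [← hsR]; ring
    have hprod : (4 * Real.sqrt n + 1) * s ≤ ((p : ℝ) - 1) * s :=
      mul_le_mul_of_nonneg_right (by linarith) hs.le
    linarith
  have hdisj : (↑F : Set E).PairwiseDisjoint (fun x => closedBall x (r x)) := by
    intro u hu v hv huv
    obtain ⟨m, hm, rfl⟩ := Finset.mem_image.1 (Finset.mem_coe.1 hu)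
    obtain ⟨m', hm', rfl⟩ := Finset.mem_image.1 (Finset.mem_coe.1 hv)
    have hmm' : m ≠ m' := fun h => huv (by rw [h])
    apply closedBall_disjoint_closedBall
    have hAm : g m ∈ A := hGA (hg1 m hm).1
    have hAm' : g m' ∈ A := hGA (hg1 m' hm').1
    calc r (g m) + r (g m') ≤ 2 * R + 2 * R := add_le_add (hr _ hAm).2 (hr _ hAm').2
      _ = 4 * R := by ring
      _ < dist (g m) (g m') := hsep m hm m' hm' hmm'
  refine ⟨F, hFA, hdisj, ?_⟩
  have hsumF : ∑ x ∈ F, μ (closedBall x (r x) \ {y | α * ‖y - x‖ < ⟪y - x, θ x⟫})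
      = ∑ m ∈ T', μ (closedBall (g m) (r (g m)) \
          {y | α * ‖y - g m‖ < ⟪y - g m, θ (g m)⟫}) :=
    Finset.sum_image hginj
  set SS : ℝ≥0∞ := ∑ m ∈ T', μ (closedBall (g m) (r (g m)) \
      {y | α * ‖y - g m‖ < ⟪y - g m, θ (g m)⟫}) with hSS
  set D : ℝ≥0∞ := ((2 * (N + 1) * K : ℕ) : ℝ≥0∞) with hD
  set NKc : ℝ≥0∞ := (((N + 1) * K : ℕ) : ℝ≥0∞) with hNKc
  have hNK0 : NKc ≠ 0 := by
    rw [hNKc]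
    exact_mod_cast (Nat.mul_pos (Nat.succ_pos N) hKpos).ne'
  have hNKt : NKc ≠ ⊤ := ENNReal.natCast_ne_top _
  have hTc : (T'.card : ℝ≥0∞) ≠ 0 := Nat.cast_ne_zero.2 (Finset.card_pos.2 hT'ne).ne'
  have hD2 : D = 2 * NKc := by rw [hD, hNKc]; push_cast; ring
  have hcardδ : (T'.card : ℝ≥0∞) * δ = μ A / D := by
    rw [hδ, div_eq_mul_inv,
      ENNReal.mul_inv (Or.inl (by rw [hD2]; exact mul_ne_zero (NeZero.ne' (2 : ℝ≥0∞)).symm hNK0)) (Or.inl (by rw [hD2]; exact ENNReal.mul_ne_top ENNReal.ofNat_ne_top hNKt))]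
    calc (T'.card : ℝ≥0∞) * (μ A * (D⁻¹ * (T'.card : ℝ≥0∞)⁻¹))
        = ((T'.card : ℝ≥0∞) * (T'.card : ℝ≥0∞)⁻¹) * (μ A * D⁻¹) := by ring
      _ = μ A / D := by
          rw [ENNReal.mul_inv_cancel hTc (ENNReal.natCast_ne_top _), one_mul,
            div_eq_mul_inv]
  have hhalf : NKc * (μ A / D) = μ A / 2 := by
    rw [hD2, div_eq_mul_inv,
      ENNReal.mul_inv (Or.inl (NeZero.ne' (2 : ℝ≥0∞)).symm) (Or.inl ENNReal.ofNat_ne_top)]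
    calc NKc * (μ A * ((2 : ℝ≥0∞)⁻¹ * NKc⁻¹))
        = (NKc * NKc⁻¹) * (μ A * (2 : ℝ≥0∞)⁻¹) := by ring
      _ = μ A / 2 := by rw [ENNReal.mul_inv_cancel hNK0 hNKt, one_mul, div_eq_mul_inv]
  have main : μ A ≤ NKc * SS + μ A / 2 := by
    calc μ A ≤ NKc * μ G := hMA
      _ ≤ NKc * ∑ m ∈ T', μ (C m) := mul_le_mul_right hsumT _
      _ ≤ NKc * ∑ m ∈ T', (μ (closedBall (g m) (r (g m)) \
            {y | α * ‖y - g m‖ < ⟪y - g m, θ (g m)⟫}) + δ) :=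
          mul_le_mul_right (Finset.sum_le_sum fun m hm => hg2 m hm) _
      _ = NKc * (SS + (T'.card : ℝ≥0∞) * δ) := by
          rw [Finset.sum_add_distrib, Finset.sum_const, nsmul_eq_mul, hSS]
      _ = NKc * SS + NKc * ((T'.card : ℝ≥0∞) * δ) := by ring
      _ = NKc * SS + μ A / 2 := by rw [hcardδ, hhalf]
  have hhalftop : μ A / 2 ≠ ⊤ :=
    (ENNReal.div_lt_top (measure_ne_top μ A) (by norm_num)).ne
  have h3 : μ A / 2 ≤ NKc * SS := by
    have h2 : μ A / 2 + μ A / 2 ≤ NKc * SS + μ A / 2 := by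
      rw [ENNReal.add_halves]
      exact main
    exact (ENNReal.add_le_add_iff_right hhalftop).1 h2
  rw [hsumF]
  calc D⁻¹ * μ A = NKc⁻¹ * (μ A / 2) := by
        rw [hD2, ENNReal.mul_inv (Or.inl (NeZero.ne' (2 : ℝ≥0∞)).symm)
          (Or.inl ENNReal.ofNat_ne_top), div_eq_mul_inv]
        ring
    _ ≤ NKc⁻¹ * (NKc * SS) := mul_le_mul_right h3 _
    _ = (NKc⁻¹ * NKc) * SS := by ring
    _ = SS := by rw [ENNReal.inv_mul_cancel hNK0 hNKt, one_mul]
end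

section
/- Let f : (0,1) → ℝ be an increasing function with ∫₀¹ f(t)/t dt < ∞ and let μ be a Borel measure on ℝⁿ finite on bounded sets. For any fixed θ ∈ S^{n-1}, for μ-almost every x ∈ ℝⁿ, liminf_{r↓0} μ(B(x,r) \ H(x,θ)) / (f(r)·μ(B(x,r))) ≥ 1. -/
open Set MeasureTheory Metric Filter
open scoped ENNReal RealInnerProductSpace Topology

section Aux

variable {n : ℕ}

lemma chain_lemma {n : ℕ} (μ : Measure (EuclideanSpace ℝ (Fin n)))
    (θ : EuclideanSpace ℝ (Fin n)) (S : Set (EuclideanSpace ℝ (Fin n))) (T : ℝ≥0∞)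
    (hb : Bornology.IsBounded S)
    (h : ∀ x ∈ S, μ (S ∩ {y | ⟪y - x, θ⟫ ≤ 0}) ≤ T) : μ S ≤ 2 * T := by
  rcases S.eq_empty_or_nonempty with rfl | hS
  · simp
  obtain ⟨M, hM⟩ := hb.exists_norm_le
  set φ : EuclideanSpace ℝ (Fin n) → ℝ := fun y => ⟪y, θ⟫ with hφ
  have hbdd : BddAbove (φ '' S) := by
    refine ⟨M * ‖θ‖, ?_⟩
    rintro _ ⟨y, hy, rfl⟩
    exact (real_inner_le_norm y θ).trans (by
      have := hM y hy
      nlinarith [norm_nonneg θ])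
  set m : ℝ := sSup (φ '' S) with hm
  have hle : ∀ y ∈ S, φ y ≤ m := fun y hy => le_csSup hbdd ⟨y, hy, rfl⟩
  have hsub : S ⊆ (S ∩ {y | φ y < m}) ∪ (S ∩ {y | m ≤ φ y}) := by
    intro y hy
    rcases lt_or_ge (φ y) m with h' | h'
    · exact Or.inl ⟨hy, h'⟩
    · exact Or.inr ⟨hy, h'⟩
  have htop : μ (S ∩ {y | m ≤ φ y}) ≤ T := by
    rcases (S ∩ {y | m ≤ φ y}).eq_empty_or_nonempty with he | ⟨x, hxS, hxm⟩
    · simp [he]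
    · refine le_trans (measure_mono ?_) (h x hxS)
      rintro y ⟨hyS, _⟩
      refine ⟨hyS, ?_⟩
      have : φ y ≤ φ x := (hle y hyS).trans hxm
      simpa [hφ, inner_sub_left] using sub_nonpos.mpr this
  have hlow : μ (S ∩ {y | φ y < m}) ≤ T := by
    have hsub2 : S ∩ {y | φ y < m} ⊆ ⋃ j : ℕ, S ∩ {y | φ y ≤ m - ((j : ℝ) + 1)⁻¹} := by
      rintro y ⟨hyS, hym⟩
      obtain ⟨j, hj⟩ := exists_nat_one_div_lt (K := ℝ) (sub_pos.mpr hym)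
      rw [one_div] at hj
      exact mem_iUnion.mpr ⟨j, hyS, show φ y ≤ m - ((j:ℝ)+1)⁻¹ by
        have : φ y < m := hym
        linarith⟩
    have hmono : Monotone fun j : ℕ => S ∩ {y | φ y ≤ m - ((j : ℝ) + 1)⁻¹} := by
      intro i j hij
      refine inter_subset_inter_right _ fun y hy => ?_
      have hij' : (i : ℝ) ≤ (j : ℝ) := Nat.cast_le.mpr hij
      have h1 : ((j : ℝ) + 1)⁻¹ ≤ ((i : ℝ) + 1)⁻¹ := by
        apply inv_anti₀ <;> linarith
      simp only [mem_setOf_eq] at hy ⊢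
      linarith
    refine le_trans (measure_mono hsub2) ?_
    rw [hmono.measure_iUnion]
    refine iSup_le fun j => ?_
    have hlt : m - ((j : ℝ) + 1)⁻¹ < m := by
      have : (0:ℝ) < ((j : ℝ) + 1)⁻¹ := by positivity
      linarith
    obtain ⟨_, ⟨x, hxS, rfl⟩, hx⟩ := exists_lt_of_lt_csSup (hS.image φ) hlt
    refine le_trans (measure_mono ?_) (h x hxS)
    rintro y ⟨hyS, hy⟩
    refine ⟨hyS, ?_⟩
    simp only [mem_setOf_eq] at hy
    have : φ y ≤ φ x := le_of_lt (lt_of_le_of_lt hy hx)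
    simpa [hφ, inner_sub_left] using sub_nonpos.mpr this
  calc μ S ≤ μ ((S ∩ {y | φ y < m}) ∪ (S ∩ {y | m ≤ φ y})) := measure_mono hsub
    _ ≤ μ (S ∩ {y | φ y < m}) + μ (S ∩ {y | m ≤ φ y}) := measure_union_le _ _
    _ ≤ T + T := add_le_add hlow htop
    _ = 2 * T := (two_mul T).symm

/-- lattice cube of side `s` indexed by `z : Fin n → ℤ` -/
def lcube (s : ℝ) (z : Fin n → ℤ) : Set (EuclideanSpace ℝ (Fin n)) :=
  {y | ∀ i, y i ∈ Ico ((z i : ℝ) * s) ((z i : ℝ) * s + s)}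

lemma mem_lcube_floor {s : ℝ} (hs : 0 < s) (y : EuclideanSpace ℝ (Fin n)) :
    y ∈ lcube s (fun i => ⌊y i / s⌋) := by
  intro i
  constructor
  · have := Int.floor_le (y i / s)
    calc (⌊y i / s⌋ : ℝ) * s ≤ (y i / s) * s := by nlinarith
      _ = y i := by field_simp
  · have := Int.lt_floor_add_one (y i / s)
    have h2 : y i / s * s < ((⌊y i / s⌋ : ℝ) + 1) * s := by nlinarith
    calc y i = y i / s * s := by field_simp
      _ < ((⌊y i / s⌋ : ℝ) + 1) * s := h2
      _ = (⌊y i / s⌋ : ℝ) * s + s := by ring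

lemma lcube_disjoint {s : ℝ} : Pairwise (Function.onFun Disjoint (lcube (n := n) s)) := by
  intro z w hzw
  rw [Function.onFun, Set.disjoint_left]
  intro y hy hy'
  apply hzw
  funext i
  have h1 := hy i; have h2 := hy' i
  simp only [mem_Ico] at h1 h2
  by_contra hne
  rcases lt_or_gt_of_ne (fun h => hne (by exact_mod_cast h) : (z i : ℝ) ≠ (w i : ℝ)) with h | h
  · have : (z i : ℝ) + 1 ≤ w i := by exact_mod_cast Int.add_one_le_iff.mpr (by exact_mod_cast h)
    nlinarith [h1.2, h2.1]
  · have : (w i : ℝ) + 1 ≤ z i := by exact_mod_cast Int.add_one_le_iff.mpr (by exact_mod_cast h)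
    nlinarith [h1.1, h2.2]

lemma lcube_measurable {s : ℝ} (z : Fin n → ℤ) : MeasurableSet (lcube s z) := by
  have h : lcube (n := n) s z = ⋂ i, (fun y : EuclideanSpace ℝ (Fin n) => y i) ⁻¹'
      (Ico ((z i : ℝ) * s) ((z i : ℝ) * s + s)) := by
    ext y; simp [lcube, mem_iInter]
  rw [h]
  exact MeasurableSet.iInter fun i =>
    measurableSet_preimage (EuclideanSpace.proj i).continuous.measurable measurableSet_Ico

lemma lcube_dist {s : ℝ} (hs : 0 ≤ s) {z : Fin n → ℤ} {y y' : EuclideanSpace ℝ (Fin n)}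
    (hy : y ∈ lcube s z) (hy' : y' ∈ lcube s z) : dist y y' ≤ n * s := by
  rw [EuclideanSpace.dist_eq]
  have key : ∀ i, dist (y i) (y' i) ^ 2 ≤ s ^ 2 := by
    intro i
    have h1 := hy i; have h2 := hy' i
    simp only [mem_Ico] at h1 h2
    rw [Real.dist_eq, sq_abs]
    nlinarith [h1.1, h1.2, h2.1, h2.2]
  calc √(∑ i, dist (y i) (y' i) ^ 2) ≤ √((n : ℝ) * s ^ 2) := by
        apply Real.sqrt_le_sqrt
        calc ∑ i, dist (y i) (y' i) ^ 2 ≤ ∑ _i : Fin n, s ^ 2 := Finset.sum_le_sum fun i _ => key i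
          _ = (n : ℝ) * s ^ 2 := by simp [Finset.sum_const, nsmul_eq_mul]
    _ ≤ √(((n : ℝ) * s) ^ 2) := by
        apply Real.sqrt_le_sqrt
        have : (1 : ℝ) ≤ n ∨ (n : ℕ) = 0 := by
          rcases Nat.eq_zero_or_pos n with h | h
          · exact Or.inr h
          · exact Or.inl (by exact_mod_cast h)
        rcases this with h | h
        · nlinarith
        · simp [h]
    _ = (n : ℝ) * s := Real.sqrt_sq (by positivity)

lemma coord_dist_le {y x : EuclideanSpace ℝ (Fin n)} (i : Fin n) :
    |y i - x i| ≤ dist y x := by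
  rw [EuclideanSpace.dist_eq, ← Real.sqrt_sq_eq_abs]
  apply Real.sqrt_le_sqrt
  have h : (y i - x i) ^ 2 = dist (y i) (x i) ^ 2 := by rw [Real.dist_eq, sq_abs]
  rw [h]
  exact Finset.single_le_sum (fun j _ => sq_nonneg (dist (y j) (x j))) (Finset.mem_univ i)

lemma scale_lemma (hn : 1 ≤ n) (μ : Measure (EuclideanSpace ℝ (Fin n)))
    (θ : EuclideanSpace ℝ (Fin n)) (f' : ℝ → ℝ)
    (hmono' : MonotoneOn f' (Ioo (0:ℝ) 1)) (R : ℕ) (k : ℕ) (hk : 1 ≤ k) :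
    μ {x | x ∈ closedBall (0:EuclideanSpace ℝ (Fin n)) R ∧
        ∃ r ∈ Icc ((2:ℝ)⁻¹^(k+1)) ((2:ℝ)⁻¹^k),
          μ (closedBall x r \ {y | 0 < ⟪y - x, θ⟫}) < ENNReal.ofReal (f' r) * μ (closedBall x r)} ≤
      2 * ((6*n+3 : ℕ) : ℝ≥0∞)^n * ENNReal.ofReal (f' ((2:ℝ)⁻¹^k)) *
        μ (closedBall 0 (R+1)) := by
  set ρ : ℝ := (2:ℝ)⁻¹^(k+1) with hρdef
  have hρpos : 0 < ρ := by positivity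
  have h2ρ : (2:ℝ)⁻¹^k = 2 * ρ := by rw [hρdef, pow_succ]; ring
  have h2ρlt : (2:ℝ)⁻¹^k < 1 := by
    calc (2:ℝ)⁻¹^k ≤ (2:ℝ)⁻¹^1 := pow_le_pow_of_le_one (by norm_num) (by norm_num) hk
      _ < 1 := by norm_num
  have hρ4 : ρ ≤ (1:ℝ)/4 := by
    calc ρ = (2:ℝ)⁻¹^(k+1) := hρdef
      _ ≤ (2:ℝ)⁻¹^2 := pow_le_pow_of_le_one (by norm_num) (by norm_num) (by omega)
      _ = 1/4 := by norm_num
  have h3ρ : 3 * ρ ≤ 1 := by linarith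
  set s : ℝ := ρ / n with hsdef
  have hnpos : (0:ℝ) < n := by exact_mod_cast hn
  have hspos : 0 < s := by positivity
  have hns : (n:ℝ) * s = ρ := by rw [hsdef]; field_simp
  set E : Set (EuclideanSpace ℝ (Fin n)) := {x | x ∈ closedBall (0:EuclideanSpace ℝ (Fin n)) R ∧
      ∃ r ∈ Icc ρ ((2:ℝ)⁻¹^k),
        μ (closedBall x r \ {y | 0 < ⟪y - x, θ⟫}) <
          ENNReal.ofReal (f' r) * μ (closedBall x r)} with hEdef
  set D : ℤ := 3*(n:ℤ)+1 with hDdef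
  set Nz : (Fin n → ℤ) → Finset (Fin n → ℤ) :=
    fun z => Fintype.piFinset fun i => Finset.Icc (z i - D) (z i + D) with hNzdef
  set A : Set (EuclideanSpace ℝ (Fin n)) := closedBall (0:EuclideanSpace ℝ (Fin n)) (R+1) with hAdef
  set F : ℝ≥0∞ := ENNReal.ofReal (f' ((2:ℝ)⁻¹^k)) with hFdef
  set a : (Fin n → ℤ) → ℝ≥0∞ := fun w => μ (lcube s w ∩ A) with hadef
  -- step 1 : cover
  have cover : μ E ≤ ∑' z : Fin n → ℤ, μ (E ∩ lcube s z) := by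
    refine le_trans (measure_mono ?_) (measure_iUnion_le _)
    intro y hy
    exact mem_iUnion.mpr ⟨fun i => ⌊y i / s⌋, hy, mem_lcube_floor hspos y⟩
  -- step 2 : per-cube bound
  have key : ∀ z : Fin n → ℤ, μ (E ∩ lcube s z) ≤ 2 * (F * ∑ w ∈ Nz z, a w) := by
    intro z
    rcases (E ∩ lcube s z).eq_empty_or_nonempty with he | ⟨x₀, hx₀E, hx₀c⟩
    · simp [he]
    have hx₀R : x₀ ∈ closedBall (0:EuclideanSpace ℝ (Fin n)) (R:ℝ) := hx₀E.1
    -- the enlarged ball is covered by nearby cubes, inside A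
    have ball_sub : closedBall x₀ (3*ρ) ⊆ ⋃ w ∈ Nz z, (lcube s w ∩ A) := by
      intro y hy
      have hdy : dist y x₀ ≤ 3*ρ := mem_closedBall.mp hy
      have hyA : y ∈ A := by
        rw [hAdef, mem_closedBall]
        calc dist y 0 ≤ dist y x₀ + dist x₀ 0 := dist_triangle _ _ _
          _ ≤ 3*ρ + R := add_le_add hdy (mem_closedBall.mp hx₀R)
          _ ≤ (R:ℝ) + 1 := by push_cast; linarith
      have hw : (fun i => ⌊y i / s⌋) ∈ Nz z := by
        simp only [hNzdef, Fintype.mem_piFinset, Finset.mem_Icc]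
        intro i
        have hcoord : |y i - x₀ i| ≤ 3*ρ := (coord_dist_le i).trans hdy
        have hx₀i := hx₀c i
        simp only [mem_Ico] at hx₀i
        have h3ns : 3*ρ = 3*(n:ℝ)*s := by rw [← hns]; ring
        have hlow : ((z i : ℝ) - 3*(n:ℝ)) * s ≤ y i := by
          have : x₀ i - 3*(n:ℝ)*s ≤ y i := by
            have := abs_le.mp hcoord
            rw [h3ns] at this
            linarith [this.1]
          nlinarith [hx₀i.1]
        have hhigh : y i < ((z i : ℝ) + 3*(n:ℝ) + 1) * s := by
          have : y i ≤ x₀ i + 3*(n:ℝ)*s := by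
            have := abs_le.mp hcoord
            rw [h3ns] at this
            linarith [this.2]
          nlinarith [hx₀i.2]
        constructor
        · apply Int.le_floor.mpr
          have : ((z i : ℝ) - 3*(n:ℝ)) ≤ y i / s := by
            rw [le_div_iff₀ hspos]; exact hlow
          calc ((z i - D : ℤ) : ℝ) = (z i : ℝ) - (3*(n:ℝ)+1) := by push_cast [hDdef]; ring
            _ ≤ (z i : ℝ) - 3*(n:ℝ) := by linarith
            _ ≤ y i / s := this
        · have hfl : ⌊y i / s⌋ < z i + D + 1 := by
            apply Int.floor_lt.mpr
            have : y i / s < (z i : ℝ) + 3*(n:ℝ) + 1 := by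
              rw [div_lt_iff₀ hspos]; exact hhigh
            calc y i / s < (z i : ℝ) + 3*(n:ℝ) + 1 := this
              _ ≤ ((z i + D + 1 : ℤ) : ℝ) := by push_cast [hDdef]; linarith
          omega
      exact mem_biUnion hw ⟨mem_lcube_floor hspos y, hyA⟩
    have Tbound : μ (closedBall x₀ (3*ρ)) ≤ ∑ w ∈ Nz z, a w :=
      (measure_mono ball_sub).trans (measure_biUnion_finset_le _ _)
    -- chain hypothesis
    have hchain : ∀ x ∈ E ∩ lcube s z,
        μ ((E ∩ lcube s z) ∩ {y | ⟪y - x, θ⟫ ≤ 0}) ≤ F * μ (closedBall x₀ (3*ρ)) := by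
      rintro x ⟨hxE, hxc⟩
      obtain ⟨r, hr, hlt⟩ := hxE.2
      have hrρ : ρ ≤ r := hr.1
      have hr2ρ : r ≤ 2*ρ := by rw [← h2ρ]; exact hr.2
      have hsub1 : (E ∩ lcube s z) ∩ {y | ⟪y - x, θ⟫ ≤ 0} ⊆
          closedBall x r \ {y | 0 < ⟪y - x, θ⟫} := by
        rintro y ⟨⟨_, hyc⟩, hy0⟩
        refine ⟨mem_closedBall.mpr ?_, fun hc => absurd (show ⟪y - x, θ⟫ ≤ 0 from hy0) (not_le.mpr hc)⟩
        calc dist y x ≤ (n:ℝ) * s := lcube_dist hspos.le hyc hxc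
          _ = ρ := hns
          _ ≤ r := hrρ
      have hf'le : f' r ≤ f' ((2:ℝ)⁻¹^k) := by
        apply hmono' ⟨lt_of_lt_of_le hρpos hrρ, lt_of_le_of_lt (hr2ρ.trans_eq h2ρ.symm) h2ρlt⟩
          ⟨by positivity, h2ρlt⟩ (h2ρ ▸ hr2ρ)
      have hballs : closedBall x r ⊆ closedBall x₀ (3*ρ) := by
        apply closedBall_subset_closedBall'
        have : dist x x₀ ≤ ρ := (lcube_dist hspos.le hxc hx₀c).trans_eq hns
        linarith
      calc μ ((E ∩ lcube s z) ∩ {y | ⟪y - x, θ⟫ ≤ 0})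
          ≤ μ (closedBall x r \ {y | 0 < ⟪y - x, θ⟫}) := measure_mono hsub1
        _ ≤ ENNReal.ofReal (f' r) * μ (closedBall x r) := hlt.le
        _ ≤ F * μ (closedBall x₀ (3*ρ)) :=
            mul_le_mul' (ENNReal.ofReal_le_ofReal hf'le) (measure_mono hballs)
    have hbd : Bornology.IsBounded (E ∩ lcube s z) := by
      apply (isBounded_closedBall (x := x₀) (r := ρ)).subset
      intro y hy
      exact mem_closedBall.mpr ((lcube_dist hspos.le hy.2 hx₀c).trans_eq hns)
    calc μ (E ∩ lcube s z) ≤ 2 * (F * μ (closedBall x₀ (3*ρ))) :=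
          chain_lemma μ θ _ _ hbd hchain
      _ ≤ 2 * (F * ∑ w ∈ Nz z, a w) := by gcongr
  -- step 3 : summing
  have swap : ∑' z : Fin n → ℤ, ∑ w ∈ Nz z, a w =
      ∑' w : Fin n → ℤ, ((Nz w).card : ℝ≥0∞) * a w := by
    have hsym : ∀ z w : Fin n → ℤ, w ∈ Nz z ↔ z ∈ Nz w := by
      intro z w
      simp only [hNzdef, Fintype.mem_piFinset, Finset.mem_Icc]
      constructor <;> intro h i <;> have := h i <;> omega
    have h1 : ∀ z : Fin n → ℤ, ∑ w ∈ Nz z, a w =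
        ∑' w : Fin n → ℤ, (if w ∈ Nz z then a w else 0) := by
      intro z
      rw [tsum_eq_sum (s := Nz z) (fun b hb => if_neg hb)]
      exact (Finset.sum_congr rfl fun w hw => (if_pos hw).symm)
    calc ∑' z : Fin n → ℤ, ∑ w ∈ Nz z, a w
        = ∑' z, ∑' w, (if w ∈ Nz z then a w else 0) := by simp_rw [h1]
      _ = ∑' w, ∑' z, (if w ∈ Nz z then a w else 0) := ENNReal.tsum_comm
      _ = ∑' w, ∑' z, (if z ∈ Nz w then a w else 0) := by
          congr 1; ext w; congr 1; ext z; simp_rw [hsym]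
      _ = ∑' w : Fin n → ℤ, ((Nz w).card : ℝ≥0∞) * a w := by
          congr 1; ext w
          rw [tsum_eq_sum (s := Nz w) (fun b hb => if_neg hb)]
          simp [Finset.sum_ite_of_true, mul_comm]
  have hcard : ∀ w : Fin n → ℤ, (Nz w).card = (6*n+3)^n := by
    intro w
    rw [hNzdef, Fintype.card_piFinset]
    have : ∀ i : Fin n, (Finset.Icc (w i - D) (w i + D)).card = 6*n+3 := by
      intro i
      rw [Int.card_Icc, hDdef]
      omega
    simp [this, Finset.prod_const]
  have sumA : ∑' w : Fin n → ℤ, a w ≤ μ A := by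
    rw [hadef, ← measure_iUnion
      (fun z w hzw => ((lcube_disjoint hzw).mono inter_subset_left inter_subset_left))
      (fun w => (lcube_measurable w).inter measurableSet_closedBall)]
    exact measure_mono (iUnion_subset fun w => inter_subset_right)
  calc μ E ≤ ∑' z : Fin n → ℤ, μ (E ∩ lcube s z) := cover
    _ ≤ ∑' z : Fin n → ℤ, 2 * (F * ∑ w ∈ Nz z, a w) := ENNReal.tsum_le_tsum key
    _ = 2 * F * ∑' z : Fin n → ℤ, ∑ w ∈ Nz z, a w := by
        rw [ENNReal.tsum_mul_left.symm]; congr 1; ext z; ring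
    _ = 2 * F * ∑' w : Fin n → ℤ, ((Nz w).card : ℝ≥0∞) * a w := by rw [swap]
    _ = 2 * F * (((6*n+3 : ℕ) : ℝ≥0∞)^n * ∑' w : Fin n → ℤ, a w) := by
        simp_rw [hcard]; rw [ENNReal.tsum_mul_left]; push_cast; ring
    _ ≤ 2 * F * (((6*n+3 : ℕ) : ℝ≥0∞)^n * μ A) := by gcongr
    _ = 2 * ((6*n+3 : ℕ) : ℝ≥0∞)^n * F * μ A := by ring

lemma sum_ofReal_f (f : ℝ → ℝ) (hmono : MonotoneOn f (Ioo (0:ℝ) 1))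
    (hf : (∫⁻ t in Ioo (0:ℝ) 1, ENNReal.ofReal (f t / t)) < ⊤) :
    ∑' k : ℕ, ENNReal.ofReal (f ((2:ℝ)⁻¹^(k+1))) ≠ ⊤ := by
  set I : ℕ → Set ℝ := fun k => Ioo ((2:ℝ)⁻¹^(k+1)) ((2:ℝ)⁻¹^k) with hIdef
  have hpow_le : ∀ {i j : ℕ}, i ≤ j → (2:ℝ)⁻¹^j ≤ (2:ℝ)⁻¹^i := fun hij =>
    pow_le_pow_of_le_one (by norm_num) (by norm_num) hij
  have hImeas : ∀ k, MeasurableSet (I k) := fun k => measurableSet_Ioo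
  have hIdisj : Pairwise (Function.onFun Disjoint I) := by
    intro j k hjk
    rw [Function.onFun, Set.disjoint_left]
    intro t htj htk
    simp only [hIdef, mem_Ioo] at htj htk
    rcases lt_or_gt_of_ne hjk with h | h
    · have : (2:ℝ)⁻¹^k ≤ (2:ℝ)⁻¹^(j+1) := hpow_le (by omega)
      linarith [htj.2, htk.1]
    · have : (2:ℝ)⁻¹^j ≤ (2:ℝ)⁻¹^(k+1) := hpow_le (by omega)
      linarith [htj.1, htk.2]
  have key : ∀ k : ℕ, ENNReal.ofReal (f ((2:ℝ)⁻¹^(k+1))) ≤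
      2 * ∫⁻ t in I k, ENNReal.ofReal (f t / t) := by
    intro k
    set c : ℝ := f ((2:ℝ)⁻¹^(k+1)) with hc
    rcases le_or_gt c 0 with hc0 | hc0
    · simp [ENNReal.ofReal_eq_zero.mpr hc0]
    have hlo : (0:ℝ) < (2:ℝ)⁻¹^(k+1) := by positivity
    have hlo1 : (2:ℝ)⁻¹^(k+1) < 1 := lt_of_le_of_lt (hpow_le (by omega : 1 ≤ k+1)) (by norm_num)
    have hhi1 : (2:ℝ)⁻¹^k ≤ 1 := hpow_le (Nat.zero_le k)
    have step : ∫⁻ t in I k, ENNReal.ofReal (c * 2^k) ∂volume ≤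
        ∫⁻ t in I k, ENNReal.ofReal (f t / t) ∂volume := by
      apply setLIntegral_mono' (hImeas k)
      intro t ht
      simp only [hIdef, mem_Ioo] at ht
      apply ENNReal.ofReal_le_ofReal
      have htpos : 0 < t := lt_trans hlo ht.1
      have hft : c ≤ f t := hmono ⟨hlo, hlo1⟩ ⟨htpos, lt_of_lt_of_le ht.2 hhi1⟩ ht.1.le
      have hinv : (2:ℝ)^k ≤ t⁻¹ := by
        have h1 : ((2:ℝ)⁻¹^k)⁻¹ ≤ t⁻¹ := inv_anti₀ htpos ht.2.le
        calc (2:ℝ)^k = ((2:ℝ)⁻¹^k)⁻¹ := by rw [inv_pow, inv_inv]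
          _ ≤ t⁻¹ := h1
      have hinvnn : (0:ℝ) ≤ t⁻¹ := inv_nonneg.mpr htpos.le
      calc c * 2^k ≤ c * t⁻¹ := by nlinarith
        _ ≤ f t * t⁻¹ := mul_le_mul_of_nonneg_right hft hinvnn
        _ = f t / t := (div_eq_mul_inv (f t) t).symm
    have hconst : ∫⁻ _t in I k, ENNReal.ofReal (c * 2^k) ∂volume =
        ENNReal.ofReal (c * 2^k) * ENNReal.ofReal ((2:ℝ)⁻¹^(k+1)) := by
      rw [setLIntegral_const]
      congr 1
      rw [hIdef]
      simp only []
      rw [Real.volume_Ioo]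
      congr 1
      rw [pow_succ ((2:ℝ)⁻¹) k]
      ring
    have hval : ENNReal.ofReal (c * 2^k) * ENNReal.ofReal ((2:ℝ)⁻¹^(k+1)) =
        ENNReal.ofReal (c / 2) := by
      rw [← ENNReal.ofReal_mul (by positivity)]
      congr 1
      rw [inv_pow]
      field_simp
      rw [pow_succ]
    have h2 : ENNReal.ofReal c = 2 * ENNReal.ofReal (c / 2) := by
      rw [← ENNReal.ofReal_ofNat 2, ← ENNReal.ofReal_mul (by norm_num)]
      congr 1; ring
    calc ENNReal.ofReal c = 2 * ENNReal.ofReal (c / 2) := h2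
      _ = 2 * (ENNReal.ofReal (c * 2^k) * ENNReal.ofReal ((2:ℝ)⁻¹^(k+1))) := by rw [hval]
      _ = 2 * ∫⁻ _t in I k, ENNReal.ofReal (c * 2^k) ∂volume := by rw [hconst]
      _ ≤ 2 * ∫⁻ t in I k, ENNReal.ofReal (f t / t) ∂volume := by gcongr
  have h1 : ∑' k : ℕ, ENNReal.ofReal (f ((2:ℝ)⁻¹^(k+1))) ≤
      2 * ∑' k : ℕ, ∫⁻ t in I k, ENNReal.ofReal (f t / t) ∂volume := by
    rw [← ENNReal.tsum_mul_left]
    exact ENNReal.tsum_le_tsum key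
  have h2 : ∑' k : ℕ, ∫⁻ t in I k, ENNReal.ofReal (f t / t) ∂volume =
      ∫⁻ t in ⋃ k, I k, ENNReal.ofReal (f t / t) ∂volume :=
    (lintegral_iUnion hImeas hIdisj _).symm
  have h3 : (⋃ k, I k) ⊆ Ioo (0:ℝ) 1 := by
    refine iUnion_subset fun k => ?_
    intro t ht
    simp only [hIdef, mem_Ioo] at ht ⊢
    constructor
    · exact lt_trans (by positivity) ht.1
    · exact lt_of_lt_of_le ht.2 (hpow_le (Nat.zero_le k))
  refine ne_of_lt (lt_of_le_of_lt h1 ?_)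
  rw [h2]
  calc 2 * ∫⁻ t in ⋃ k, I k, ENNReal.ofReal (f t / t) ∂volume ≤
      2 * ∫⁻ t in Ioo (0:ℝ) 1, ENNReal.ofReal (f t / t) ∂volume := by
        gcongr
    _ < ⊤ := ENNReal.mul_lt_top (by norm_num) hf

lemma sqrt_pow_aux (x : ℝ) (hx : 0 ≤ x) : ∀ m : ℕ, Real.sqrt (x ^ m) = (Real.sqrt x) ^ m := by
  intro m
  induction m with
  | zero => simp
  | succ m ih => rw [pow_succ, pow_succ, Real.sqrt_mul (by positivity), ih]

lemma sqrt_sum : ∑' k : ℕ, ENNReal.ofReal (Real.sqrt ((2:ℝ)⁻¹^(k+1))) ≠ ⊤ := by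
  have h1 : ∀ k : ℕ, ENNReal.ofReal (Real.sqrt ((2:ℝ)⁻¹^(k+1))) ≤
      (ENNReal.ofReal (Real.sqrt 2⁻¹))^k := by
    intro k
    rw [sqrt_pow_aux _ (by norm_num), ENNReal.ofReal_pow (Real.sqrt_nonneg _)]
    exact pow_le_pow_of_le_one zero_le
      (by rw [ENNReal.ofReal_le_one]; exact Real.sqrt_le_one.mpr (by norm_num)) (by omega)
  have h2 : ENNReal.ofReal (Real.sqrt 2⁻¹) < 1 := by
    rw [ENNReal.ofReal_lt_one]
    have : Real.sqrt 2⁻¹ < Real.sqrt 1 := Real.sqrt_lt_sqrt (by norm_num) (by norm_num)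
    simpa using this
  refine ne_of_lt (lt_of_le_of_lt (ENNReal.tsum_le_tsum h1) ?_)
  rw [ENNReal.tsum_geometric]
  rw [ENNReal.inv_lt_top]
  exact tsub_pos_of_lt h2

lemma ball_pos_ae {n : ℕ} (μ : Measure (EuclideanSpace ℝ (Fin n))) :
    ∀ᵐ x ∂μ, ∀ r : ℝ, 0 < r → 0 < μ (closedBall x r) := by
  set N' : Set (EuclideanSpace ℝ (Fin n)) := {x | ∃ r, 0 < r ∧ μ (closedBall x r) = 0} with hN
  have hnull : μ N' = 0 := by
    apply measure_null_of_locally_null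
    rintro x ⟨r, hr, h0⟩
    refine ⟨ball x r, mem_nhdsWithin_of_mem_nhds (ball_mem_nhds x hr), ?_⟩
    exact le_antisymm ((measure_mono ball_subset_closedBall).trans h0.le) zero_le
  rw [ae_iff]
  refine measure_mono_null ?_ hnull
  intro x hx
  simp only [mem_setOf_eq, not_forall] at hx
  obtain ⟨r, hr, h0⟩ := hx
  exact ⟨r, hr, by simpa using h0⟩

end Aux

/-- Theorem (lower density, half-spaces): if `f : (0,1) → ℝ` is increasing with
`∫₀¹ f(t)/t dt < ∞` and `μ` is a Borel measure on `ℝⁿ` finite on bounded sets, then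
for any fixed unit vector `θ`, for `μ`-a.e. `x`,
`liminf_{r↓0} μ(B(x,r) \ H(x,θ)) / (f(r)·μ(B(x,r))) ≥ 1`. -/
theorem stmt_4 (n : ℕ) (f : ℝ → ℝ)
    (hmono : MonotoneOn f (Ioo (0:ℝ) 1))
    (hf : (∫⁻ t in Ioo (0:ℝ) 1, ENNReal.ofReal (f t / t)) < ⊤)
    (μ : Measure (EuclideanSpace ℝ (Fin n)))
    (hfin : ∀ s : Set (EuclideanSpace ℝ (Fin n)), Bornology.IsBounded s → μ s < ⊤)
    (θ : EuclideanSpace ℝ (Fin n)) (hθ : ‖θ‖ = 1) :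
    ∀ᵐ x ∂μ, 1 ≤ liminf
      (fun r : ℝ => μ (closedBall x r \ {y | 0 < ⟪y - x, θ⟫}) /
        (ENNReal.ofReal (f r) * μ (closedBall x r)))
      (𝓝[>] 0) := by
  rcases Nat.eq_zero_or_pos n with hn0 | hn
  · exfalso
    subst hn0
    have hz : θ = 0 := Subsingleton.elim θ 0
    rw [hz, norm_zero] at hθ
    norm_num at hθ
  set f' : ℝ → ℝ := fun t => max (f t) (Real.sqrt t) with hf'def
  have hsqrtmono : Monotone Real.sqrt := fun a b hab => Real.sqrt_le_sqrt hab
  have hmono' : MonotoneOn f' (Ioo (0:ℝ) 1) := hmono.max (hsqrtmono.monotoneOn _)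
  have hf'pos : ∀ t ∈ Ioo (0:ℝ) 1, 0 < f' t := fun t ht =>
    lt_of_lt_of_le (Real.sqrt_pos.mpr ht.1) (le_max_right _ _)
  have hfle : ∀ t : ℝ, ENNReal.ofReal (f t) ≤ ENNReal.ofReal (f' t) := fun t =>
    ENNReal.ofReal_le_ofReal (le_max_left _ _)
  have hsum : ∑' k : ℕ, ENNReal.ofReal (f' ((2:ℝ)⁻¹^(k+1))) ≠ ⊤ := by
    have hb : ∀ k : ℕ, ENNReal.ofReal (f' ((2:ℝ)⁻¹^(k+1))) ≤
        ENNReal.ofReal (f ((2:ℝ)⁻¹^(k+1))) +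
          ENNReal.ofReal (Real.sqrt ((2:ℝ)⁻¹^(k+1))) := by
      intro k
      rcases le_total (f ((2:ℝ)⁻¹^(k+1))) (Real.sqrt ((2:ℝ)⁻¹^(k+1))) with h | h
      · rw [hf'def]; simp only [max_eq_right h]; exact le_add_self
      · rw [hf'def]; simp only [max_eq_left h]; exact le_self_add
    refine ne_of_lt (lt_of_le_of_lt (ENNReal.tsum_le_tsum hb) ?_)
    rw [ENNReal.tsum_add]
    exact ENNReal.add_lt_top.mpr ⟨(sum_ofReal_f f hmono hf).lt_top, sqrt_sum.lt_top⟩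
  set C : ℝ≥0∞ := 2 * ((6*n+3 : ℕ) : ℝ≥0∞)^n with hCdef
  have hCne : C ≠ ⊤ := by
    rw [hCdef]
    exact ENNReal.mul_ne_top (by norm_num)
      (ENNReal.pow_ne_top (ENNReal.natCast_ne_top _))
  have main : ∀ R : ℕ, ∀ᵐ x ∂μ, x ∈ closedBall (0:EuclideanSpace ℝ (Fin n)) (R:ℝ) →
      ∀ᶠ k : ℕ in atTop, ¬ ∃ r ∈ Icc ((2:ℝ)⁻¹^(k+2)) ((2:ℝ)⁻¹^(k+1)),
        μ (closedBall x r \ {y | 0 < ⟪y - x, θ⟫}) <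
          ENNReal.ofReal (f' r) * μ (closedBall x r) := by
    intro R
    set bad : ℕ → Set (EuclideanSpace ℝ (Fin n)) := fun k =>
      {x | x ∈ closedBall (0:EuclideanSpace ℝ (Fin n)) (R:ℝ) ∧
        ∃ r ∈ Icc ((2:ℝ)⁻¹^(k+2)) ((2:ℝ)⁻¹^(k+1)),
          μ (closedBall x r \ {y | 0 < ⟪y - x, θ⟫}) <
            ENNReal.ofReal (f' r) * μ (closedBall x r)} with hbaddef
    have hbound : ∀ k : ℕ, μ (bad k) ≤
        (C * μ (closedBall 0 (R+1))) * ENNReal.ofReal (f' ((2:ℝ)⁻¹^(k+1))) := by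
      intro k
      have h := scale_lemma hn μ θ f' hmono' R (k+1) (by omega)
      calc μ (bad k) ≤ 2 * ((6*n+3 : ℕ) : ℝ≥0∞)^n * ENNReal.ofReal (f' ((2:ℝ)⁻¹^(k+1))) *
            μ (closedBall 0 (R+1)) := h
        _ = (C * μ (closedBall 0 (R+1))) * ENNReal.ofReal (f' ((2:ℝ)⁻¹^(k+1))) := by
            rw [hCdef]; ring
    have hBC : ∑' k : ℕ, μ (bad k) ≠ ⊤ := by
      refine ne_of_lt (lt_of_le_of_lt (ENNReal.tsum_le_tsum hbound) ?_)
      rw [ENNReal.tsum_mul_left]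
      refine ENNReal.mul_lt_top ?_ hsum.lt_top
      exact ENNReal.mul_lt_top hCne.lt_top (hfin _ isBounded_closedBall)
    filter_upwards [ae_eventually_notMem hBC] with x hx hxR
    filter_upwards [hx] with k hk
    exact fun hex => hk ⟨hxR, hex⟩
  have hpos := ball_pos_ae μ
  have main' : ∀ᵐ x ∂μ, ∀ R : ℕ, x ∈ closedBall (0:EuclideanSpace ℝ (Fin n)) (R:ℝ) →
      ∀ᶠ k : ℕ in atTop, ¬ ∃ r ∈ Icc ((2:ℝ)⁻¹^(k+2)) ((2:ℝ)⁻¹^(k+1)),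
        μ (closedBall x r \ {y | 0 < ⟪y - x, θ⟫}) <
          ENNReal.ofReal (f' r) * μ (closedBall x r) := ae_all_iff.mpr main
  filter_upwards [main', hpos] with x hx hxpos
  obtain ⟨R, hR⟩ := exists_nat_ge ‖x‖
  have hxR : x ∈ closedBall (0:EuclideanSpace ℝ (Fin n)) (R:ℝ) :=
    mem_closedBall_zero_iff.mpr hR
  obtain ⟨K, hK⟩ := eventually_atTop.mp (hx R hxR)
  set δ : ℝ := (2:ℝ)⁻¹^(K+2) with hδdef
  have hδpos : 0 < δ := by positivity
  have hzpow : ∀ j : ℕ, (2:ℝ)⁻¹^j = (2:ℝ)^(-(j:ℤ)) := fun j => by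
    rw [inv_pow, ← zpow_natCast, ← zpow_neg]
  apply Filter.le_liminf_of_le (by isBoundedDefault)
  filter_upwards [Ioo_mem_nhdsGT_of_mem (show (0:ℝ) ∈ Ico (0:ℝ) δ from ⟨le_refl 0, hδpos⟩)]
    with r hr
  obtain ⟨m, hm⟩ := exists_mem_Ioc_zpow (K := ℝ) hr.1 one_lt_two
  have hmlt : m < -(K+2 : ℤ) := by
    have h1 : (2:ℝ)^m < (2:ℝ)^(-(K+2:ℕ):ℤ) := by
      rw [← hzpow]
      exact lt_trans hm.1 hr.2
    have := (zpow_lt_zpow_iff_right₀ (one_lt_two (α := ℝ))).mp h1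
    omega
  set k : ℕ := (-m - 2).toNat with hkdef
  have hk' : (k:ℤ) = -m - 2 := Int.toNat_of_nonneg (by omega)
  have hkK : K ≤ k := by omega
  have e1 : (2:ℝ)⁻¹^(k+2) = (2:ℝ)^m := by
    rw [hzpow]; congr 1; push_cast; omega
  have e2 : (2:ℝ)⁻¹^(k+1) = (2:ℝ)^(m+1) := by
    rw [hzpow]; congr 1; push_cast; omega
  have hrIcc : r ∈ Icc ((2:ℝ)⁻¹^(k+2)) ((2:ℝ)⁻¹^(k+1)) := by
    rw [e1, e2]
    exact ⟨hm.1.le, hm.2⟩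
  have hnotbad := hK k hkK
  push_neg at hnotbad
  have hden' := hnotbad r hrIcc
  have hr1 : r < 1 := lt_trans hr.2 (by
    rw [hδdef]
    calc (2:ℝ)⁻¹^(K+2) ≤ (2:ℝ)⁻¹^1 := pow_le_pow_of_le_one (by norm_num) (by norm_num) (by omega)
      _ < 1 := by norm_num)
  have hf'r : 0 < f' r := hf'pos r ⟨hr.1, hr1⟩
  have hden0 : ENNReal.ofReal (f' r) * μ (closedBall x r) ≠ 0 :=
    mul_ne_zero ((ENNReal.ofReal_pos.mpr hf'r).ne') (hxpos r hr.1).ne'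
  have hdentop : ENNReal.ofReal (f' r) * μ (closedBall x r) ≠ ⊤ :=
    ENNReal.mul_ne_top ENNReal.ofReal_ne_top (hfin _ isBounded_closedBall).ne
  calc (1:ℝ≥0∞) ≤ μ (closedBall x r \ {y | 0 < ⟪y - x, θ⟫}) /
        (ENNReal.ofReal (f' r) * μ (closedBall x r)) :=
      (ENNReal.le_div_iff_mul_le (Or.inl hden0) (Or.inl hdentop)).mpr
        (by rw [one_mul]; exact hden')
    _ ≤ μ (closedBall x r \ {y | 0 < ⟪y - x, θ⟫}) /
        (ENNReal.ofReal (f r) * μ (closedBall x r)) :=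
      ENNReal.div_le_div_left (mul_le_mul_left (hfle r) _) _
end

section
/- Let f : (0,1) → ℝ be increasing with ∫₀¹ f(t)/t dt < ∞, let μ be a Borel measure on ℝⁿ finite on bounded sets, and let 0 < α ≤ 1. Then for μ-almost every x ∈ ℝⁿ, liminf_{r↓0} inf_{θ ∈ S^{n-1}} μ(B(x,r) \ H(x,θ,α)) / (f(r)·μ(B(x,r))) ≥ 1. -/
open Set MeasureTheory Metric Filter
open scoped ENNReal RealInnerProductSpace Topology

section cone
variable {n : ℕ}
local notation "X" => EuclideanSpace ℝ (Fin n)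

lemma cone_mono {x θ θ' y : X} {a : ℝ} (h : dist θ θ' < a/2)
    (hy : a * ‖y - x‖ < ⟪y - x, θ⟫) : (a/2) * ‖y - x‖ < ⟪y - x, θ'⟫ := by
  have h1 : ⟪y - x, θ - θ'⟫ ≤ ‖y - x‖ * ‖θ - θ'‖ := real_inner_le_norm _ _
  have h2 : ‖θ - θ'‖ < a/2 := by rwa [← dist_eq_norm]
  have h3 : ⟪y - x, θ'⟫ = ⟪y - x, θ⟫ - ⟪y - x, θ - θ'⟫ := by
    rw [inner_sub_right]; ring
  nlinarith [norm_nonneg (y - x), real_inner_le_norm (y-x) θ]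

lemma cone_height {x θ y : X} {a : ℝ} (ha : 0 ≤ a)
    (hy : a * ‖y - x‖ < ⟪y - x, θ⟫) : ⟪x, θ⟫ < ⟪y, θ⟫ := by
  have := mul_nonneg ha (norm_nonneg (y - x))
  have h3 : ⟪y - x, θ⟫ = ⟪y, θ⟫ - ⟪x, θ⟫ := by rw [inner_sub_left]
  linarith
end cone
section core
variable {n : ℕ} (μ : Measure (EuclideanSpace ℝ (Fin n)))
local notation "X" => EuclideanSpace ℝ (Fin n)

/-- helper: measure of increasing union bounded -/
lemma meas_union_le {s : ℕ → Set X} (hmono : Monotone s) {c : ℝ≥0∞}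
    (h : ∀ k, μ (s k) ≤ c) : μ (⋃ k, s k) ≤ c := by
  rw [hmono.measure_iUnion]; exact iSup_le h

/-- Core lemma: local bad-set bound. -/
lemma lemB (θ z : X) {a ρ : ℝ} (ha : 0 ≤ a) (hρ : 0 < ρ) {lam : ℝ≥0∞} :
    μ ({x : X | μ (closedBall x ρ \ {y | a * ‖y - x‖ < ⟪y - x, θ⟫}) < lam * μ (closedBall x (2*ρ))}
        ∩ closedBall z (ρ/4)) ≤ 2 * lam * μ (closedBall z (3*ρ)) := by
  set E' : Set X := {x : X | μ (closedBall x ρ \ {y | a * ‖y - x‖ < ⟪y - x, θ⟫}) <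
      lam * μ (closedBall x (2*ρ))} ∩ closedBall z (ρ/4) with hE'
  set ε : ℝ≥0∞ := lam * μ (closedBall z (3*ρ)) with hε
  set h : X → ℝ := fun y => ⟪y, θ⟫ with hh
  -- key pointwise fact
  have hK : ∀ x ∈ E', μ {y ∈ E' | h y ≤ h x} < ε := by
    intro x hx
    obtain ⟨hxE, hxz⟩ := hx
    have hsub : {y ∈ E' | h y ≤ h x} ⊆ closedBall x ρ \ {y | a * ‖y - x‖ < ⟪y - x, θ⟫} := by
      rintro y ⟨⟨-, hyz⟩, hyx⟩
      constructor
      · have : dist y x ≤ dist y z + dist x z := dist_triangle_right _ _ _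
        have h1 : dist y z ≤ ρ/4 := mem_closedBall.1 hyz
        have h2 : dist x z ≤ ρ/4 := mem_closedBall.1 hxz
        exact mem_closedBall.2 (by linarith)
      · intro hy
        exact absurd hyx (not_le.2 (cone_height ha hy))
    calc μ {y ∈ E' | h y ≤ h x} ≤ μ (closedBall x ρ \ {y | a * ‖y - x‖ < ⟪y - x, θ⟫}) :=
          measure_mono hsub
      _ < lam * μ (closedBall x (2*ρ)) := hxE
      _ ≤ ε := by
          rw [hε]
          refine mul_le_mul_right (measure_mono (fun w hw => ?_)) lam
          have h1 : dist w x ≤ 2*ρ := mem_closedBall.1 hw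
          have h2 : dist x z ≤ ρ/4 := mem_closedBall.1 hxz
          have : dist w z ≤ dist w x + dist x z := dist_triangle _ _ _
          exact mem_closedBall.2 (by linarith)
  rcases eq_empty_or_nonempty E' with hE | hne
  · rw [hE]; simp
  obtain ⟨x₀, hx₀⟩ := hne
  rcases eq_or_ne (μ E') 0 with hm | hm
  · rw [hm]; exact zero_le
  set S : Set ℝ := {t | μ {y ∈ E' | t < h y} = 0} with hS
  have hSup : ∀ t ∈ S, ∀ t', t ≤ t' → t' ∈ S := by
    intro t ht t' htt'
    refine measure_mono_null ?_ ht
    rintro y ⟨h1, h2⟩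
    exact ⟨h1, lt_of_le_of_lt htt' h2⟩
  have hbound : ∀ y ∈ E', |h y - h z| ≤ (ρ/4) * ‖θ‖ := by
    intro y hy
    have heq : h y - h z = ⟪y - z, θ⟫ := by rw [hh]; simp [inner_sub_left]
    rw [heq]
    calc |⟪y - z, θ⟫| ≤ ‖y - z‖ * ‖θ‖ := abs_real_inner_le_norm _ _
      _ ≤ (ρ/4) * ‖θ‖ := by
          refine mul_le_mul_of_nonneg_right ?_ (norm_nonneg θ)
          rw [← dist_eq_norm]; exact mem_closedBall.1 hy.2
  have hSne : (h z + (ρ/4) * ‖θ‖) ∈ S := by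
    have hemp : {y ∈ E' | h z + (ρ/4) * ‖θ‖ < h y} = ∅ := by
      ext y; simp only [mem_setOf_eq, mem_empty_iff_false, iff_false, not_and, not_lt]
      intro hy
      have := abs_le.1 (hbound y hy)
      linarith [this.2]
    show μ _ = 0
    rw [hemp]; exact measure_empty
  have hSbd : BddBelow S := by
    refine ⟨h z - (ρ/4) * ‖θ‖ - 1, fun t ht => ?_⟩
    by_contra hlt
    push_neg at hlt
    apply hm
    refine measure_mono_null (fun y hy => ?_) ht
    have := (abs_le.1 (hbound y hy)).1
    exact ⟨hy, by linarith⟩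
  set s := sInf S with hs
  have ha' : μ {y ∈ E' | s < h y} = 0 := by
    have hsub : {y ∈ E' | s < h y} ⊆ ⋃ k : ℕ, {y ∈ E' | s + 1/(k+1) < h y} := by
      intro y hy
      obtain ⟨k, hk⟩ := exists_nat_one_div_lt (sub_pos.2 hy.2)
      exact mem_iUnion.2 ⟨k, hy.1, by linarith⟩
    refine measure_mono_null hsub (measure_iUnion_null fun k => ?_)
    have h1 : s < s + 1/(k+1) := lt_add_of_pos_right _ (by positivity)
    obtain ⟨t, htS, htlt⟩ := (csInf_lt_iff hSbd ⟨_, hSne⟩).1 h1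
    exact hSup t htS _ htlt.le
  have hd' : μ {y ∈ E' | h y < s} ≤ ε := by
    have hmono : Monotone (fun k : ℕ => {y ∈ E' | h y ≤ s - 1/(k+1)}) := by
      intro k l hkl y hy
      refine ⟨hy.1, le_trans hy.2 ?_⟩
      have h2 : (1:ℝ)/(l+1) ≤ 1/(k+1) := by
        apply one_div_le_one_div_of_le <;> [positivity; exact_mod_cast by omega]
      linarith
    have hsub : {y ∈ E' | h y < s} ⊆ ⋃ k : ℕ, {y ∈ E' | h y ≤ s - 1/(k+1)} := by
      intro y hy
      obtain ⟨k, hk⟩ := exists_nat_one_div_lt (sub_pos.2 hy.2)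
      exact mem_iUnion.2 ⟨k, hy.1, by linarith⟩
    refine le_trans (measure_mono hsub) (meas_union_le μ hmono fun k => ?_)
    have hkpos : (0:ℝ) < 1/(k+1) := by positivity
    have h1 : s - 1/(k+1) ∉ S := by
      intro hmem
      have := csInf_le hSbd hmem
      rw [← hs] at this
      linarith
    have h2 : {y ∈ E' | s - 1/(k+1) < h y}.Nonempty := by
      rw [nonempty_iff_ne_empty]
      intro hemp
      exact h1 (show μ _ = 0 by rw [hemp]; exact measure_empty)
    obtain ⟨x, hx2⟩ := h2
    refine le_trans (measure_mono fun y hy => ?_) (hK x hx2.1).le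
    exact ⟨hy.1, le_of_lt (lt_of_le_of_lt hy.2 hx2.2)⟩
  have he' : μ {y ∈ E' | h y = s} ≤ ε := by
    rcases eq_empty_or_nonempty {y ∈ E' | h y = s} with hemp | hne2
    · rw [hemp]; simp
    obtain ⟨x, hx2⟩ := hne2
    refine le_trans (measure_mono fun y hy => ?_) (hK x hx2.1).le
    exact ⟨hy.1, by rw [hx2.2, hy.2]⟩
  have hcover : E' ⊆ {y ∈ E' | h y < s} ∪ {y ∈ E' | h y = s} ∪ {y ∈ E' | s < h y} := by
    intro y hy
    rcases lt_trichotomy (h y) s with h1 | h1 | h1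
    · exact Or.inl (Or.inl ⟨hy, h1⟩)
    · exact Or.inl (Or.inr ⟨hy, h1⟩)
    · exact Or.inr ⟨hy, h1⟩
  calc μ E' ≤ μ ({y ∈ E' | h y < s} ∪ {y ∈ E' | h y = s} ∪ {y ∈ E' | s < h y}) :=
        measure_mono hcover
    _ ≤ μ ({y ∈ E' | h y < s} ∪ {y ∈ E' | h y = s}) + μ {y ∈ E' | s < h y} := measure_union_le _ _
    _ ≤ (μ {y ∈ E' | h y < s} + μ {y ∈ E' | h y = s}) + 0 := by
        rw [ha']; exact add_le_add_left (measure_union_le _ _) 0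
    _ ≤ (ε + ε) + 0 := add_le_add_left (add_le_add hd' he') 0
    _ = 2 * lam * μ (closedBall z (3*ρ)) := by rw [add_zero, hε]; ring
end core
section cover
variable {n : ℕ} (μ : Measure (EuclideanSpace ℝ (Fin n)))
local notation "X" => EuclideanSpace ℝ (Fin n)

lemma coord_le_norm (v : X) (i : Fin n) : |v i| ≤ ‖v‖ := by
  rw [EuclideanSpace.norm_eq, ← Real.sqrt_sq_eq_abs]
  apply Real.sqrt_le_sqrt
  exact Finset.single_le_sum (f := fun j => ‖v j‖^2) (fun j _ => by positivity)
    (Finset.mem_univ i) |>.trans_eq' (by rw [Real.norm_eq_abs, sq_abs])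

set_option maxHeartbeats 1000000 in
lemma cover (hn : 1 ≤ n) {ρ R : ℝ} (hρ : 0 < ρ) (hρ1 : ρ ≤ 1) (hR : 0 ≤ R) :
    ∃ (B : Finset (Fin n → ℤ)) (z : (Fin n → ℤ) → EuclideanSpace ℝ (Fin n)),
      (closedBall (0:X) R ⊆ ⋃ m ∈ B, closedBall (z m) (ρ/4)) ∧
      ∑ m ∈ B, μ (closedBall (z m) (3*ρ)) ≤
        ((12*n+1)^n : ℕ) * μ (closedBall (0:X) (n*R + n + 3)) := by
  classical
  have hn' : (1:ℝ) ≤ n := by exact_mod_cast hn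
  set s : ℝ := ρ/(2*n) with hsdef
  have hs0 : 0 < s := by positivity
  have hsρ : s * (2*n) = ρ := by rw [hsdef]; field_simp
  have h2s : 2*s ≤ ρ := by nlinarith
  set M : ℤ := ⌈R/s⌉ + 1 with hMdef
  have hM0 : 0 ≤ M := by
    have : (0:ℤ) ≤ ⌈R/s⌉ := Int.ceil_nonneg (by positivity)
    omega
  have hMR : R/s + 1 ≤ (M:ℝ) := by
    have := Int.le_ceil (R/s)
    push_cast [hMdef]; linarith
  have hMR' : (M:ℝ) ≤ R/s + 2 := by
    have := Int.ceil_lt_add_one (R/s)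
    push_cast [hMdef]; linarith
  set z : (Fin n → ℤ) → X := fun m => WithLp.toLp 2 (fun i => s * (m i : ℝ)) with hzdef
  have hz_apply : ∀ m i, z m i = s * (m i : ℝ) := fun m i => rfl
  set B : Finset (Fin n → ℤ) := Finset.Icc (fun _ => -M) (fun _ => M) with hBdef
  refine ⟨B, z, ?_, ?_⟩
  · -- covering
    intro y hy
    have hynorm : ‖y‖ ≤ R := by rwa [mem_closedBall_zero_iff] at hy
    refine Set.mem_iUnion₂.2 ⟨fun i => round (y i / s), ?_, ?_⟩
    · rw [hBdef, Finset.mem_Icc]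
      constructor <;> intro i <;>
      · show _
        have h1 : |y i| ≤ R := (coord_le_norm y i).trans hynorm
        have h2 : |y i / s - round (y i / s)| ≤ 1/2 := abs_sub_round _
        have h3 : |y i / s| ≤ R / s := by
          rw [abs_div, abs_of_pos hs0]; gcongr
        have h4 : |(round (y i / s) : ℝ)| ≤ (M:ℝ) := by
          have ha := abs_le.1 h2; have hb := abs_le.1 h3
          rw [abs_le]; constructor <;> linarith [ha.1, ha.2, hb.1, hb.2]
        have h5 : |round (y i / s)| ≤ M := by
          exact_mod_cast (by push_cast; exact h4 : ((|round (y i / s)|:ℤ):ℝ) ≤ (M:ℝ))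
        have := abs_le.1 h5
        first
        | exact (show -M ≤ round (y i / s) from this.1)
        | exact (show round (y i / s) ≤ M from this.2)
    · have hcoord : ∀ i, |y i - s * ((round (y i / s) : ℤ) : ℝ)| ≤ s/2 := by
        intro i
        have h1 : |y i / s - round (y i / s)| ≤ 1/2 := abs_sub_round _
        have heq : y i - s * (round (y i / s) : ℝ) = s * (y i / s - round (y i / s)) := by
          field_simp
        rw [heq, abs_mul, abs_of_pos hs0]
        nlinarith
      rw [mem_closedBall, dist_eq_norm, EuclideanSpace.norm_eq]
      have hsum : ∑ i, ‖(y - z (fun i => round (y i / s))) i‖^2 ≤ n * (s/2)^2 := by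
        calc ∑ i, ‖(y - z (fun i => round (y i / s))) i‖^2 ≤ ∑ _i : Fin n, (s/2)^2 := by
              refine Finset.sum_le_sum fun i _ => ?_
              have heq : (y - z (fun i => round (y i / s))) i = y i - s * (round (y i / s) : ℝ) := by
                simp [hz_apply]
              rw [heq, Real.norm_eq_abs]
              exact pow_le_pow_left₀ (abs_nonneg _) (hcoord i) 2
          _ = n * (s/2)^2 := by rw [Finset.sum_const, Finset.card_univ, Fintype.card_fin]; ring
      have key : (n:ℝ) * (s/2)^2 ≤ (n:ℝ)^2 * (s/2)^2 := by
        have h := mul_nonneg (mul_nonneg (by linarith : (0:ℝ) ≤ (n:ℝ)-1)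
          (by positivity : (0:ℝ) ≤ (n:ℝ))) (sq_nonneg (s/2))
        nlinarith
      calc Real.sqrt (∑ i, ‖(y - z (fun i => round (y i / s))) i‖^2)
            ≤ Real.sqrt ((n:ℝ)^2 * (s/2)^2) := by
            apply Real.sqrt_le_sqrt; linarith [hsum]
        _ = n * (s/2) := by rw [← mul_pow, Real.sqrt_sq (by positivity)]
        _ = ρ/4 := by rw [← hsρ]; ring
  · -- overlap sum bound
    set C : ℕ := (12*n+1)^n with hCdef
    set R' : ℝ := n*R + n + 3 with hR'def
    have hzsub : ∀ m ∈ B, closedBall (z m) (3*ρ) ⊆ closedBall (0:X) R' := by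
      intro m hm
      rw [hBdef, Finset.mem_Icc] at hm
      have hmabs : ∀ i, |(m i : ℝ)| ≤ (M:ℝ) := by
        intro i
        have h1 : -M ≤ m i := hm.1 i
        have h2 : m i ≤ M := hm.2 i
        rw [abs_le]; constructor <;> [exact_mod_cast h1; exact_mod_cast h2]
      have hznorm : ‖z m‖ ≤ n * (s * M) := by
        rw [EuclideanSpace.norm_eq]
        have hsum : ∑ i, ‖z m i‖^2 ≤ n * (s*M)^2 := by
          calc ∑ i, ‖z m i‖^2 ≤ ∑ _i : Fin n, (s*M)^2 := by
                refine Finset.sum_le_sum fun i _ => ?_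
                rw [hz_apply, Real.norm_eq_abs]
                refine pow_le_pow_left₀ (abs_nonneg _) ?_ 2
                rw [abs_mul, abs_of_pos hs0]
                exact mul_le_mul_of_nonneg_left (hmabs i) hs0.le
            _ = n * (s*M)^2 := by rw [Finset.sum_const, Finset.card_univ, Fintype.card_fin]; ring
        have key : (n:ℝ) * (s*M)^2 ≤ (n:ℝ)^2 * (s*M)^2 := by
          have h := mul_nonneg (mul_nonneg (by linarith : (0:ℝ) ≤ (n:ℝ)-1)
            (by positivity : (0:ℝ) ≤ (n:ℝ))) (sq_nonneg (s*(M:ℝ)))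
          nlinarith
        calc Real.sqrt (∑ i, ‖z m i‖^2) ≤ Real.sqrt ((n:ℝ)^2 * (s*M)^2) := by
              apply Real.sqrt_le_sqrt; linarith [hsum]
          _ = n * (s*M) := by rw [← mul_pow, Real.sqrt_sq (by positivity)]
      refine closedBall_subset_closedBall' ?_
      have hsM : s * M ≤ R + 2*s := by
        have h1 := mul_le_mul_of_nonneg_left hMR' hs0.le
        have h2 : s*(R/s+2) = R + 2*s := by field_simp
        linarith
      have hd : dist (z m) 0 ≤ n * (R + 2*s) := by
        rw [dist_zero_right]
        refine hznorm.trans ?_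
        have h0 : (0:ℝ) ≤ n := by positivity
        nlinarith
      have hexp : (n:ℝ)*(R+2*s) = n*R + ρ := by rw [← hsρ]; ring
      rw [hR'def]
      linarith [hd, hρ1, hn', hρ.le]
    -- pointwise count
    have hcount : ∀ y : X, ((B.filter (fun m => y ∈ closedBall (z m) (3*ρ))).card : ℝ≥0∞)
        ≤ (C:ℝ≥0∞) := by
      intro y
      have hsubIcc : B.filter (fun m => y ∈ closedBall (z m) (3*ρ)) ⊆
          Finset.Icc (fun i => ⌈(y i - 3*ρ)/s⌉) (fun i => ⌊(y i + 3*ρ)/s⌋) := by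
        intro m hm
        rw [Finset.mem_filter] at hm
        obtain ⟨-, hmball⟩ := hm
        rw [mem_closedBall, dist_eq_norm] at hmball
        have hcoord : ∀ i, |y i - s * (m i:ℝ)| ≤ 3*ρ := by
          intro i
          have h := coord_le_norm (y - z m) i
          have heq : (y - z m) i = y i - s * (m i:ℝ) := by simp [hz_apply]
          rw [heq] at h
          exact h.trans hmball
        rw [Finset.mem_Icc]
        constructor <;> intro i
        · show (⌈(y i - 3*ρ)/s⌉ : ℤ) ≤ m i
          apply Int.ceil_le.2
          have := abs_le.1 (hcoord i)
          rw [div_le_iff₀ hs0]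
          push_cast
          linarith [this.1]
        · show m i ≤ (⌊(y i + 3*ρ)/s⌋ : ℤ)
          apply Int.le_floor.2
          have := abs_le.1 (hcoord i)
          rw [le_div_iff₀ hs0]
          push_cast
          linarith [this.2]
      have hcard : ((Finset.Icc (fun i => ⌈(y i - 3*ρ)/s⌉) (fun i => ⌊(y i + 3*ρ)/s⌋)).card) ≤ C := by
        rw [Pi.card_Icc]
        refine le_trans (Finset.prod_le_pow_card _ _ (12*n+1) fun i _ => ?_)
          (by rw [Finset.card_univ, Fintype.card_fin])
        rw [Int.card_Icc]
        have hle : (⌊(y i + 3*ρ)/s⌋ + 1 - ⌈(y i - 3*ρ)/s⌉ : ℤ) ≤ (12*(n:ℤ)+1) := by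
          have h1 : ((⌊(y i + 3*ρ)/s⌋ : ℤ) : ℝ) ≤ (y i + 3*ρ)/s := Int.floor_le _
          have h2 : (y i - 3*ρ)/s ≤ ((⌈(y i - 3*ρ)/s⌉ : ℤ) : ℝ) := Int.le_ceil _
          have h4 : (y i + 3*ρ)/s - (y i - 3*ρ)/s = 12*n := by
            rw [show (y i + 3*ρ)/s - (y i - 3*ρ)/s = 6*ρ/s by ring]
            rw [← hsρ]; field_simp; ring
          have : ((⌊(y i + 3*ρ)/s⌋ + 1 - ⌈(y i - 3*ρ)/s⌉ : ℤ) : ℝ) ≤ 12*(n:ℝ) + 1 := by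
            push_cast; linarith
          exact_mod_cast this
        omega
      calc ((B.filter (fun m => y ∈ closedBall (z m) (3*ρ))).card : ℝ≥0∞)
          ≤ ((Finset.Icc (fun i => ⌈(y i - 3*ρ)/s⌉) (fun i => ⌊(y i + 3*ρ)/s⌋)).card : ℝ≥0∞) := by
            exact_mod_cast Nat.cast_le.2 (Finset.card_le_card hsubIcc)
        _ ≤ (C:ℝ≥0∞) := Nat.cast_le.2 hcard
    calc ∑ m ∈ B, μ (closedBall (z m) (3*ρ))
        = ∑ m ∈ B, ∫⁻ y, (closedBall (z m) (3*ρ)).indicator 1 y ∂μ := by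
          refine Finset.sum_congr rfl fun m _ => ?_
          rw [lintegral_indicator_one measurableSet_closedBall]
      _ = ∫⁻ y, ∑ m ∈ B, (closedBall (z m) (3*ρ)).indicator 1 y ∂μ := by
          rw [lintegral_finset_sum]
          exact fun m _ => measurable_one.indicator measurableSet_closedBall
      _ ≤ ∫⁻ y, (C:ℝ≥0∞) * (closedBall (0:X) R').indicator 1 y ∂μ := by
          refine lintegral_mono fun y => ?_
          by_cases hy : y ∈ closedBall (0:X) R'
          · rw [Set.indicator_of_mem hy, Pi.one_apply, mul_one]
            calc ∑ m ∈ B, (closedBall (z m) (3*ρ)).indicator 1 y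
                = ∑ m ∈ B.filter (fun m => y ∈ closedBall (z m) (3*ρ)), 1 := by
                  rw [Finset.sum_filter]
                  refine Finset.sum_congr rfl fun m _ => ?_
                  by_cases hmy : y ∈ closedBall (z m) (3*ρ)
                  · rw [Set.indicator_of_mem hmy, if_pos hmy]; rfl
                  · rw [Set.indicator_of_notMem hmy, if_neg hmy]
              _ = ((B.filter (fun m => y ∈ closedBall (z m) (3*ρ))).card : ℝ≥0∞) := by
                  rw [Finset.sum_const, nsmul_eq_mul, mul_one]
              _ ≤ (C:ℝ≥0∞) := hcount y
          · rw [Set.indicator_of_notMem hy, mul_zero]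
            refine le_of_eq (Finset.sum_eq_zero fun m hm => ?_)
            rw [Set.indicator_of_notMem (fun hmem => hy (hzsub m hm hmem))]
      _ = (C:ℝ≥0∞) * μ (closedBall (0:X) R') := by
          rw [lintegral_const_mul _ (measurable_one.indicator measurableSet_closedBall),
            lintegral_indicator_one measurableSet_closedBall]
end cover
section summ

lemma rpos (k : ℕ) : (0:ℝ) < (2:ℝ)⁻¹^k := by positivity
lemma rlt1 (k : ℕ) : (2:ℝ)⁻¹^(k+1) < 1 := by
  apply pow_lt_one₀ (by norm_num) (by norm_num); omega
lemma rmono {k l : ℕ} (h : k ≤ l) : (2:ℝ)⁻¹^l ≤ (2:ℝ)⁻¹^k :=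
  pow_le_pow_of_le_one (by norm_num) (by norm_num) h

lemma sum_f_lt_top {f : ℝ → ℝ} (hmono : MonotoneOn f (Ioo (0:ℝ) 1))
    (hf : (∫⁻ t in Ioo (0:ℝ) 1, ENNReal.ofReal (f t / t)) < ⊤) :
    (∑' k : ℕ, ENNReal.ofReal (f ((2:ℝ)⁻¹^(k+3)))) ≠ ⊤ := by
  set r : ℕ → ℝ := fun k => (2:ℝ)⁻¹^k with hrdef
  set I : ℕ → Set ℝ := fun k => Ico (r (k+3)) (r (k+2)) with hIdef
  set c : ℕ → ℝ≥0∞ := fun k => ENNReal.ofReal (f (r (k+3)) / r (k+2)) with hcdef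
  have hrrel : ∀ k, r (k+1) * 2 = r k := by
    intro k; rw [hrdef]; simp only [pow_succ]; ring
  have hmemIoo : ∀ k, r (k+3) ∈ Ioo (0:ℝ) 1 := fun k => ⟨rpos _, rlt1 _⟩
  have hIsub : ∀ k, I k ⊆ Ioo (0:ℝ) 1 := by
    intro k t ht
    exact ⟨lt_of_lt_of_le (rpos _) ht.1, lt_trans ht.2 (rlt1 _)⟩
  -- pointwise bound on I k
  have hpt : ∀ k, ∀ t ∈ I k, c k ≤ ENNReal.ofReal (f t / t) := by
    intro k t ht
    rcases le_or_gt (f (r (k+3))) 0 with hneg | hpos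
    · rw [hcdef]
      simp only
      rw [ENNReal.ofReal_of_nonpos (div_nonpos_of_nonpos_of_nonneg hneg (rpos _).le)]
      exact zero_le
    · apply ENNReal.ofReal_le_ofReal
      have htIoo : t ∈ Ioo (0:ℝ) 1 := hIsub k ht
      have hft : f (r (k+3)) ≤ f t := hmono (hmemIoo k) htIoo ht.1
      exact div_le_div₀ (by linarith) hft htIoo.1 ht.2.le
  -- each term equals 2 * (c k * volume (I k))
  have hterm : ∀ k, ENNReal.ofReal (f (r (k+3))) = 2 * (c k * volume (I k)) := by
    intro k
    have hvol : volume (I k) = ENNReal.ofReal (r (k+3)) := by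
      rw [hIdef]; simp only [Real.volume_Ico]
      congr 1
      rw [← hrrel (k+2)]; ring
    rcases le_or_gt (f (r (k+3))) 0 with hneg | hpos
    · rw [ENNReal.ofReal_of_nonpos hneg, hcdef]
      simp only
      rw [ENNReal.ofReal_of_nonpos (div_nonpos_of_nonpos_of_nonneg hneg (rpos _).le)]
      simp
    · rw [hvol, hcdef]
      simp only
      rw [← ENNReal.ofReal_mul (div_nonneg hpos.le (rpos _).le)]
      rw [show (2:ℝ≥0∞) = ENNReal.ofReal 2 by simp]
      rw [← ENNReal.ofReal_mul (by norm_num)]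
      congr 1
      show f ((2:ℝ)⁻¹^(k+3)) = 2 * (f ((2:ℝ)⁻¹^(k+3)) / (2:ℝ)⁻¹^(k+2) * (2:ℝ)⁻¹^(k+3))
      have hpow : (2:ℝ)⁻¹^(k+2) = (2:ℝ)⁻¹^(k+3) * 2 := by ring
      rw [hpow]
      have h3 : (0:ℝ) < (2:ℝ)⁻¹^(k+3) := rpos _
      field_simp
  -- disjointness
  have hdisj : Pairwise (Function.onFun Disjoint I) := by
    intro k l hkl
    rcases hkl.lt_or_gt with h | h
    · refine Set.disjoint_left.2 fun t htk htl => ?_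
      have h1 : t < r (k+3) := lt_of_lt_of_le htl.2 (rmono (by omega))
      exact absurd htk.1 (not_le.2 h1)
    · refine Set.disjoint_left.2 fun t htk htl => ?_
      have h1 : t < r (l+3) := lt_of_lt_of_le htk.2 (rmono (by omega))
      exact absurd htl.1 (not_le.2 h1)
  have hImeas : ∀ k, MeasurableSet (I k) := fun k => measurableSet_Ico
  -- sum of integrals over I k bounded by the full integral
  have hsum_int : (∑' k, c k * volume (I k)) ≤ ∫⁻ t in Ioo (0:ℝ) 1, ENNReal.ofReal (f t / t) := by
    have h1 : ∀ k, c k * volume (I k) ≤ ∫⁻ t in I k, ENNReal.ofReal (f t / t) := by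
      intro k
      rw [← setLIntegral_const (I k) (c k)]
      refine lintegral_mono_ae ?_
      rw [ae_restrict_iff' (hImeas k)]
      exact ae_of_all _ (hpt k)
    calc (∑' k, c k * volume (I k)) ≤ ∑' k, ∫⁻ t in I k, ENNReal.ofReal (f t / t) :=
          ENNReal.tsum_le_tsum h1
      _ = ∫⁻ t in ⋃ k, I k, ENNReal.ofReal (f t / t) := by
          rw [Measure.restrict_iUnion hdisj hImeas, lintegral_sum_measure]
      _ ≤ ∫⁻ t in Ioo (0:ℝ) 1, ENNReal.ofReal (f t / t) :=
          lintegral_mono' (Measure.restrict_mono (Set.iUnion_subset hIsub) le_rfl) le_rfl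
  have : (∑' k : ℕ, ENNReal.ofReal (f (r (k+3)))) = 2 * ∑' k, c k * volume (I k) := by
    rw [← ENNReal.tsum_mul_left]
    exact tsum_congr hterm
  rw [hrdef] at this
  rw [this]
  exact ENNReal.mul_ne_top (by norm_num) (ne_top_of_le_ne_top hf.ne hsum_int)
end summ
section main
variable {n : ℕ}
local notation "X" => EuclideanSpace ℝ (Fin n)

lemma ae_ball_pos (μ : Measure (EuclideanSpace ℝ (Fin n)))
    (hfin : ∀ s : Set (EuclideanSpace ℝ (Fin n)), Bornology.IsBounded s → μ s < ⊤) :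
    ∀ᵐ x ∂μ, ∀ q : ℚ, 0 < q → μ (ball x (q:ℝ)) ≠ 0 := by
  have hnull : ∀ (q : ℚ) (N : ℕ),
      μ ({x : X | 0 < q ∧ μ (ball x (q:ℝ)) = 0} ∩ closedBall 0 N) = 0 := by
    intro q N
    rcases le_or_gt q 0 with hq | hq
    · have : {x : X | 0 < q ∧ μ (ball x (q:ℝ)) = 0} = ∅ := by
        ext x; simp only [mem_setOf_eq, mem_empty_iff_false, iff_false, not_and]
        intro h; exact absurd h (not_lt.2 hq)
      rw [this, Set.empty_inter]; exact measure_empty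
    have hq' : (0:ℝ) < q/2 := by positivity
    obtain ⟨t, htfin, htcov⟩ := (Metric.totallyBounded_iff).1
      (isCompact_closedBall (0:X) N).totallyBounded (q/2) hq'
    refine measure_mono_null (fun x hx => ?_) (((measure_biUnion_null_iff htfin.countable).2
      (fun c _ => ?_)) :
      μ (⋃ c ∈ t, ({x : X | 0 < q ∧ μ (ball x (q:ℝ)) = 0} ∩ ball c (q/2))) = 0)
    · obtain ⟨hx1, hx2⟩ := hx
      obtain ⟨c, hc, hxc⟩ := Set.mem_iUnion₂.1 (htcov hx2)
      exact Set.mem_iUnion₂.2 ⟨c, hc, hx1, hxc⟩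
    · rcases Set.eq_empty_or_nonempty
        ({x : X | 0 < q ∧ μ (ball x (q:ℝ)) = 0} ∩ ball c (q/2)) with hemp | hne
      · rw [hemp]; exact measure_empty
      obtain ⟨x₀, ⟨-, hx₀z⟩, hx₀c⟩ := hne
      refine measure_mono_null (fun w hw => ?_) hx₀z
      obtain ⟨⟨-, -⟩, hwc⟩ := hw
      have h1 : dist w c < q/2 := mem_ball.1 hwc
      have h2 : dist x₀ c < q/2 := mem_ball.1 hx₀c
      have := dist_triangle_right w x₀ c
      exact mem_ball.2 (by linarith)
  rw [ae_iff]
  refine measure_mono_null (fun x hx => ?_)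
    ((measure_iUnion_null fun q => measure_iUnion_null fun N =>  hnull q N) :
      μ (⋃ (q : ℚ) (N : ℕ), ({x : X | 0 < q ∧ μ (ball x (q:ℝ)) = 0} ∩ closedBall 0 N)) = 0)
  push_neg at hx
  obtain ⟨q, hq, hball⟩ := hx
  obtain ⟨N, hN⟩ := exists_nat_ge ‖x‖
  exact Set.mem_iUnion.2 ⟨q, Set.mem_iUnion.2 ⟨N, ⟨hq, hball⟩, mem_closedBall_zero_iff.2 hN⟩⟩

lemma badMeasure (μ : Measure (EuclideanSpace ℝ (Fin n))) (hn : 1 ≤ n) (j : X) {ρ : ℝ}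
    (hρ : 0 < ρ) (hρ1 : ρ ≤ 1) {a : ℝ} (ha : 0 ≤ a) (lam : ℝ≥0∞) (N : ℕ) :
    μ ({x : X | μ (closedBall x ρ \ {y | a * ‖y - x‖ < ⟪y - x, j⟫}) < lam * μ (closedBall x (2*ρ))}
        ∩ closedBall 0 N) ≤
      2 * lam * (((12*n+1)^n : ℕ) * μ (closedBall (0:X) (n*N + n + 3))) := by
  obtain ⟨B, z, hcov, hsum⟩ := cover μ hn hρ hρ1 (by positivity : (0:ℝ) ≤ (N:ℝ))
  set E : Set X := {x : X | μ (closedBall x ρ \ {y | a * ‖y - x‖ < ⟪y - x, j⟫}) <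
      lam * μ (closedBall x (2*ρ))} with hEdef
  calc μ (E ∩ closedBall 0 N) ≤ μ (⋃ m ∈ B, (E ∩ closedBall (z m) (ρ/4))) := by
        refine measure_mono fun x hx => ?_
        obtain ⟨m, hm, hxm⟩ := Set.mem_iUnion₂.1 (hcov hx.2)
        exact Set.mem_iUnion₂.2 ⟨m, hm, hx.1, hxm⟩
    _ ≤ ∑ m ∈ B, μ (E ∩ closedBall (z m) (ρ/4)) := measure_biUnion_finset_le _ _
    _ ≤ ∑ m ∈ B, 2 * lam * μ (closedBall (z m) (3*ρ)) := by
        refine Finset.sum_le_sum fun m _ => ?_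
        exact lemB μ j (z m) ha hρ
    _ = 2 * lam * ∑ m ∈ B, μ (closedBall (z m) (3*ρ)) := by rw [Finset.mul_sum]
    _ ≤ 2 * lam * (((12*n+1)^n : ℕ) * μ (closedBall (0:X) (n*N + n + 3))) :=
        mul_le_mul_right hsum _
end main

set_option maxHeartbeats 1000000 in
/-- Theorem (lower density, cones `H(x,θ,α)` uniformly in `θ`): if `f : (0,1) → ℝ`
is increasing with `∫₀¹ f(t)/t dt < ∞`, `μ` is a Borel measure on `ℝⁿ` finite on
bounded sets, and `0 < α ≤ 1`, then for `μ`-a.e. `x`,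
`liminf_{r↓0} inf_{θ ∈ S^{n-1}} μ(B(x,r) \ H(x,θ,α)) / (f(r)·μ(B(x,r))) ≥ 1`. -/
theorem stmt_5 (n : ℕ) (f : ℝ → ℝ)
    (hmono : MonotoneOn f (Ioo (0:ℝ) 1))
    (hf : (∫⁻ t in Ioo (0:ℝ) 1, ENNReal.ofReal (f t / t)) < ⊤)
    (μ : Measure (EuclideanSpace ℝ (Fin n)))
    (hfin : ∀ s : Set (EuclideanSpace ℝ (Fin n)), Bornology.IsBounded s → μ s < ⊤)
    (α : ℝ) (hα : 0 < α) (hα1 : α ≤ 1) :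
    ∀ᵐ x ∂μ, 1 ≤ liminf
      (fun r : ℝ => ⨅ θ ∈ {θ : EuclideanSpace ℝ (Fin n) | ‖θ‖ = 1},
        μ (closedBall x r \ {y | α * ‖y - x‖ < ⟪y - x, θ⟫}) /
          (ENNReal.ofReal (f r) * μ (closedBall x r)))
      (𝓝[>] 0) := by
  rcases Nat.eq_zero_or_pos n with hn0 | hn
  · -- trivial case n = 0 : the sphere is empty
    subst hn0
    refine ae_of_all _ fun x => ?_
    have hempty : {θ : EuclideanSpace ℝ (Fin 0) | ‖θ‖ = 1} = ∅ := by
      ext θ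
      simp only [mem_setOf_eq, mem_empty_iff_false, iff_false]
      rw [Subsingleton.elim θ 0]
      simp
    have hconst : ∀ r : ℝ, (⨅ θ ∈ {θ : EuclideanSpace ℝ (Fin 0) | ‖θ‖ = 1},
        μ (closedBall x r \ {y | α * ‖y - x‖ < ⟪y - x, θ⟫}) /
          (ENNReal.ofReal (f r) * μ (closedBall x r))) = ⊤ := by
      intro r; rw [hempty]; simp
    simp only [hconst]
    rw [Filter.liminf_const]
    exact le_top
  -- main case n ≥ 1
  classical
  obtain ⟨T, hTfin, hTcov⟩ := (Metric.totallyBounded_iff).1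
    (isCompact_sphere (0 : EuclideanSpace ℝ (Fin n)) 1).totallyBounded (α/2) (by positivity)
  set TF := hTfin.toFinset with hTFdef
  set lam : ℕ → ℝ≥0∞ := fun k => ENNReal.ofReal (f ((2:ℝ)⁻¹^(k+3))) with hlamdef
  have hlam_sum : (∑' k : ℕ, lam k) ≠ ⊤ := sum_f_lt_top hmono hf
  set CM : ℕ → ℝ≥0∞ := fun N =>
    (((12*n+1)^n : ℕ) : ℝ≥0∞) * μ (closedBall 0 ((n:ℝ)*N + n + 3)) with hCMdef
  have hCMfin : ∀ N, CM N ≠ ⊤ :=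
    fun N => ENNReal.mul_ne_top (ENNReal.natCast_ne_top _) (hfin _ isBounded_closedBall).ne
  set Ebad : EuclideanSpace ℝ (Fin n) → ℕ → Set (EuclideanSpace ℝ (Fin n)) := fun j k =>
    {x | μ (closedBall x ((2:ℝ)⁻¹^(k+4)) \ {y | α/2 * ‖y - x‖ < ⟪y - x, j⟫}) <
      lam k * μ (closedBall x (2*(2:ℝ)⁻¹^(k+4)))} with hEbaddef
  have hρpos : ∀ k : ℕ, (0:ℝ) < (2:ℝ)⁻¹^(k+4) := fun k => rpos _
  have hρle1 : ∀ k : ℕ, (2:ℝ)⁻¹^(k+4) ≤ 1 := fun k => pow_le_one₀ (by norm_num) (by norm_num)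
  have hEbad_meas : ∀ (j : EuclideanSpace ℝ (Fin n)) (k N : ℕ),
      μ (Ebad j k ∩ closedBall 0 (N:ℝ)) ≤ 2 * lam k * CM N :=
    fun j k N => badMeasure μ hn j (hρpos k) (hρle1 k) (by linarith : (0:ℝ) ≤ α/2) (lam k) N
  set S : ℕ → ℕ → Set (EuclideanSpace ℝ (Fin n)) := fun N k =>
    (⋃ j ∈ TF, Ebad j k) ∩ closedBall 0 N with hSdef
  have hS_meas : ∀ N k, μ (S N k) ≤ (TF.card : ℝ≥0∞) * (2 * lam k * CM N) := by
    intro N k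
    calc μ (S N k) ≤ ∑ j ∈ TF, μ (Ebad j k ∩ closedBall 0 N) := by
          refine le_trans (measure_mono ?_) (measure_biUnion_finset_le TF
            (fun j => Ebad j k ∩ closedBall 0 N))
          rintro x ⟨hx1, hx2⟩
          obtain ⟨j, hj, hxj⟩ := Set.mem_iUnion₂.1 hx1
          exact Set.mem_iUnion₂.2 ⟨j, hj, hxj, hx2⟩
      _ ≤ ∑ _j ∈ TF, (2 * lam k * CM N) := Finset.sum_le_sum fun j _ => hEbad_meas j k N
      _ = (TF.card : ℝ≥0∞) * (2 * lam k * CM N) := by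
          rw [Finset.sum_const, nsmul_eq_mul]
  have hS_tsum : ∀ N, (∑' k, μ (S N k)) ≠ ⊤ := by
    intro N
    refine ne_top_of_le_ne_top ?_ (ENNReal.tsum_le_tsum (fun k => hS_meas N k))
    have hre : ∀ k, (TF.card : ℝ≥0∞) * (2 * lam k * CM N) =
        ((TF.card : ℝ≥0∞) * (2 * CM N)) * lam k := by
      intro k; ring
    simp only [hre]
    rw [ENNReal.tsum_mul_left]
    exact ENNReal.mul_ne_top
      (ENNReal.mul_ne_top (ENNReal.natCast_ne_top _)
        (ENNReal.mul_ne_top (by norm_num) (hCMfin N))) hlam_sum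
  have hae1 : ∀ᵐ x ∂μ, ∀ N : ℕ, ∀ᶠ k in atTop, x ∉ S N k :=
    (ae_all_iff).2 fun N => ae_eventually_notMem (hS_tsum N)
  have hae2 := ae_ball_pos μ hfin
  -- null sets for positivity of anti-cones
  set Z : EuclideanSpace ℝ (Fin n) → ℚ → ℕ → Set (EuclideanSpace ℝ (Fin n)) := fun j q N =>
    ({x | (0 < q ∧ (q:ℝ) ≤ 1 ∧
        μ (closedBall x (q:ℝ) \ {y | α/2 * ‖y - x‖ < ⟪y - x, j⟫}) = 0) ∧
        (∀ p : ℚ, 0 < p → μ (ball x (p:ℝ)) ≠ 0)} ∩ closedBall 0 N) with hZdef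
  have hZnull : ∀ j q N, μ (Z j q N) = 0 := by
    intro j q N
    rcases le_or_gt q 0 with hq | hq
    · refine measure_mono_null (fun x hx => absurd hx.1.1.1 (not_lt.2 hq))
        (measure_empty (μ := μ))
    rcases le_or_gt (q:ℝ) 1 with hq1 | hq1
    swap
    · refine measure_mono_null (fun x hx => absurd hx.1.1.2.1 (not_le.2 hq1))
        (measure_empty (μ := μ))
    have hq0 : (0:ℝ) < (q:ℝ) := by exact_mod_cast hq
    have hsub : ∀ l : ℝ≥0∞, l ≠ 0 → Z j q N ⊆
        {x | μ (closedBall x (q:ℝ) \ {y | α/2 * ‖y - x‖ < ⟪y - x, j⟫}) <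
          l * μ (closedBall x (2*(q:ℝ)))} ∩ closedBall 0 N := by
      rintro l hl0 x ⟨⟨⟨hq0', hq1', hzero⟩, hgood⟩, hxN⟩
      refine ⟨?_, hxN⟩
      show μ _ < _
      rw [hzero]
      refine ENNReal.mul_pos hl0 ?_
      refine fun hz => (hgood q hq0') (measure_mono_null (fun w hw => ?_) hz)
      have h1 : dist w x < (q:ℝ) := mem_ball.1 hw
      exact mem_closedBall.2 (by linarith)
    refine nonpos_iff_eq_zero.1 (ENNReal.le_of_forall_pos_le_add fun ε hε _ => ?_)
    rw [zero_add]
    set Cm : ℝ≥0∞ := 2 * CM N with hCmdef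
    have hCmtop : Cm ≠ ⊤ := ENNReal.mul_ne_top (by norm_num) (hCMfin N)
    rcases eq_or_ne Cm 0 with hCm0 | hCm0
    · have hb := badMeasure μ hn j hq0 hq1 (by linarith : (0:ℝ) ≤ α/2) 1 N
      have := le_trans (measure_mono (hsub 1 one_ne_zero)) hb
      rw [mul_one] at this
      rw [hCmdef] at hCm0
      rw [hCm0] at this
      exact le_trans this zero_le
    · set l : ℝ≥0∞ := (ε : ℝ≥0∞) / Cm with hldef
      have hl0 : l ≠ 0 := by
        rw [hldef]
        simp only [ne_eq, ENNReal.div_eq_zero_iff, not_or]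
        exact ⟨by exact_mod_cast hε.ne', hCmtop⟩
      have hb := badMeasure μ hn j hq0 hq1 (by linarith : (0:ℝ) ≤ α/2) l N
      refine le_trans (le_trans (measure_mono (hsub l hl0)) hb) ?_
      have : 2 * l * CM N = l * Cm := by rw [hCmdef]; ring
      rw [this, hldef, ENNReal.div_mul_cancel hCm0 hCmtop]
  have hae3 : ∀ᵐ x ∂μ, ¬ ((∀ p : ℚ, 0 < p → μ (ball x (p:ℝ)) ≠ 0) ∧
      ∃ j ∈ TF, ∃ q : ℚ, 0 < q ∧ (q:ℝ) ≤ 1 ∧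
        μ (closedBall x (q:ℝ) \ {y | α/2 * ‖y - x‖ < ⟪y - x, j⟫}) = 0) := by
    rw [ae_iff]
    refine measure_mono_null (fun x hx => ?_)
      ((measure_iUnion_null fun j : TF => measure_iUnion_null fun q : ℚ =>
        measure_iUnion_null fun N : ℕ => hZnull j q N) :
        μ (⋃ (j : TF) (q : ℚ) (N : ℕ), Z j q N) = 0)
    simp only [mem_setOf_eq, not_not] at hx
    obtain ⟨hgood, j, hjT, q, hq0, hq1, hzero⟩ := hx
    obtain ⟨N, hN⟩ := exists_nat_ge ‖x‖
    exact Set.mem_iUnion.2 ⟨⟨j, hjT⟩, Set.mem_iUnion.2 ⟨q, Set.mem_iUnion.2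
      ⟨N, ⟨⟨hq0, hq1, hzero⟩, hgood⟩, mem_closedBall_zero_iff.2 hN⟩⟩⟩
  -- conclusion
  filter_upwards [hae1, hae2, hae3] with x hx1 hx2 hx3
  obtain ⟨N, hN⟩ := exists_nat_ge ‖x‖
  have hxN : x ∈ closedBall (0:EuclideanSpace ℝ (Fin n)) N := mem_closedBall_zero_iff.2 hN
  obtain ⟨K, hK⟩ := (Filter.eventually_atTop).1 (hx1 N)
  set r₀ : ℝ := (2:ℝ)⁻¹^(K+4) with hr₀def
  have hr₀pos : 0 < r₀ := rpos _
  have hgood3 : ∀ j ∈ TF, ∀ q : ℚ, 0 < q → (q:ℝ) ≤ 1 →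
      μ (closedBall x (q:ℝ) \ {y | α/2 * ‖y - x‖ < ⟪y - x, j⟫}) ≠ 0 := by
    intro j hj q hq0 hq1 hzero
    exact hx3 ⟨hx2, j, hj, q, hq0, hq1, hzero⟩
  have hmain : ∀ r ∈ Ioc (0:ℝ) r₀, 1 ≤
      ⨅ θ ∈ {θ : EuclideanSpace ℝ (Fin n) | ‖θ‖ = 1},
        μ (closedBall x r \ {y | α * ‖y - x‖ < ⟪y - x, θ⟫}) /
          (ENNReal.ofReal (f r) * μ (closedBall x r)) := by
    rintro r ⟨hr0, hrr₀⟩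
    -- find the dyadic scale
    have hex : ∃ m : ℕ, (2:ℝ)⁻¹^m < r := exists_pow_lt_of_lt_one hr0 (by norm_num)
    set m₀ := Nat.find hex with hm₀def
    have hm₀ : (2:ℝ)⁻¹^m₀ < r := Nat.find_spec hex
    have hm₀K : K + 5 ≤ m₀ := by
      rw [hm₀def, Nat.le_find_iff]
      intro m hm
      rw [not_lt]
      refine le_trans hrr₀ (rmono ?_)
      omega
    set k := m₀ - 4 with hkdef
    have hk4 : k + 4 = m₀ := by omega
    have hkK : K ≤ k := by omega
    have hr1 : (2:ℝ)⁻¹^(k+4) < r := by rw [hk4]; exact hm₀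
    have hr2 : r ≤ (2:ℝ)⁻¹^(k+3) := by
      have h1 : k + 3 < m₀ := by omega
      have := Nat.find_min hex h1
      linarith [not_lt.1 this]
    have hrIoo : r ∈ Ioo (0:ℝ) 1 := ⟨hr0, lt_of_le_of_lt hr2 (rlt1 _)⟩
    -- x is not bad at scale k
    have hxS : x ∉ S N k := hK k hkK
    refine le_iInf₂ fun θ hθ => ?_
    -- find net point
    have hθT : θ ∈ ⋃ y ∈ T, ball y (α/2) := hTcov (by
      rw [mem_sphere_zero_iff_norm]; exact hθ)
    obtain ⟨j, hjT, hθj⟩ := Set.mem_iUnion₂.1 hθT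
    have hjTF : j ∈ TF := hTfin.mem_toFinset.2 hjT
    have hdistθj : dist θ j < α/2 := mem_ball.1 hθj
    -- cone inclusion: big cone ⊆ small cone
    have hconesub : ∀ (ρ' : ℝ), ρ' ≤ r →
        closedBall x ρ' \ {y | α/2 * ‖y - x‖ < ⟪y - x, j⟫} ⊆
        closedBall x r \ {y | α * ‖y - x‖ < ⟪y - x, θ⟫} := by
      intro ρ' hρ' w hw
      refine ⟨closedBall_subset_closedBall hρ' hw.1, fun hcone => ?_⟩
      exact hw.2 (cone_mono hdistθj hcone)
    -- x not in Ebad j k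
    have hnotbad : x ∉ Ebad j k := by
      intro hbad
      exact hxS ⟨Set.mem_iUnion₂.2 ⟨j, hjTF, hbad⟩, hxN⟩
    have hineq : lam k * μ (closedBall x (2*(2:ℝ)⁻¹^(k+4))) ≤
        μ (closedBall x ((2:ℝ)⁻¹^(k+4)) \ {y | α/2 * ‖y - x‖ < ⟪y - x, j⟫}) :=
      not_lt.1 hnotbad
    have h2pow : 2*(2:ℝ)⁻¹^(k+4) = (2:ℝ)⁻¹^(k+3) := by ring
    rw [h2pow] at hineq
    -- numerator lower bound
    have hnum_ge : ENNReal.ofReal (f r) * μ (closedBall x r) ≤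
        μ (closedBall x r \ {y | α * ‖y - x‖ < ⟪y - x, θ⟫}) := by
      calc ENNReal.ofReal (f r) * μ (closedBall x r)
          ≤ lam k * μ (closedBall x ((2:ℝ)⁻¹^(k+3))) := by
            refine mul_le_mul' (ENNReal.ofReal_le_ofReal ?_) (measure_mono
              (closedBall_subset_closedBall hr2))
            exact hmono hrIoo ⟨rpos _, rlt1 _⟩ hr2
        _ ≤ μ (closedBall x ((2:ℝ)⁻¹^(k+4)) \ {y | α/2 * ‖y - x‖ < ⟪y - x, j⟫}) := hineq
        _ ≤ μ (closedBall x r \ {y | α * ‖y - x‖ < ⟪y - x, θ⟫}) :=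
            measure_mono (hconesub _ hr1.le)
    -- numerator positive
    have hnum_pos : μ (closedBall x r \ {y | α * ‖y - x‖ < ⟪y - x, θ⟫}) ≠ 0 := by
      obtain ⟨q, hq1, hq2⟩ := exists_rat_btwn hr0
      have hq0 : 0 < q := by exact_mod_cast hq1
      have hqle1 : (q:ℝ) ≤ 1 := by
        have := hrIoo.2; linarith
      exact fun hz => hgood3 j hjTF q hq0 hqle1
        (measure_mono_null (hconesub (q:ℝ) hq2.le) hz)
    -- conclude the division inequality
    rcases eq_or_ne (ENNReal.ofReal (f r) * μ (closedBall x r)) 0 with hden | hden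
    · rw [hden, ENNReal.div_zero hnum_pos]
      exact le_top
    · have hdentop : (ENNReal.ofReal (f r) * μ (closedBall x r)) ≠ ⊤ :=
        ENNReal.mul_ne_top ENNReal.ofReal_ne_top (hfin _ isBounded_closedBall).ne
      rw [← ENNReal.div_self hden hdentop]
      exact ENNReal.div_le_div_right hnum_ge _
  rw [Filter.liminf_eq]
  refine le_sSup ?_
  show ∀ᶠ r in 𝓝[>] (0:ℝ), 1 ≤ _
  filter_upwards [Ioc_mem_nhdsGT_of_mem (⟨le_refl 0, hr₀pos⟩ : (0:ℝ) ∈ Ico 0 r₀)] with r hr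
  exact hmain r hr
end

section
/- Let μ be a Borel measure on ℝⁿ finite on bounded sets and θ ∈ S^{n-1}. Then for μ-almost every x, limsup_{r↓0} log μ(B(x,r) \ H(x,θ)) / log r equals the upper local dimension limsup_{r↓0} log μ(B(x,r)) / log r, and the corresponding equality holds with liminf in place of limsup for the lower local dimension. -/
open Set MeasureTheory Metric Filter
open scoped ENNReal RealInnerProductSpace Topology

section Aux

variable {n : ℕ}

local notation "E" => EuclideanSpace ℝ (Fin n)

lemma stmt6_inner {α : Type*} [MeasurableSpace α] (μ : Measure α) (π : α → ℝ)
    (T : Set α) (hb : BddAbove (π '' T)) (a : ℝ≥0∞)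
    (h : ∀ y ∈ T, μ (T ∩ {z | π z ≤ π y}) ≤ a) : μ T ≤ a := by
  rcases T.eq_empty_or_nonempty with rfl | hT
  · simp
  by_cases hmax : ∃ y ∈ T, ∀ z ∈ T, π z ≤ π y
  · obtain ⟨y, hy, hmaxy⟩ := hmax
    have : T ∩ {z | π z ≤ π y} = T := inter_eq_self_of_subset_left (fun z hz => hmaxy z hz)
    calc μ T = μ (T ∩ {z | π z ≤ π y}) := by rw [this]
    _ ≤ a := h y hy
  · push_neg at hmax
    set s := sSup (π '' T) with hs
    have hsle : ∀ t ∈ T, π t < s := by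
      intro t ht
      obtain ⟨z, hz, hlt⟩ := hmax t ht
      exact lt_of_lt_of_le hlt (le_csSup hb ⟨z, hz, rfl⟩)
    have H : ∀ j : ℕ, ∃ y ∈ T, s - 1 / (j + 1) < π y := by
      intro j
      have h1 : s - 1 / (j + 1) < s := by
        have : (0:ℝ) < 1 / (j + 1) := by positivity
        linarith
      obtain ⟨b, ⟨y0, hy0, rfl⟩, hb'⟩ := exists_lt_of_lt_csSup (hT.image π) h1
      exact ⟨y0, hy0, hb'⟩
    choose y hyT hylt using H
    have Hg : ∀ j : ℕ, ∃ i ∈ Finset.range (j + 1), ∀ i' ∈ Finset.range (j + 1),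
        π (y i') ≤ π (y i) := by
      intro j
      obtain ⟨i, hi, hmaxi⟩ := Finset.exists_max_image (Finset.range (j + 1)) (fun i => π (y i))
        ⟨0, Finset.mem_range.2 (Nat.succ_pos j)⟩
      exact ⟨i, hi, hmaxi⟩
    choose g hg1 hg2 using Hg
    set Tj : ℕ → Set α := fun j => T ∩ {z | π z ≤ π (y (g j))} with hTj
    have hmono : Monotone Tj := by
      intro j j' hjj'
      apply inter_subset_inter_right
      intro z hz
      simp only [mem_setOf_eq] at hz ⊢
      refine le_trans hz ?_
      exact hg2 j' (g j) (Finset.mem_range.2 (lt_of_lt_of_le (Finset.mem_range.1 (hg1 j))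
        (Nat.succ_le_succ hjj')))
    have hUnion : T = ⋃ j, Tj j := by
      apply Subset.antisymm
      · intro t ht
        obtain ⟨j, hj⟩ := exists_nat_one_div_lt (show (0:ℝ) < s - π t by linarith [hsle t ht])
        have : π t < π (y j) := by
          have := hylt j
          push_cast at this hj ⊢
          linarith
        refine mem_iUnion.2 ⟨j, ht, ?_⟩
        exact le_trans this.le (hg2 j j (Finset.mem_range.2 (Nat.lt_succ_self j)))
      · exact iUnion_subset fun j => inter_subset_left
    calc μ T = ⨆ j, μ (Tj j) := by rw [hUnion]; exact hmono.measure_iUnion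
    _ ≤ a := iSup_le fun j => h (y (g j)) (hyT _)

lemma stmt6_card (G : Finset E) (η D : ℝ) (hη : 0 < η) (hD : 0 ≤ D)
    (hsep : ∀ x ∈ G, ∀ y ∈ G, x ≠ y → η ≤ dist x y)
    (w : E) (hw : ∀ x ∈ G, dist x w ≤ D) :
    (G.card : ℝ) * (η / 3) ^ n ≤ (D + η / 3) ^ n := by
  set ν := (volume : Measure E) with hν
  have hfr : Module.finrank ℝ E = n := finrank_euclideanSpace_fin
  set V := ν (closedBall (0 : E) 1) with hV
  have hV0 : V ≠ 0 := (measure_closedBall_pos ν _ one_pos).ne'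
  have hVtop : V ≠ ⊤ := measure_closedBall_lt_top.ne
  have hdisj : (↑G : Set E).PairwiseDisjoint (fun x => closedBall x (η / 3)) := by
    intro x hx y hy hxy
    exact closedBall_disjoint_closedBall (by linarith [hsep x hx y hy hxy])
  have hsum : ∑ x ∈ G, ν (closedBall x (η / 3)) = ν (⋃ x ∈ G, closedBall x (η / 3)) :=
    (measure_biUnion_finset hdisj fun x _ => measurableSet_closedBall).symm
  have hsub : (⋃ x ∈ G, closedBall x (η / 3)) ⊆ closedBall w (D + η / 3) := by
    intro z hz
    obtain ⟨x, hx, hzx⟩ := mem_iUnion₂.1 hz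
    have h1 : dist z x ≤ η / 3 := mem_closedBall.1 hzx
    have h2 : dist x w ≤ D := hw x hx
    exact mem_closedBall.2 (le_trans (dist_triangle z x w) (by linarith))
  have heach : ∀ x : E, ν (closedBall x (η / 3)) = ENNReal.ofReal ((η / 3) ^ n) * V := by
    intro x
    rw [hV, hν, Measure.addHaar_closedBall' volume x (by positivity : (0:ℝ) ≤ η / 3), hfr]
  have hbig : ν (closedBall w (D + η / 3)) = ENNReal.ofReal ((D + η / 3) ^ n) * V := by
    rw [hV, hν, Measure.addHaar_closedBall' volume w (by positivity : (0:ℝ) ≤ D + η / 3), hfr]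
  have key : (G.card : ℝ≥0∞) * (ENNReal.ofReal ((η / 3) ^ n) * V) ≤
      ENNReal.ofReal ((D + η / 3) ^ n) * V := by
    calc (G.card : ℝ≥0∞) * (ENNReal.ofReal ((η / 3) ^ n) * V)
        = ∑ x ∈ G, ν (closedBall x (η / 3)) := by
          rw [Finset.sum_congr rfl fun x _ => heach x, Finset.sum_const, nsmul_eq_mul]
      _ = ν (⋃ x ∈ G, closedBall x (η / 3)) := hsum
      _ ≤ ν (closedBall w (D + η / 3)) := measure_mono hsub
      _ = ENNReal.ofReal ((D + η / 3) ^ n) * V := hbig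
  rw [← mul_assoc] at key
  have key2 : (G.card : ℝ≥0∞) * ENNReal.ofReal ((η / 3) ^ n) ≤
      ENNReal.ofReal ((D + η / 3) ^ n) :=
    (ENNReal.mul_le_mul_iff_left hV0 hVtop).1 key
  have key3 : ENNReal.ofReal ((G.card : ℝ) * (η / 3) ^ n) ≤
      ENNReal.ofReal ((D + η / 3) ^ n) := by
    rwa [ENNReal.ofReal_mul (by positivity), ENNReal.ofReal_natCast]
  exact (ENNReal.ofReal_le_ofReal_iff (by positivity)).1 key3

lemma stmt6_finite (M : Set E) (η R : ℝ) (hη : 0 < η)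
    (hsep : ∀ x ∈ M, ∀ y ∈ M, x ≠ y → η ≤ dist x y)
    (hMR : M ⊆ closedBall 0 R) : M.Finite := by
  classical
  by_contra hinf
  rw [← Set.not_infinite, not_not] at hinf
  rcases le_or_gt R 0 with hR | hR
  · -- M has at most one point
    obtain ⟨F, hFM, hFcard⟩ := hinf.exists_subset_card_eq 2
    obtain ⟨x, y, hxy, hF⟩ := Finset.card_eq_two.1 hFcard
    have hx : x ∈ M := hFM (by simp [hF])
    have hy : y ∈ M := hFM (by simp [hF])
    have h1 := hsep x hx y hy hxy
    have h2 := hMR hx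
    have h3 := hMR hy
    simp only [mem_closedBall] at h2 h3
    have := dist_triangle x (0 : E) y
    rw [dist_comm (0:E) y] at this
    linarith
  · -- use packing bound
    have hRn : (0:ℝ) < (R + η / 3) ^ n / (η / 3) ^ n := by positivity
    obtain ⟨F, hFM, hFcard⟩ := hinf.exists_subset_card_eq (⌈(R + η / 3) ^ n / (η / 3) ^ n⌉₊ + 1)
    have hb := stmt6_card F η R hη hR.le
      (fun x hx y hy hxy => hsep x (hFM hx) y (hFM hy) hxy) 0
      (fun x hx => by simpa [dist_zero_right] using mem_closedBall.1 (hMR (hFM hx)))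
    have hcard : (F.card : ℝ) ≤ (R + η / 3) ^ n / (η / 3) ^ n := by
      rw [le_div_iff₀ (by positivity)]
      exact hb
    rw [hFcard] at hcard
    push_cast at hcard
    have := Nat.le_ceil ((R + η / 3) ^ n / (η / 3) ^ n)
    linarith

lemma stmt6_maxsep (S : Set E) (η : ℝ) (hη : 0 < η) :
    ∃ M ⊆ S, (∀ x ∈ M, ∀ y ∈ M, x ≠ y → η ≤ dist x y) ∧
      S ⊆ ⋃ x ∈ M, closedBall x η := by
  set 𝒞 : Set (Set E) := {C | C ⊆ S ∧ ∀ x ∈ C, ∀ y ∈ C, x ≠ y → η ≤ dist x y} with h𝒞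
  have hzorn : ∀ c ⊆ 𝒞, IsChain (· ⊆ ·) c → ∃ ub ∈ 𝒞, ∀ s ∈ c, s ⊆ ub := by
    intro c hc hchain
    refine ⟨⋃₀ c, ⟨?_, ?_⟩, fun s hs => subset_sUnion_of_mem hs⟩
    · exact sUnion_subset fun t ht => (hc ht).1
    · intro x hx y hy hxy
      obtain ⟨tx, htx, hxtx⟩ := hx
      obtain ⟨ty, hty, hyty⟩ := hy
      rcases hchain.total htx hty with h | h
      · exact (hc hty).2 x (h hxtx) y hyty hxy
      · exact (hc htx).2 x hxtx y (h hyty) hxy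
  obtain ⟨M, hM𝒞, hMmax⟩ := zorn_subset 𝒞 hzorn
  refine ⟨M, hM𝒞.1, hM𝒞.2, ?_⟩
  intro y hy
  by_contra hycov
  simp only [mem_iUnion, mem_closedBall, not_exists] at hycov
  have hyM : y ∉ M := fun hyM => by
    have := hycov y hyM
    simp [dist_self] at this
    linarith
  have hins : insert y M ∈ 𝒞 := by
    constructor
    · exact insert_subset hy hM𝒞.1
    · intro a ha b hb hab
      rcases ha with rfl | ha
      · rcases hb with rfl | hb
        · exact absurd rfl hab
        · exact (not_le.1 (hycov b hb)).le
      · rcases hb with rfl | hb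
        · rw [dist_comm]
          exact (not_le.1 (hycov a ha)).le
        · exact hM𝒞.2 a ha b hb hab
  have hEq : insert y M ≤ M := hMmax hins (subset_insert y M)
  exact hyM (hEq (mem_insert y M))

lemma stmt6_sum (μ : Measure E) (F : Finset E) (η R : ℝ) (hη : 0 < η) (hη1 : 2 * η ≤ 1)
    (hR : 0 ≤ R)
    (hsep : ∀ x ∈ F, ∀ y ∈ F, x ≠ y → η ≤ dist x y)
    (hFR : ↑F ⊆ closedBall (0 : E) R) :
    ∑ x ∈ F, μ (closedBall x (2 * η)) ≤ (7 : ℝ≥0∞) ^ n * μ (closedBall 0 (R + 1)) := by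
  classical
  have hmeas : ∀ x : E, Measurable ((closedBall x (2*η)).indicator (fun _ => (1:ℝ≥0∞))) :=
    fun x => measurable_const.indicator measurableSet_closedBall
  have hpt : ∀ w : E, ∑ x ∈ F, (closedBall x (2*η)).indicator (fun _ => (1:ℝ≥0∞)) w ≤
      (7:ℝ≥0∞)^n * (closedBall (0:E) (R+1)).indicator (fun _ => (1:ℝ≥0∞)) w := by
    intro w
    by_cases hw : w ∈ closedBall (0:E) (R+1)
    · rw [indicator_of_mem hw, mul_one]
      have hsum : ∑ x ∈ F, (closedBall x (2*η)).indicator (fun _ => (1:ℝ≥0∞)) w =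
          ((F.filter (fun x => w ∈ closedBall x (2*η))).card : ℝ≥0∞) := by
        simp only [Set.indicator_apply]
        rw [Finset.sum_boole]
      rw [hsum]
      have hcard := stmt6_card (F.filter (fun x => w ∈ closedBall x (2*η))) η (2*η) hη
        (by linarith)
        (fun x hx y hy hxy => hsep x (Finset.mem_filter.1 hx).1 y (Finset.mem_filter.1 hy).1 hxy)
        w (fun x hx => by
          have := (Finset.mem_filter.1 hx).2
          rw [mem_closedBall] at this
          rw [dist_comm]; exact this)
      have hpow : ((2*η) + η/3)^n = 7^n * (η/3)^n := by
        rw [← mul_pow]; ring_nf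
      have hcard2 : ((F.filter (fun x => w ∈ closedBall x (2*η))).card : ℝ) ≤ 7^n := by
        have hp : (0:ℝ) < (η/3)^n := by positivity
        rw [hpow] at hcard
        calc ((F.filter (fun x => w ∈ closedBall x (2*η))).card : ℝ)
            = ((F.filter (fun x => w ∈ closedBall x (2*η))).card : ℝ) * (η/3)^n / (η/3)^n := by
              field_simp
          _ ≤ 7^n * (η/3)^n / (η/3)^n := by
              gcongr
          _ = 7^n := by field_simp
      have hcard3 : (F.filter (fun x => w ∈ closedBall x (2*η))).card ≤ 7^n := by
        have : ((F.filter (fun x => w ∈ closedBall x (2*η))).card : ℝ) ≤ ((7^n : ℕ) : ℝ) := by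
          push_cast; exact hcard2
        exact_mod_cast this
      calc ((F.filter (fun x => w ∈ closedBall x (2*η))).card : ℝ≥0∞)
          ≤ ((7^n : ℕ) : ℝ≥0∞) := by exact_mod_cast hcard3
        _ = (7:ℝ≥0∞)^n := by push_cast; ring
    · rw [indicator_of_notMem hw, mul_zero]
      refine le_of_eq (Finset.sum_eq_zero fun x hx => ?_)
      refine indicator_of_notMem (fun hwx => hw ?_) _
      rw [mem_closedBall] at hwx ⊢
      have hx0 : dist x 0 ≤ R := mem_closedBall.1 (hFR hx)
      calc dist w 0 ≤ dist w x + dist x 0 := dist_triangle _ _ _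
        _ ≤ 2*η + R := by linarith
        _ ≤ R + 1 := by linarith
  calc ∑ x ∈ F, μ (closedBall x (2*η))
      = ∑ x ∈ F, ∫⁻ w, (closedBall x (2*η)).indicator (fun _ => (1:ℝ≥0∞)) w ∂μ := by
        refine Finset.sum_congr rfl fun x _ => ?_
        rw [lintegral_indicator_const measurableSet_closedBall, one_mul]
    _ = ∫⁻ w, ∑ x ∈ F, (closedBall x (2*η)).indicator (fun _ => (1:ℝ≥0∞)) w ∂μ :=
        (lintegral_finset_sum _ fun x _ => hmeas x).symm
    _ ≤ ∫⁻ w, (7:ℝ≥0∞)^n * (closedBall (0:E) (R+1)).indicator (fun _ => (1:ℝ≥0∞)) w ∂μ :=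
        lintegral_mono hpt
    _ = (7:ℝ≥0∞)^n * μ (closedBall 0 (R+1)) := by
        rw [lintegral_const_mul _ (measurable_const.indicator measurableSet_closedBall),
          lintegral_indicator_const measurableSet_closedBall, one_mul]

lemma stmt6_single (μ : Measure E) (θ : E) (u : ℝ) (hu : 0 < u) (hu1 : u ≤ 1)
    (R : ℝ) (hR : 0 ≤ R) (c : ℝ≥0∞) :
    μ {x | x ∈ closedBall (0 : E) R ∧
        μ (closedBall x u ∩ {z | ⟪z, θ⟫ ≤ ⟪x, θ⟫}) < c * μ (closedBall x (u / 5))} ≤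
      (7 : ℝ≥0∞) ^ n * c * μ (closedBall 0 (R + 1)) := by
  classical
  set π : E → ℝ := fun z => ⟪z, θ⟫ with hπ
  set S := {x | x ∈ closedBall (0 : E) R ∧
      μ (closedBall x u ∩ {z | π z ≤ π x}) < c * μ (closedBall x (u / 5))} with hS
  have hSR : S ⊆ closedBall (0 : E) R := fun x hx => hx.1
  obtain ⟨M, hMS, hMsep, hMcov⟩ := stmt6_maxsep S (u / 5) (by positivity)
  have hMfin : M.Finite := stmt6_finite M (u / 5) R (by positivity) hMsep (hMS.trans hSR)
  set Mf := hMfin.toFinset with hMf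
  have hMfS : ∀ x ∈ Mf, x ∈ S := fun x hx => hMS (hMfin.mem_toFinset.1 hx)
  have hcov2 : S ⊆ ⋃ x ∈ Mf, (S ∩ closedBall x (u / 5)) := by
    intro y hy
    obtain ⟨x, hx, hyx⟩ := mem_iUnion₂.1 (hMcov hy)
    exact mem_iUnion₂.2 ⟨x, hMfin.mem_toFinset.2 hx, hy, hyx⟩
  have hinner : ∀ x ∈ Mf, μ (S ∩ closedBall x (u / 5)) ≤ c * μ (closedBall x (2 * (u / 5))) := by
    intro x _
    apply stmt6_inner μ π (S ∩ closedBall x (u / 5))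
    · refine ⟨π x + (u / 5) * ‖θ‖, ?_⟩
      rintro - ⟨z, hz, rfl⟩
      have h1 : ⟪z - x, θ⟫ ≤ ‖z - x‖ * ‖θ‖ := real_inner_le_norm _ _
      have h2 : ‖z - x‖ ≤ u / 5 := by
        rw [← dist_eq_norm]; exact mem_closedBall.1 hz.2
      have h3 : π z - π x = ⟪z - x, θ⟫ := by
        simp only [hπ, inner_sub_left]
      nlinarith [norm_nonneg θ]
    · intro y hy
      have hyS : y ∈ S := hy.1
      have hyx : dist y x ≤ u / 5 := mem_closedBall.1 hy.2
      have hsub : S ∩ closedBall x (u / 5) ∩ {z | π z ≤ π y} ⊆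
          closedBall y u ∩ {z | π z ≤ π y} := by
        rintro z ⟨⟨-, hz2⟩, hz3⟩
        refine ⟨mem_closedBall.2 ?_, hz3⟩
        have := mem_closedBall.1 hz2
        calc dist z y ≤ dist z x + dist x y := dist_triangle _ _ _
          _ ≤ u / 5 + u / 5 := by rw [dist_comm x y]; linarith
          _ ≤ u := by linarith
      calc μ (S ∩ closedBall x (u / 5) ∩ {z | π z ≤ π y}) ≤
          μ (closedBall y u ∩ {z | π z ≤ π y}) := measure_mono hsub
        _ ≤ c * μ (closedBall y (u / 5)) := (hyS.2).le
        _ ≤ c * μ (closedBall x (2 * (u / 5))) := by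
            refine mul_le_mul_right (measure_mono (closedBall_subset_closedBall' ?_)) c
            linarith
  calc μ S ≤ μ (⋃ x ∈ Mf, (S ∩ closedBall x (u / 5))) := measure_mono hcov2
    _ ≤ ∑ x ∈ Mf, μ (S ∩ closedBall x (u / 5)) := measure_biUnion_finset_le _ _
    _ ≤ ∑ x ∈ Mf, c * μ (closedBall x (2 * (u / 5))) := Finset.sum_le_sum hinner
    _ = c * ∑ x ∈ Mf, μ (closedBall x (2 * (u / 5))) := by rw [Finset.mul_sum]
    _ ≤ c * ((7 : ℝ≥0∞) ^ n * μ (closedBall 0 (R + 1))) := by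
        refine mul_le_mul_right (stmt6_sum μ Mf (u / 5) R (by positivity) (by linarith) hR
          (fun x hx y hy hxy => hMsep x (hMfin.mem_toFinset.1 hx) y (hMfin.mem_toFinset.1 hy) hxy)
          ?_) c
        intro x hx
        exact hSR (hMfS x (by simpa using hx))
    _ = (7 : ℝ≥0∞) ^ n * c * μ (closedBall 0 (R + 1)) := by ring

lemma stmt6_pos (μ : Measure E) : ∀ᵐ x ∂μ, ∀ s : ℝ, 0 < s → 0 < μ (closedBall x s) := by
  obtain ⟨D, hDc, hDd⟩ := TopologicalSpace.exists_countable_dense E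
  haveI := hDc.to_subtype
  set N : Set E := ⋃ (p : D) (q : ℚ),
    if μ (ball (p : E) (q : ℝ)) = 0 then ball (p : E) (q : ℝ) else (∅ : Set E) with hN
  have hNnull : μ N = 0 := by
    refine measure_iUnion_null fun p => measure_iUnion_null fun q => ?_
    split_ifs with h
    · exact h
    · simp
  filter_upwards [measure_eq_zero_iff_ae_notMem.1 hNnull] with x hx s hs
  by_contra h0
  have hzero : μ (closedBall x s) = 0 := by
    simpa using (not_lt.1 h0)
  obtain ⟨p, hpD, hpx⟩ := hDd.exists_mem_open isOpen_ball ⟨x, mem_ball_self (by linarith : (0:ℝ) < s/4)⟩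
  obtain ⟨q, hq1, hq2⟩ := exists_rat_btwn (by linarith : (s/4 : ℝ) < s/2)
  have hxq : x ∈ ball (p : E) (q : ℝ) := by
    rw [mem_ball, dist_comm]
    exact lt_trans (mem_ball.1 hpx) hq1
  have hsub : ball (p : E) (q : ℝ) ⊆ closedBall x s := by
    intro z hz
    rw [mem_closedBall]
    have h1 : dist z p < q := mem_ball.1 hz
    have h2 : dist p x < s/4 := mem_ball.1 hpx
    calc dist z x ≤ dist z p + dist p x := dist_triangle _ _ _
      _ ≤ s := by push_cast at hq2 ⊢; linarith
  have hq0 : μ (ball (p : E) (q : ℝ)) = 0 :=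
    le_antisymm (hzero ▸ measure_mono hsub) (zero_le)
  exact hx (mem_iUnion.2 ⟨⟨p, hpD⟩, mem_iUnion.2 ⟨q, by rw [if_pos hq0]; exact hxq⟩⟩)

lemma stmt6_arith (ε : ℝ) (hε : 0 < ε) :
    ∃ k₂ : ℕ, ∀ k : ℕ, k ≥ k₂ → ((1/2 : ℝ) ^ k) ^ ε ≤ (((k : ℝ) + 2) ^ 2)⁻¹ := by
  set δ := ε * Real.log 2 with hδ
  have hδ0 : 0 < δ := mul_pos hε (Real.log_pos one_lt_two)
  refine ⟨max 2 ⌈32 / δ ^ 2⌉₊, fun k hk => ?_⟩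
  have hk2 : (2 : ℝ) ≤ (k : ℝ) := by
    have : (2 : ℕ) ≤ k := le_trans (le_max_left _ _) hk
    exact_mod_cast this
  have hk32 : 32 / δ ^ 2 ≤ (k : ℝ) :=
    le_trans (Nat.le_ceil _) (by exact_mod_cast le_trans (le_max_right _ _) hk)
  have hkpos : (0 : ℝ) < k := by linarith
  have h16 : 16 * ((k : ℝ) + 2) ≤ (δ * k) ^ 2 := by
    have h32 : 32 ≤ δ ^ 2 * k := by
      rw [div_le_iff₀ (by positivity)] at hk32
      nlinarith
    nlinarith
  have hsqrt : 4 * Real.sqrt ((k : ℝ) + 2) ≤ δ * k := by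
    have h1 : (4 * Real.sqrt ((k : ℝ) + 2)) ^ 2 = 16 * ((k : ℝ) + 2) := by
      rw [mul_pow, Real.sq_sqrt (by positivity)]
      norm_num
    nlinarith [Real.sqrt_nonneg ((k : ℝ) + 2), mul_pos hδ0 hkpos,
      Real.sq_sqrt (show (0:ℝ) ≤ (k:ℝ) + 2 by positivity)]
  have hlog : 2 * Real.log ((k : ℝ) + 2) ≤ δ * k := by
    have h1 : Real.log ((k : ℝ) + 2) = 2 * Real.log (Real.sqrt ((k : ℝ) + 2)) := by
      rw [Real.log_sqrt (by positivity)]; ring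
    have h2 : Real.log (Real.sqrt ((k : ℝ) + 2)) ≤ Real.sqrt ((k : ℝ) + 2) - 1 :=
      Real.log_le_sub_one_of_pos (Real.sqrt_pos.2 (by positivity))
    nlinarith [Real.sqrt_nonneg ((k : ℝ) + 2)]
  -- now conclude
  have hexp : ((k : ℝ) + 2) ^ 2 ≤ Real.exp (ε * (k : ℝ) * Real.log 2) := by
    have h1 : ((k : ℝ) + 2) ^ 2 = Real.exp (2 * Real.log ((k : ℝ) + 2)) := by
      rw [mul_comm, Real.exp_mul, Real.exp_log (by positivity)]
      norm_num
    rw [h1]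
    apply Real.exp_le_exp.2
    calc 2 * Real.log ((k : ℝ) + 2) ≤ δ * k := hlog
      _ = ε * (k : ℝ) * Real.log 2 := by rw [hδ]; ring
  have hval : ((1/2 : ℝ) ^ k) ^ ε = (Real.exp (ε * (k : ℝ) * Real.log 2))⁻¹ := by
    rw [← Real.exp_log (show (0:ℝ) < (1/2 : ℝ)^k by positivity),
      ← Real.exp_mul, Real.log_pow]
    rw [show Real.log (1/2 : ℝ) = -Real.log 2 by rw [one_div, Real.log_inv]]
    rw [← Real.exp_neg]
    ring_nf
  rw [hval]
  exact inv_anti₀ (by positivity) hexp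

lemma stmt6_ae (μ : Measure E)
    (hfin : ∀ s : Set E, Bornology.IsBounded s → μ s < ⊤) (θ : E) :
    ∀ᵐ x ∂μ, ∀ ε : ℝ, 0 < ε → ∀ᶠ r in 𝓝[>] (0 : ℝ),
      ENNReal.ofReal (r ^ ε) * μ (closedBall x (r / 20)) ≤
        μ (closedBall x r \ {y | 0 < ⟪y - x, θ⟫}) := by
  classical
  have hhalf : ∀ (x : E) (r : ℝ), closedBall x r \ {y | 0 < ⟪y - x, θ⟫}
      = closedBall x r ∩ {z | ⟪z, θ⟫ ≤ ⟪x, θ⟫} := by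
    intro x r
    ext y
    simp only [mem_diff, mem_inter_iff, mem_setOf_eq, not_lt, inner_sub_left, sub_nonpos,
      sub_pos]
  set c : ℕ → ℝ≥0∞ := fun k => ENNReal.ofReal ((((k : ℝ) + 1) ^ 2)⁻¹) with hc
  have hcsum : ∑' k, c k ≠ ⊤ := by
    have h1 : Summable (fun k : ℕ => 1 / ((k : ℝ)) ^ 2) :=
      Real.summable_one_div_nat_pow.2 one_lt_two
    have h2 : Summable (fun k : ℕ => ((((k : ℝ) + 1)) ^ 2)⁻¹) := by
      have := (summable_nat_add_iff 1).2 h1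
      refine this.congr fun k => ?_
      push_cast
      rw [one_div]
    rw [← ENNReal.ofReal_tsum_of_nonneg (fun k => by positivity) h2]
    exact ENNReal.ofReal_ne_top
  set u : ℕ → ℝ := fun k => (1/2 : ℝ) ^ k with hu
  have hu_pos : ∀ k, 0 < u k := fun k => by positivity
  have hu_le1 : ∀ k, u k ≤ 1 := fun k => pow_le_one₀ (by norm_num) (by norm_num)
  set A : ℕ → ℕ → Set E := fun R k => {x | x ∈ closedBall (0 : E) (R : ℝ) ∧
      μ (closedBall x (u k) ∩ {z | ⟪z, θ⟫ ≤ ⟪x, θ⟫}) < c k * μ (closedBall x (u k / 5))}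
    with hA
  have hAnull : ∀ R : ℕ, μ (limsup (A R) atTop) = 0 := by
    intro R
    apply measure_limsup_atTop_eq_zero
    have hb : ∀ k, μ (A R k) ≤ (7 : ℝ≥0∞) ^ n * μ (closedBall 0 ((R : ℝ) + 1)) * c k := by
      intro k
      calc μ (A R k) ≤ (7 : ℝ≥0∞) ^ n * c k * μ (closedBall 0 ((R : ℝ) + 1)) :=
            stmt6_single μ θ (u k) (hu_pos k) (hu_le1 k) R (Nat.cast_nonneg R) (c k)
        _ = (7 : ℝ≥0∞) ^ n * μ (closedBall 0 ((R : ℝ) + 1)) * c k := by ring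
    refine ne_top_of_le_ne_top ?_ (ENNReal.tsum_le_tsum hb)
    rw [ENNReal.tsum_mul_left]
    apply ENNReal.mul_ne_top
    · exact ENNReal.mul_ne_top (by simp) (hfin _ isBounded_closedBall).ne
    · exact hcsum
  have hNnull : μ (⋃ R : ℕ, limsup (A R) atTop) = 0 := measure_iUnion_null hAnull
  filter_upwards [measure_eq_zero_iff_ae_notMem.1 hNnull] with x hx ε hε
  set R : ℕ := ⌈‖x‖⌉₊ with hR
  have hxR : x ∈ closedBall (0 : E) (R : ℝ) := by
    rw [mem_closedBall, dist_zero_right]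
    exact Nat.le_ceil _
  have hxlim : x ∉ limsup (A R) atTop := fun h => hx (mem_iUnion.2 ⟨R, h⟩)
  rw [mem_limsup_iff_frequently_mem, not_frequently] at hxlim
  obtain ⟨k₀, hk₀⟩ := eventually_atTop.1 hxlim
  obtain ⟨k₂, hk₂⟩ := stmt6_arith ε hε
  set k₁ := max k₀ k₂ with hk₁
  have hmem : Ioo (0 : ℝ) (u (k₁ + 1)) ∈ 𝓝[>] (0 : ℝ) :=
    Ioo_mem_nhdsGT_of_mem ⟨le_refl 0, hu_pos _⟩
  filter_upwards [hmem] with r hr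
  obtain ⟨hr0, hru⟩ := hr
  have hex : ∃ j, (1/2 : ℝ) ^ j < r := exists_pow_lt_of_lt_one hr0 (by norm_num)
  set j₀ := Nat.find hex with hj₀def
  have hj₀ : u j₀ < r := Nat.find_spec hex
  have hj₀ne : j₀ ≠ 0 := by
    intro h
    rw [h] at hj₀
    simp only [hu, pow_zero] at hj₀
    have : u (k₁ + 1) ≤ 1 := hu_le1 _
    linarith
  set k := j₀ - 1 with hkdef
  have hksucc : k + 1 = j₀ := Nat.succ_pred_eq_of_ne_zero hj₀ne
  have hrk : r ≤ u k := by
    have := Nat.find_min hex (show k < j₀ by omega)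
    exact not_lt.1 this
  have hkk₁ : k₁ < k := by
    have h1 : u (k + 1) < u (k₁ + 1) := by
      rw [hksucc]
      exact lt_trans hj₀ hru
    have := (pow_lt_pow_iff_right_of_lt_one₀ (by norm_num : (0:ℝ) < 1/2)
      (by norm_num : (1/2:ℝ) < 1)).1 h1
    omega
  have hk₀le : k₀ ≤ k + 1 := by omega
  have hnot : x ∉ A R (k + 1) := hk₀ (k + 1) hk₀le
  have hlow : c (k + 1) * μ (closedBall x (u (k + 1) / 5)) ≤
      μ (closedBall x (u (k + 1)) ∩ {z | ⟪z, θ⟫ ≤ ⟪x, θ⟫}) := by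
    simp only [hA, mem_setOf_eq, not_and, not_lt] at hnot
    exact hnot hxR
  have harith : r ^ ε ≤ ((((k + 1 : ℕ) : ℝ) + 1) ^ 2)⁻¹ := by
    have h2 := hk₂ k (by omega)
    have h3 : r ^ ε ≤ (u k) ^ ε := Real.rpow_le_rpow hr0.le hrk hε.le
    have hcast : (((k + 1 : ℕ) : ℝ) + 1) = ((k : ℝ) + 2) := by push_cast; ring
    rw [hcast]
    exact le_trans h3 h2
  have h1 : ENNReal.ofReal (r ^ ε) ≤ c (k + 1) := ENNReal.ofReal_le_ofReal harith
  have huk : u k = 2 * u (k + 1) := by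
    simp only [hu, pow_succ]
    ring
  have h2 : closedBall x (r / 20) ⊆ closedBall x (u (k + 1) / 5) := by
    apply closedBall_subset_closedBall
    have := hu_pos (k + 1)
    rw [huk] at hrk
    linarith
  have hub : u (k + 1) ≤ r := by rw [hksucc]; exact hj₀.le
  calc ENNReal.ofReal (r ^ ε) * μ (closedBall x (r / 20))
      ≤ c (k + 1) * μ (closedBall x (u (k + 1) / 5)) := mul_le_mul' h1 (measure_mono h2)
    _ ≤ μ (closedBall x (u (k + 1)) ∩ {z | ⟪z, θ⟫ ≤ ⟪x, θ⟫}) := hlow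
    _ ≤ μ (closedBall x r ∩ {z | ⟪z, θ⟫ ≤ ⟪x, θ⟫}) :=
        measure_mono (inter_subset_inter_left _ (closedBall_subset_closedBall hub))
    _ = μ (closedBall x r \ {y | 0 < ⟪y - x, θ⟫}) := (congrArg μ (hhalf x r)).symm

lemma stmt6_le_add (x y : ℝ) (h : ∀ ε : ℝ, 0 < ε → x ≤ y + ε) : x ≤ y := by
  by_contra hlt
  push_neg at hlt
  have := h ((x - y)/2) (by linarith)
  linarith

lemma stmt6_calc (m M : ℝ → ℝ) (B : ℝ)
    (hmM : ∀ᶠ r in 𝓝[>] (0 : ℝ), m r ≤ M r)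
    (hMB : ∀ᶠ r in 𝓝[>] (0 : ℝ), M r ≤ B)
    (hMpos : ∀ᶠ r in 𝓝[>] (0 : ℝ), 0 < M (r / 20))
    (hd : ∀ ε : ℝ, 0 < ε → ∀ᶠ r in 𝓝[>] (0 : ℝ), r ^ ε * M (r / 20) ≤ m r) :
    limsup (fun r : ℝ => Real.log (m r) / Real.log r) (𝓝[>] 0)
        = limsup (fun r : ℝ => Real.log (M r) / Real.log r) (𝓝[>] 0) ∧
      liminf (fun r : ℝ => Real.log (m r) / Real.log r) (𝓝[>] 0)
        = liminf (fun r : ℝ => Real.log (M r) / Real.log r) (𝓝[>] 0) := by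
  have hE1 : ∀ᶠ r in 𝓝[>] (0:ℝ), 0 < r ∧ r < 1 := by
    filter_upwards [Ioo_mem_nhdsGT_of_mem
      (show (0:ℝ) ∈ Ico (0:ℝ) 1 from ⟨le_refl _, one_pos⟩)] with r hr
    exact ⟨hr.1, hr.2⟩
  have hmpos : ∀ᶠ r in 𝓝[>] (0:ℝ), 0 < m r := by
    filter_upwards [hd 1 one_pos, hMpos, hE1] with r h1 h2 h3
    have h4 : 0 < r ^ (1:ℝ) * M (r/20) := mul_pos (Real.rpow_pos_of_pos h3.1 _) h2
    linarith
  have hMposr : ∀ᶠ r in 𝓝[>] (0:ℝ), 0 < M r := by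
    filter_upwards [hmpos, hmM] with r h1 h2; linarith
  have hlogneg : ∀ᶠ r in 𝓝[>] (0:ℝ), Real.log r < 0 := by
    filter_upwards [hE1] with r hr; exact Real.log_neg hr.1 hr.2
  have hmap : Tendsto (fun r : ℝ => r / 20) (𝓝[>] (0:ℝ)) (𝓝[>] (0:ℝ)) := by
    rw [tendsto_nhdsWithin_iff]
    constructor
    · have h1 : Tendsto (fun r : ℝ => r / 20) (𝓝 (0:ℝ)) (𝓝 ((0:ℝ)/20)) :=
        (continuous_id.div_const 20).tendsto 0
      simpa using h1.mono_left nhdsWithin_le_nhds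
    · filter_upwards [self_mem_nhdsWithin] with r (hr : 0 < r)
      exact div_pos hr (by norm_num)
  have hmap20 : Tendsto (fun ρ : ℝ => 20 * ρ) (𝓝[>] (0:ℝ)) (𝓝[>] (0:ℝ)) := by
    rw [tendsto_nhdsWithin_iff]
    constructor
    · have h1 : Tendsto (fun ρ : ℝ => 20 * ρ) (𝓝 (0:ℝ)) (𝓝 (20*(0:ℝ))) :=
        (continuous_const.mul continuous_id).tendsto 0
      simpa using h1.mono_left nhdsWithin_le_nhds
    · filter_upwards [self_mem_nhdsWithin] with ρ (hρ : 0 < ρ)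
      exact mem_Ioi.2 (mul_pos (by norm_num) hρ)
  have hrpow : ∀ c : ℝ, 0 < c → Tendsto (fun r : ℝ => r ^ c) (𝓝[>] (0:ℝ)) (𝓝 0) := by
    intro c hc
    have h1 : Tendsto (fun r : ℝ => c * Real.log r) (𝓝[>] (0:ℝ)) atBot :=
      (tendsto_const_mul_atBot_of_pos hc).2 Real.tendsto_log_nhdsGT_zero
    have h2 := Real.tendsto_exp_atBot.comp h1
    apply h2.congr'
    filter_upwards [hE1] with r hr
    rw [Function.comp_apply, Real.rpow_def_of_pos hr.1, mul_comm]
  have hflip : ∀ {a b c : ℝ}, c < 0 → a ≤ b → b / c ≤ a / c := fun hc hab =>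
    div_le_div_of_nonpos_of_le hc.le hab
  have hFH : ∀ᶠ r in 𝓝[>] (0:ℝ),
      Real.log (M r) / Real.log r ≤ Real.log (m r) / Real.log r := by
    filter_upwards [hmpos, hMposr, hmM, hlogneg] with r h1 h2 h3 h4
    exact hflip h4 ((Real.log_le_log_iff h1 h2).2 h3)
  set B' := max B 1 with hB'
  have hB'pos : (0:ℝ) < B' := lt_of_lt_of_le one_pos (le_max_right _ _)
  have htd : Tendsto (fun r : ℝ => Real.log B' / Real.log r) (𝓝[>] (0:ℝ)) (𝓝 0) := by
    have hneg : Tendsto (fun r : ℝ => -Real.log r) (𝓝[>] (0:ℝ)) atTop :=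
      tendsto_neg_atTop_iff.2 Real.tendsto_log_nhdsGT_zero
    have hinv := hneg.inv_tendsto_atTop
    have heq : (fun r : ℝ => Real.log B' / Real.log r) =
        fun r : ℝ => (-Real.log B') * (fun r : ℝ => -Real.log r)⁻¹ r := by
      funext r
      simp only [Pi.inv_apply, inv_neg, div_eq_mul_inv]
      ring
    rw [heq]
    simpa using hinv.const_mul (-Real.log B')
  have hflb : ∀ᶠ r in 𝓝[>] (0:ℝ), -1 ≤ Real.log (M r) / Real.log r := by
    filter_upwards [hMposr, hMB, hlogneg,
      htd.eventually (eventually_ge_nhds (by norm_num : (-1:ℝ) < 0))] with r h1 h2 h3 h4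
    exact le_trans h4 (hflip h3 ((Real.log_le_log_iff h1 hB'pos).2
      (le_trans h2 (le_max_left _ _))))
  have hhlb : ∀ᶠ r in 𝓝[>] (0:ℝ), -1 ≤ Real.log (m r) / Real.log r := by
    filter_upwards [hflb, hFH] with r h1 h2; linarith
  have hchar : ∀ᶠ r in 𝓝[>] (0:ℝ), ∀ a v : ℝ, 0 < v →
      ((Real.log v / Real.log r ≤ a ↔ r ^ a ≤ v) ∧
       (a ≤ Real.log v / Real.log r ↔ v ≤ r ^ a)) := by
    filter_upwards [hE1, hlogneg] with r h1 h2 a v hv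
    have hra : 0 < r ^ a := Real.rpow_pos_of_pos h1.1 a
    constructor
    · rw [div_le_iff_of_neg h2, ← Real.log_rpow h1.1, Real.log_le_log_iff hra hv]
    · rw [le_div_iff_of_neg h2, ← Real.log_rpow h1.1, Real.log_le_log_iff hv hra]
  -- upper shift
  have hUshift : ∀ a : ℝ, (∀ᶠ r in 𝓝[>] (0:ℝ), Real.log (M r) / Real.log r ≤ a) →
      ∀ ε : ℝ, 0 < ε → (∀ᶠ r in 𝓝[>] (0:ℝ), Real.log (m r) / Real.log r ≤ a + ε) := by
    intro a ha ε hε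
    have ha20 : ∀ᶠ r in 𝓝[>] (0:ℝ), Real.log (M (r/20)) / Real.log (r/20) ≤ a :=
      hmap.eventually ha
    have hchar20 := hmap.eventually hchar
    have hsmall : ∀ᶠ r in 𝓝[>] (0:ℝ), r ^ (ε/2) < (20:ℝ)⁻¹ ^ a :=
      (hrpow (ε/2) (by linarith)).eventually
        (eventually_lt_nhds (Real.rpow_pos_of_pos (by norm_num) a))
    filter_upwards [hd (ε/2) (by linarith), ha20, hchar20, hMpos, hE1, hchar, hmpos, hsmall]
      with r h1 h2 h3 h4 h5 h6 h7 h8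
    have hr0 : 0 < r := h5.1
    have hM20 : (r/20 : ℝ) ^ a ≤ M (r/20) := ((h3 a (M (r/20)) h4).1).1 h2
    refine ((h6 (a+ε) (m r) h7).1).2 ?_
    have e1 : (r/20 : ℝ) ^ a = r ^ a * (20:ℝ)⁻¹ ^ a := by
      rw [div_eq_mul_inv, Real.mul_rpow hr0.le (by norm_num)]
    have e2 : r ^ (a+ε) = r ^ a * (r ^ (ε/2) * r ^ (ε/2)) := by
      rw [← Real.rpow_add hr0, ← Real.rpow_add hr0]; norm_num
    have hpa : (0:ℝ) < r ^ a := Real.rpow_pos_of_pos hr0 a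
    have hpe : (0:ℝ) < r ^ (ε/2) := Real.rpow_pos_of_pos hr0 _
    calc r ^ (a+ε) = r ^ a * (r^(ε/2) * r^(ε/2)) := e2
      _ ≤ r ^ a * ((20:ℝ)⁻¹ ^ a * r^(ε/2)) :=
          mul_le_mul_of_nonneg_left (mul_le_mul_of_nonneg_right h8.le hpe.le) hpa.le
      _ = r^(ε/2) * (r ^ a * (20:ℝ)⁻¹ ^ a) := by ring
      _ = r^(ε/2) * (r/20) ^ a := by rw [← e1]
      _ ≤ r^(ε/2) * M (r/20) := mul_le_mul_of_nonneg_left hM20 hpe.le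
      _ ≤ m r := h1
  -- lower shift
  have hLshift : ∀ a : ℝ, (∀ᶠ r in 𝓝[>] (0:ℝ), a ≤ Real.log (m r) / Real.log r) →
      ∀ ε : ℝ, 0 < ε → (∀ᶠ ρ in 𝓝[>] (0:ℝ), a - ε ≤ Real.log (M ρ) / Real.log ρ) := by
    intro a ha ε hε
    have step1 : ∀ᶠ r in 𝓝[>] (0:ℝ), M (r/20) ≤ r ^ (a - ε/2) := by
      filter_upwards [ha, hchar, hmpos, hd (ε/2) (by linarith), hE1] with r h1 h2 h3 h4 h5
      have hma : m r ≤ r ^ a := ((h2 a (m r) h3).2).1 h1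
      have hr0 : 0 < r := h5.1
      have hre : 0 < r ^ (ε/2) := Real.rpow_pos_of_pos hr0 _
      have h6 : r ^ (ε/2) * M (r/20) ≤ r ^ a := le_trans h4 hma
      have e0 : r ^ a / r ^ (ε/2) = r ^ (a - ε/2) := (Real.rpow_sub hr0 _ _).symm
      calc M (r/20) = (r^(ε/2) * M (r/20)) / r^(ε/2) := by field_simp
        _ ≤ r ^ a / r^(ε/2) := by gcongr
        _ = r ^ (a - ε/2) := e0
    have step2 : ∀ᶠ ρ in 𝓝[>] (0:ℝ), M ρ ≤ (20*ρ) ^ (a - ε/2) := by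
      filter_upwards [hmap20.eventually step1] with ρ h1
      have e : (20*ρ)/20 = ρ := by ring
      rwa [e] at h1
    have hc20 : (0:ℝ) < (20:ℝ) ^ (a - ε/2) := Real.rpow_pos_of_pos (by norm_num) _
    have hsmall2 : ∀ᶠ ρ in 𝓝[>] (0:ℝ), ρ ^ (ε/2) < ((20:ℝ) ^ (a - ε/2))⁻¹ :=
      (hrpow (ε/2) (by linarith)).eventually (eventually_lt_nhds (inv_pos.2 hc20))
    filter_upwards [step2, hsmall2, hchar, hMposr, hE1] with ρ h1 h2 h3 h4 h5
    refine ((h3 (a-ε) (M ρ) h4).2).2 ?_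
    have hρ0 : 0 < ρ := h5.1
    have e1 : (20*ρ:ℝ) ^ (a - ε/2) = (20:ℝ)^(a-ε/2) * ρ^(a-ε/2) :=
      Real.mul_rpow (by norm_num) hρ0.le
    have key : ρ^(ε/2) * (20:ℝ)^(a-ε/2) < 1 := by
      rw [inv_eq_one_div] at h2
      exact (lt_div_iff₀ hc20).1 h2
    have e3 : ρ^(ε/2) * ρ^(a-ε) = ρ^(a-ε/2) := by
      rw [← Real.rpow_add hρ0]; ring_nf
    have hpe : (0:ℝ) < ρ ^ (ε/2) := Real.rpow_pos_of_pos hρ0 _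
    have hpae : (0:ℝ) < ρ ^ (a-ε) := Real.rpow_pos_of_pos hρ0 _
    calc M ρ ≤ (20*ρ) ^ (a - ε/2) := h1
      _ = (20:ℝ)^(a-ε/2) * ρ^(a-ε/2) := e1
      _ ≤ ρ^(a-ε) := by nlinarith
  constructor
  · rw [limsup_eq, limsup_eq]
    have hsub : {a : ℝ | ∀ᶠ r in 𝓝[>] (0:ℝ), Real.log (m r) / Real.log r ≤ a} ⊆
        {a : ℝ | ∀ᶠ r in 𝓝[>] (0:ℝ), Real.log (M r) / Real.log r ≤ a} := by
      intro a ha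
      filter_upwards [ha, hFH] with r h1 h2
      linarith
    rcases Set.eq_empty_or_nonempty
        {a : ℝ | ∀ᶠ r in 𝓝[>] (0:ℝ), Real.log (M r) / Real.log r ≤ a} with hne | hne
    · have hUhe : {a : ℝ | ∀ᶠ r in 𝓝[>] (0:ℝ), Real.log (m r) / Real.log r ≤ a} = ∅ := by
        rw [← subset_empty_iff, ← hne]
        exact hsub
      rw [hne, hUhe]
    · obtain ⟨a₀, ha₀⟩ := hne
      have hUhne : {a : ℝ | ∀ᶠ r in 𝓝[>] (0:ℝ), Real.log (m r) / Real.log r ≤ a}.Nonempty :=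
        ⟨a₀ + 1, hUshift a₀ ha₀ 1 one_pos⟩
      have hbddf : BddBelow {a : ℝ | ∀ᶠ r in 𝓝[>] (0:ℝ), Real.log (M r) / Real.log r ≤ a} := by
        refine ⟨-1, fun a ha => ?_⟩
        obtain ⟨r, h1, h2⟩ :=
          ((show ∀ᶠ r in 𝓝[>] (0:ℝ), Real.log (M r) / Real.log r ≤ a from ha).and hflb).exists
        linarith
      have hbddh : BddBelow {a : ℝ | ∀ᶠ r in 𝓝[>] (0:ℝ), Real.log (m r) / Real.log r ≤ a} := by
        refine ⟨-1, fun a ha => ?_⟩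
        obtain ⟨r, h1, h2⟩ :=
          ((show ∀ᶠ r in 𝓝[>] (0:ℝ), Real.log (m r) / Real.log r ≤ a from ha).and hhlb).exists
        linarith
      apply le_antisymm
      · apply stmt6_le_add
        intro ε hε
        have h1 : ∀ a ∈ {a : ℝ | ∀ᶠ r in 𝓝[>] (0:ℝ), Real.log (M r) / Real.log r ≤ a},
            sInf {a : ℝ | ∀ᶠ r in 𝓝[>] (0:ℝ), Real.log (m r) / Real.log r ≤ a} ≤ a + ε :=
          fun a ha => csInf_le hbddh (hUshift a ha ε hε)
        have h2 : sInf {a : ℝ | ∀ᶠ r in 𝓝[>] (0:ℝ), Real.log (m r) / Real.log r ≤ a} - ε ≤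
            sInf {a : ℝ | ∀ᶠ r in 𝓝[>] (0:ℝ), Real.log (M r) / Real.log r ≤ a} := by
          apply le_csInf ⟨a₀, ha₀⟩
          intro a ha
          linarith [h1 a ha]
        linarith
      · exact csInf_le_csInf hbddf hUhne hsub
  · rw [liminf_eq, liminf_eq]
    have hsub : {a : ℝ | ∀ᶠ r in 𝓝[>] (0:ℝ), a ≤ Real.log (M r) / Real.log r} ⊆
        {a : ℝ | ∀ᶠ r in 𝓝[>] (0:ℝ), a ≤ Real.log (m r) / Real.log r} := by
      intro a ha
      filter_upwards [ha, hFH] with r h1 h2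
      linarith
    have hLfne : {a : ℝ | ∀ᶠ r in 𝓝[>] (0:ℝ), a ≤ Real.log (M r) / Real.log r}.Nonempty := by
      refine ⟨-1, ?_⟩
      filter_upwards [hflb] with r h1
      linarith
    obtain ⟨a₁, ha₁⟩ := hLfne
    have hLfne : {a : ℝ | ∀ᶠ r in 𝓝[>] (0:ℝ), a ≤ Real.log (M r) / Real.log r}.Nonempty :=
      ⟨a₁, ha₁⟩
    have hLhne : {a : ℝ | ∀ᶠ r in 𝓝[>] (0:ℝ), a ≤ Real.log (m r) / Real.log r}.Nonempty :=
      ⟨a₁, hsub ha₁⟩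
    by_cases hbdd : BddAbove {a : ℝ | ∀ᶠ r in 𝓝[>] (0:ℝ), a ≤ Real.log (M r) / Real.log r}
    · have hbddh : BddAbove {a : ℝ | ∀ᶠ r in 𝓝[>] (0:ℝ), a ≤ Real.log (m r) / Real.log r} := by
        obtain ⟨ub, hub⟩ := hbdd
        refine ⟨ub + 1, fun a ha => ?_⟩
        have := hub (hLshift a ha 1 one_pos)
        linarith
      apply le_antisymm
      · apply stmt6_le_add
        intro ε hε
        apply csSup_le hLhne
        intro a ha
        have h1 : a - ε ≤ sSup {a : ℝ | ∀ᶠ r in 𝓝[>] (0:ℝ), a ≤ Real.log (M r) / Real.log r} :=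
          le_csSup hbdd (hLshift a ha ε hε)
        linarith
      · exact csSup_le_csSup hbddh hLfne hsub
    · have hbddh : ¬ BddAbove {a : ℝ | ∀ᶠ r in 𝓝[>] (0:ℝ), a ≤ Real.log (m r) / Real.log r} :=
        fun h => hbdd (h.mono hsub)
      rw [Real.sSup_of_not_bddAbove hbdd, Real.sSup_of_not_bddAbove hbddh]

end Aux

/-- For a Borel measure `μ` on `ℝⁿ` finite on bounded sets and a unit vector `θ`,
for `μ`-a.e. `x` the upper and lower local dimensions of `μ` at `x` can be
computed using the half-ball `B(x,r) \ H(x,θ)` in place of `B(x,r)`. -/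
theorem stmt_6 (n : ℕ) (μ : Measure (EuclideanSpace ℝ (Fin n)))
    (hfin : ∀ s : Set (EuclideanSpace ℝ (Fin n)), Bornology.IsBounded s → μ s < ⊤)
    (θ : EuclideanSpace ℝ (Fin n)) (hθ : ‖θ‖ = 1) :
    ∀ᵐ x ∂μ,
      limsup (fun r : ℝ =>
          Real.log (μ (closedBall x r \ {y | 0 < ⟪y - x, θ⟫})).toReal / Real.log r)
        (𝓝[>] 0)
        = limsup (fun r : ℝ => Real.log (μ (closedBall x r)).toReal / Real.log r)
            (𝓝[>] 0) ∧
      liminf (fun r : ℝ =>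
          Real.log (μ (closedBall x r \ {y | 0 < ⟪y - x, θ⟫})).toReal / Real.log r)
        (𝓝[>] 0)
        = liminf (fun r : ℝ => Real.log (μ (closedBall x r)).toReal / Real.log r)
            (𝓝[>] 0) := by
  have hfinB : ∀ (x : EuclideanSpace ℝ (Fin n)) (s : ℝ), μ (closedBall x s) < ⊤ :=
    fun x s => hfin _ isBounded_closedBall
  filter_upwards [stmt6_ae μ hfin θ, stmt6_pos μ] with x hx hpos
  refine stmt6_calc (fun r => (μ (closedBall x r \ {y | 0 < ⟪y - x, θ⟫})).toReal)
    (fun r => (μ (closedBall x r)).toReal) ((μ (closedBall x 1)).toReal) ?_ ?_ ?_ ?_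
  · filter_upwards with r
    exact ENNReal.toReal_mono (hfinB x r).ne (measure_mono diff_subset)
  · filter_upwards [Ioo_mem_nhdsGT_of_mem (Set.left_mem_Ico.2 one_pos)] with r hr
    exact ENNReal.toReal_mono (hfinB x 1).ne (measure_mono (closedBall_subset_closedBall hr.2.le))
  · filter_upwards [self_mem_nhdsWithin] with r (hr : 0 < r)
    exact ENNReal.toReal_pos (hpos _ (by linarith)).ne' (hfinB x (r / 20)).ne
  · intro ε hε
    filter_upwards [hx ε hε, self_mem_nhdsWithin] with r h1 (hr : 0 < r)
    have := ENNReal.toReal_mono (ne_of_lt (lt_of_le_of_lt (measure_mono diff_subset) (hfinB x r))) h1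
    rwa [ENNReal.toReal_mul, ENNReal.toReal_ofReal (Real.rpow_nonneg hr.le ε)] at this
end
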